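/- arXiv:1704.06742 — 3 statements merged into one kernel-verified Lean document; each statement's English description precedes it below -/
import Mathlib

section
/- Let g_1, …, g_r : [0,1] → ℝ be bounded measurable functions and let ξ = (ξ_1, …, ξ_r) be independent Uniform(0,1) random variables; write g(ξ) = (g_1(ξ_1), …, g_r(ξ_r)) ∈ ℝʳ. Then V(g) = Tr[(𝔼[g(ξ)g(ξ)ᵀ])³] − ‖𝔼 g(ξ)‖⁶ ≥ 0, and V(g) = 0 if and only if each component g_l is almost surely constant (i.e., Var(g_l(ξ_l)) = 0 for every l ∈ [r]). -/
open MeasureTheory Finset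

noncomputable section

/-- The uniform distribution on `[0,1]`. -/
def unif01 : Measure ℝ := volume.restrict (Set.Icc (0 : ℝ) 1)

/-- The law of `ξ = (ξ_1, …, ξ_r)` with independent `Uniform(0,1)` coordinates. -/
def cube (r : ℕ) : Measure (Fin r → ℝ) := Measure.pi fun _ => unif01

/-- The second-moment matrix `𝔼[g(ξ) g(ξ)ᵀ]`. -/
def secondMoment (r : ℕ) (g : Fin r → ℝ → ℝ) : Matrix (Fin r) (Fin r) ℝ :=
  Matrix.of fun a b => ∫ x, g a (x a) * g b (x b) ∂(cube r)

/-- `V(g) = Tr[(𝔼[g(ξ)g(ξ)ᵀ])³] − ‖𝔼 g(ξ)‖⁶`. -/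
def Vg (r : ℕ) (g : Fin r → ℝ → ℝ) : ℝ :=
  Matrix.trace (secondMoment r g * secondMoment r g * secondMoment r g) -
    (∑ a : Fin r, (∫ x, g a (x a) ∂(cube r)) ^ 2) ^ 3

instance : IsProbabilityMeasure unif01 := ⟨by simp [unif01, Real.volume_Icc]⟩

attribute [-instance] Real.measureSpace measureSpaceOfInnerProductSpace

/-- Local instance making `unif01` the reference volume on `ℝ`, so that Mathlib's
Fubini-type lemmas for finite products apply to `cube r`. -/
instance myMS : MeasureSpace ℝ := ⟨unif01⟩

instance : IsProbabilityMeasure (volume : Measure ℝ) :=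
  inferInstanceAs (IsProbabilityMeasure unif01)

lemma cube_eq_volume (r : ℕ) : cube r = (volume : Measure (Fin r → ℝ)) := by
  rw [volume_pi]; rfl

lemma cube_prod_integral (r : ℕ) (F : Fin r → ℝ → ℝ) :
    ∫ x, ∏ i, F i (x i) ∂(cube r) = ∏ i, ∫ x, F i x ∂unif01 := by
  rw [cube_eq_volume]
  exact MeasureTheory.integral_fintype_prod_volume_eq_prod (ι := Fin r) F

/-- Trace of the cube of `diagonal v + m mᵀ`. -/
lemma trace_formula {r : ℕ} (v m : Fin r → ℝ) :
    Matrix.trace ((Matrix.diagonal v + Matrix.vecMulVec m m) *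
        (Matrix.diagonal v + Matrix.vecMulVec m m) *
        (Matrix.diagonal v + Matrix.vecMulVec m m)) =
      (∑ a, v a ^ 3) + 3 * (∑ a, v a ^ 2 * m a ^ 2) +
        3 * (∑ a, m a ^ 2) * (∑ a, v a * m a ^ 2) + (∑ a, m a ^ 2) ^ 3 := by
  set D := Matrix.diagonal v with hD
  set P := Matrix.vecMulVec m m with hP
  set t : ℝ := ∑ a, m a ^ 2 with ht
  have hdiagP : ∀ (w : Fin r → ℝ), Matrix.trace (Matrix.diagonal w * P) = ∑ a, w a * m a ^ 2 := by
    intro w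
    rw [Matrix.trace]
    refine Finset.sum_congr rfl fun a _ => ?_
    rw [Matrix.diag_apply, Matrix.diagonal_mul]
    simp only [hP, Matrix.vecMulVec_apply]
    ring
  have hP2 : P * P = t • P := by
    ext i j
    rw [Matrix.smul_apply, Matrix.mul_apply]
    simp only [hP, Matrix.vecMulVec_apply, smul_eq_mul]
    calc ∑ k, m i * m k * (m k * m j) = ∑ k, m k ^ 2 * (m i * m j) := by
          refine Finset.sum_congr rfl fun k _ => by ring
      _ = t * (m i * m j) := by rw [← Finset.sum_mul, ht]
  have htrP : Matrix.trace P = t := by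
    rw [Matrix.trace, ht]
    refine Finset.sum_congr rfl fun a _ => ?_
    rw [Matrix.diag_apply]
    simp only [hP, Matrix.vecMulVec_apply]
    ring
  have hDDP : Matrix.trace (D * D * P) = ∑ a, v a ^ 2 * m a ^ 2 := by
    rw [hD, Matrix.diagonal_mul_diagonal, hdiagP]
    exact Finset.sum_congr rfl fun a _ => by ring
  have hDPP : Matrix.trace (D * P * P) = t * ∑ a, v a * m a ^ 2 := by
    rw [mul_assoc, hP2, Matrix.mul_smul, Matrix.trace_smul, hD, hdiagP, smul_eq_mul]
  have hPPP : Matrix.trace (P * P * P) = t ^ 3 := by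
    rw [hP2, Matrix.smul_mul, hP2, Matrix.trace_smul, Matrix.trace_smul, htrP,
      smul_eq_mul, smul_eq_mul]
    ring
  have hDDD : Matrix.trace (D * D * D) = ∑ a, v a ^ 3 := by
    rw [hD, Matrix.diagonal_mul_diagonal, Matrix.diagonal_mul_diagonal, Matrix.trace_diagonal]
    exact Finset.sum_congr rfl fun a _ => by ring
  have hexp : (D + P) * (D + P) * (D + P) =
      D*D*D + D*D*P + D*P*D + D*P*P + P*D*D + P*D*P + P*P*D + P*P*P := by
    noncomm_ring
  rw [hexp]
  simp only [Matrix.trace_add]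
  rw [show Matrix.trace (D*P*D) = Matrix.trace (D*D*P) from Matrix.trace_mul_cycle D P D,
    show Matrix.trace (P*D*D) = Matrix.trace (D*P*D) from Matrix.trace_mul_cycle P D D,
    show Matrix.trace (D*P*D) = Matrix.trace (D*D*P) from Matrix.trace_mul_cycle D P D,
    show Matrix.trace (P*D*P) = Matrix.trace (P*P*D) from Matrix.trace_mul_cycle P D P,
    show Matrix.trace (P*P*D) = Matrix.trace (D*P*P) from Matrix.trace_mul_cycle P P D,
    hDDD, hDDP, hDPP, hPPP]
  ring

/-- **Proposition 3 (Gao–Lafferty).** For bounded measurable feature functions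
`g_1, …, g_r` one has `V(g) ≥ 0`, with equality if and only if each `g_l` is
almost surely constant on `[0,1]` (zero variance). -/
theorem Vg_nonneg_and_eq_zero_iff (r : ℕ) (g : Fin r → ℝ → ℝ)
    (hmeas : ∀ l, Measurable (g l))
    (hbdd : ∀ l, ∃ B : ℝ, ∀ x ∈ Set.Icc (0 : ℝ) 1, |g l x| ≤ B) :
    0 ≤ Vg r g ∧
      (Vg r g = 0 ↔
        ∀ l, (∫ x, g l x ^ 2 ∂unif01) - (∫ x, g l x ∂unif01) ^ 2 = 0) := by
  classical
  set m : Fin r → ℝ := fun a => ∫ x, g a x ∂unif01 with hm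
  set s : Fin r → ℝ := fun a => ∫ x, g a x ^ 2 ∂unif01 with hs
  set v : Fin r → ℝ := fun a => s a - m a ^ 2 with hv
  set t : ℝ := ∑ a, m a ^ 2 with htdef
  -- integrability
  have hg : ∀ a, Integrable (g a) unif01 := by
    intro a
    obtain ⟨B, hB⟩ := hbdd a
    refine ⟨(hmeas a).aestronglyMeasurable, ?_⟩
    apply HasFiniteIntegral.of_bounded (C := B)
    exact ae_restrict_of_forall_mem measurableSet_Icc fun x hx => by
      rw [Real.norm_eq_abs]; exact hB x hx
  have hg2 : ∀ a, Integrable (fun x => g a x ^ 2) unif01 := by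
    intro a
    obtain ⟨B, hB⟩ := hbdd a
    refine ⟨((hmeas a).pow_const 2).aestronglyMeasurable, ?_⟩
    apply HasFiniteIntegral.of_bounded (C := B ^ 2)
    exact ae_restrict_of_forall_mem measurableSet_Icc fun x hx => by
      rw [Real.norm_eq_abs, abs_pow]
      exact pow_le_pow_left₀ (abs_nonneg _) (hB x hx) 2
  -- integral of a single coordinate
  have hsingle : ∀ a, (∫ x, g a (x a) ∂(cube r)) = m a := by
    intro a
    set F : Fin r → ℝ → ℝ := fun i y => if i = a then g a y else 1 with hF
    have h1 : (fun x : Fin r → ℝ => g a (x a)) = fun x => ∏ i, F i (x i) := by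
      funext x
      simp [hF, Finset.prod_ite_eq']
    rw [h1, cube_prod_integral r F]
    have h2 : ∀ i : Fin r, (∫ x, F i x ∂unif01) =
        if i = a then m a else 1 := by
      intro i
      by_cases h : i = a <;> simp [hF, h, hm]
    rw [Finset.prod_congr rfl fun i _ => h2 i]
    simp [Finset.prod_ite_eq']
  -- second moment entries
  have hMdiag : ∀ a, secondMoment r g a a = s a := by
    intro a
    set F : Fin r → ℝ → ℝ := fun i y => if i = a then g a y * g a y else 1 with hF
    have h1 : (fun x : Fin r → ℝ => g a (x a) * g a (x a)) = fun x => ∏ i, F i (x i) := by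
      funext x
      simp [hF, Finset.prod_ite_eq']
    show (∫ x, g a (x a) * g a (x a) ∂(cube r)) = s a
    rw [h1, cube_prod_integral r F]
    have h2 : ∀ i : Fin r, (∫ x, F i x ∂unif01) =
        if i = a then s a else 1 := by
      intro i
      by_cases h : i = a <;> simp [hF, h, hs, pow_two]
    rw [Finset.prod_congr rfl fun i _ => h2 i]
    simp [Finset.prod_ite_eq']
  have hMoff : ∀ a b, a ≠ b → secondMoment r g a b = m a * m b := by
    intro a b hab
    set F : Fin r → ℝ → ℝ :=
      fun i y => (if i = a then g a y else 1) * (if i = b then g b y else 1) with hF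
    have h1 : (fun x : Fin r → ℝ => g a (x a) * g b (x b)) = fun x => ∏ i, F i (x i) := by
      funext x
      simp only [hF]
      rw [Finset.prod_mul_distrib]
      simp [Finset.prod_ite_eq']
    show (∫ x, g a (x a) * g b (x b) ∂(cube r)) = m a * m b
    rw [h1, cube_prod_integral r F]
    have h2 : ∀ i : Fin r, (∫ x, F i x ∂unif01) =
        (if i = a then m a else 1) * (if i = b then m b else 1) := by
      intro i
      by_cases h1' : i = a <;> by_cases h2' : i = b
      · exact absurd (h1' ▸ h2') hab
      · simp [hF, h1', h2', hm, hab, Ne.symm hab]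
      · simp [hF, h1', h2', hm, hab, Ne.symm hab]
      · simp [hF, h1', h2']
    rw [Finset.prod_congr rfl fun i _ => h2 i, Finset.prod_mul_distrib]
    simp [Finset.prod_ite_eq']
  -- matrix decomposition
  have hM : secondMoment r g = Matrix.diagonal v + Matrix.vecMulVec m m := by
    ext a b
    rw [Matrix.add_apply, Matrix.vecMulVec_apply, Matrix.diagonal_apply]
    by_cases h : a = b
    · subst h
      rw [if_pos rfl, hMdiag a, hv]
      ring
    · rw [if_neg h, hMoff a b h, zero_add]
  -- the key formula
  have hVg : Vg r g = (∑ a, v a ^ 3) + 3 * (∑ a, v a ^ 2 * m a ^ 2) +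
      3 * t * (∑ a, v a * m a ^ 2) := by
    rw [Vg, hM, trace_formula v m]
    have : (∑ a : Fin r, (∫ x, g a (x a) ∂(cube r)) ^ 2) = t := by
      rw [htdef]
      exact Finset.sum_congr rfl fun a _ => by rw [hsingle a]
    rw [this, htdef]
    ring
  -- nonnegativity of variances
  have hvnonneg : ∀ a, 0 ≤ v a := by
    intro a
    have heq : v a = ∫ x, (g a x - m a) ^ 2 ∂unif01 := by
      have hfun : (fun x => (g a x - m a) ^ 2) =
          fun x => (g a x ^ 2 - (2 * m a) * g a x) + m a ^ 2 := by
        funext x; ring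
      have i1 : Integrable (fun x => g a x ^ 2 - (2 * m a) * g a x) unif01 :=
        (hg2 a).sub ((hg a).const_mul _)
      have i2 : Integrable (fun x => (2 * m a) * g a x) unif01 := (hg a).const_mul _
      rw [hfun, integral_add i1 (integrable_const _), integral_sub (hg2 a) i2,
        integral_const_mul, integral_const]
      simp only [measure_univ, probReal_univ, ENNReal.toReal_one, smul_eq_mul, one_mul, mul_one]
      rw [hv, hs, hm]
      ring
    rw [heq]
    exact integral_nonneg fun x => sq_nonneg _
  have htnonneg : 0 ≤ t := Finset.sum_nonneg fun a _ => sq_nonneg _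
  have hA : 0 ≤ ∑ a, v a ^ 3 := Finset.sum_nonneg fun a _ => pow_nonneg (hvnonneg a) 3
  have hB : 0 ≤ ∑ a, v a ^ 2 * m a ^ 2 :=
    Finset.sum_nonneg fun a _ => mul_nonneg (sq_nonneg _) (sq_nonneg _)
  have hC : 0 ≤ ∑ a, v a * m a ^ 2 :=
    Finset.sum_nonneg fun a _ => mul_nonneg (hvnonneg a) (sq_nonneg _)
  have htC : 0 ≤ 3 * t * (∑ a, v a * m a ^ 2) := by positivity
  constructor
  · rw [hVg]; linarith
  · constructor
    · intro h0
      have hA0 : (∑ a, v a ^ 3) = 0 := by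
        rw [hVg] at h0
        linarith
      have : ∀ a ∈ Finset.univ, v a ^ 3 = 0 :=
        (Finset.sum_eq_zero_iff_of_nonneg fun a _ => pow_nonneg (hvnonneg a) 3).mp hA0
      intro l
      have := this l (Finset.mem_univ l)
      have hvl : v l = 0 := pow_eq_zero_iff (by norm_num : 3 ≠ 0) |>.mp this
      simpa [hv, hs, hm] using hvl
    · intro h
      have hv0 : ∀ a, v a = 0 := fun a => h a
      rw [hVg]
      have e1 : (∑ a, v a ^ 3) = 0 := Finset.sum_eq_zero fun a _ => by rw [hv0 a]; ring
      have e2 : (∑ a, v a ^ 2 * m a ^ 2) = 0 := Finset.sum_eq_zero fun a _ => by rw [hv0 a]; ring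
      have e3 : (∑ a, v a * m a ^ 2) = 0 := Finset.sum_eq_zero fun a _ => by rw [hv0 a]; ring
      rw [e1, e2, e3]
      ring

end
end

section
/- Let A_{ij} ~ Bernoulli(p_{ij}) independently for 1 ≤ i < j ≤ n, with ρ = ρ_n = max_{1≤i<j≤n} p_{ij}. Define p̂ = (1/C(n,2)) Σ_{i<j} A_{ij}, p̄ = (1/C(n,2)) Σ_{i<j} p_{ij}, q̂ = (1/C(n,3)) Σ_{i<j<k} A_{ij}A_{ik}A_{jk}, q̄ = (1/C(n,3)) Σ_{i<j<k} p_{ij}p_{ik}p_{jk}. Then |p̂³ − p̄³| = O_P( ρ^{5/2}/n + ρ²/n² + ρ^{3/2}/n³ ) and |q̂ − q̄| = O_P( ρ^{5/2}/n + ρ^{3/2}/n^{3/2} ), uniformly over the choice of edge probabilities: i.e., for every ε > 0 there is a constant M such that for all n and all (p_{ij}), ℙ( |p̂³ − p̄³| > M(ρ^{5/2}/n + ρ²/n² + ρ^{3/2}/n³) ) ≤ ε and ℙ( |q̂ − q̄| > M(ρ^{5/2}/n + ρ^{3/2}/n^{3/2}) ) ≤ ε. -/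
open MeasureTheory ProbabilityTheory Filter Finset
open scoped ENNReal NNReal

noncomputable section

/-- The space of (directed-encoded) adjacency arrays on `n` nodes; only the
entries with `i < j` are used by the statistics. -/
abbrev Adj (n : ℕ) := Fin n × Fin n → Bool

/-- The law of independent `Bernoulli (p i j)` edges: a weighted sum of Dirac
measures over the finite space of adjacency arrays.  When every `p i j ∈ [0,1]`
this is the product Bernoulli probability measure. -/
def graphMeasure (n : ℕ) (p : Fin n → Fin n → ℝ) : Measure (Adj n) :=
  ∑ A : Adj n,
    (∏ e : Fin n × Fin n,
        ENNReal.ofReal (if A e then p e.1 e.2 else 1 - p e.1 e.2)) • Measure.dirac A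

/-- The Erdős–Rényi model with edge probability `p`. -/
def erMeasure (n : ℕ) (p : ℝ) : Measure (Adj n) := graphMeasure n fun _ _ => p

/-- Real-valued edge indicator `A_{ij}` (for `i < j`). -/
def eV {n : ℕ} (A : Adj n) (i j : Fin n) : ℝ := if A (i, j) then 1 else 0

/-- Symmetrized edge indicator. -/
def eVs {n : ℕ} (A : Adj n) (i j : Fin n) : ℝ := if i < j then eV A i j else eV A j i

/-- Empirical edge frequency `p̂`. -/
def pHat {n : ℕ} (A : Adj n) : ℝ :=
  ((n.choose 2 : ℝ))⁻¹ * ∑ i : Fin n, ∑ j : Fin n, if i < j then eV A i j else 0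

/-- Empirical triangle frequency `F̂₃`. -/
def F3hat {n : ℕ} (A : Adj n) : ℝ :=
  ((n.choose 3 : ℝ))⁻¹ * ∑ i : Fin n, ∑ j : Fin n, ∑ k : Fin n,
    if i < j ∧ j < k then eV A i j * eV A j k * eV A i k else 0

/-- Empirical V-shape frequency `F̂₂`. -/
def F2hat {n : ℕ} (A : Adj n) : ℝ :=
  ((n.choose 3 : ℝ))⁻¹ * ∑ i : Fin n, ∑ j : Fin n, ∑ k : Fin n,
    if i < j ∧ j < k then
      (1 - eV A i j) * eV A j k * eV A i k + eV A i j * (1 - eV A j k) * eV A i k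
        + eV A i j * eV A j k * (1 - eV A i k)
    else 0

/-- Empirical single-edge frequency `F̂₁`. -/
def F1hat {n : ℕ} (A : Adj n) : ℝ :=
  ((n.choose 3 : ℝ))⁻¹ * ∑ i : Fin n, ∑ j : Fin n, ∑ k : Fin n,
    if i < j ∧ j < k then
      (1 - eV A i j) * (1 - eV A j k) * eV A i k
        + eV A i j * (1 - eV A j k) * (1 - eV A i k)
        + (1 - eV A i j) * eV A j k * (1 - eV A i k)
    else 0

def T1stat {n : ℕ} (A : Adj n) : ℝ := 3 * pHat A * (1 - pHat A) ^ 2 - F1hat A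

def T2stat {n : ℕ} (A : Adj n) : ℝ := 3 * pHat A ^ 2 * (1 - pHat A) - F2hat A

def T3stat {n : ℕ} (A : Adj n) : ℝ := pHat A ^ 3 - F3hat A

/-- The chi-squared statistic `T²`. -/
def TsqStat {n : ℕ} (A : Adj n) : ℝ :=
  (n.choose 3 : ℝ) *
    (T2stat A ^ 2 / (3 * pHat A ^ 2 * (1 - pHat A) ^ 2 * (1 - 3 * pHat A) ^ 2
        + 9 * pHat A ^ 3 * (1 - pHat A) ^ 3)
      + T3stat A ^ 2 / (pHat A ^ 3 * (1 - pHat A) ^ 3 + 3 * pHat A ^ 4 * (1 - pHat A) ^ 2))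

/-- The asymptotic covariance matrix `Σ_p`. -/
def SigmaP (p : ℝ) : Matrix (Fin 2) (Fin 2) ℝ :=
  !![3 * p ^ 2 * (1 - p) ^ 2 * (1 - 3 * p) ^ 2 + 9 * p ^ 3 * (1 - p) ^ 3,
      -6 * p ^ 4 * (1 - p) ^ 2;
      -6 * p ^ 4 * (1 - p) ^ 2, p ^ 3 * (1 - p) ^ 3 + 3 * p ^ 4 * (1 - p) ^ 2]

/-- The standard bivariate normal distribution `N(0, I₂)`. -/
def stdGaussian2 : Measure (Fin 2 → ℝ) := Measure.pi fun _ => gaussianReal 0 1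
/-- Mean edge frequency `p̄`. -/
def pBar {n : ℕ} (p : Fin n → Fin n → ℝ) : ℝ :=
  ((n.choose 2 : ℝ))⁻¹ * ∑ i : Fin n, ∑ j : Fin n, if i < j then p i j else 0

/-- Mean triangle frequency `q̄`. -/
def qBar {n : ℕ} (p : Fin n → Fin n → ℝ) : ℝ :=
  ((n.choose 3 : ℝ))⁻¹ * ∑ i : Fin n, ∑ j : Fin n, ∑ k : Fin n,
    if i < j ∧ j < k then p i j * p j k * p i k else 0


namespace GLX
set_option maxHeartbeats 1000000

variable {n : ℕ}

def w (p : Fin n → Fin n → ℝ) (e : Fin n × Fin n) (b : Bool) : ℝ :=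
  if b then p e.1 e.2 else 1 - p e.1 e.2

def W (p : Fin n → Fin n → ℝ) (A : Adj n) : ℝ := ∏ e, w p e (A e)

variable {p : Fin n → Fin n → ℝ}

lemma w_nonneg (hp : ∀ i j, 0 ≤ p i j ∧ p i j ≤ 1) (e : Fin n × Fin n) (b : Bool) :
    0 ≤ w p e b := by
  rcases b <;> simp only [w, if_true, if_false, Bool.false_eq_true] <;>
    [linarith [(hp e.1 e.2).2]; exact (hp e.1 e.2).1]

lemma W_nonneg (hp : ∀ i j, 0 ≤ p i j ∧ p i j ≤ 1) (A : Adj n) : 0 ≤ W p A :=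
  Finset.prod_nonneg fun e _ => w_nonneg hp e _

lemma gm_term (hp : ∀ i j, 0 ≤ p i j ∧ p i j ≤ 1) (S : Set (Adj n)) (A : Adj n) :
    ((∏ e : Fin n × Fin n,
        ENNReal.ofReal (if A e then p e.1 e.2 else 1 - p e.1 e.2)) • Measure.dirac A) S
      = ENNReal.ofReal (Set.indicator S (W p) A) := by
  have hS : MeasurableSet S := (Set.toFinite S).measurableSet
  have hw : (∏ e : Fin n × Fin n, ENNReal.ofReal (if A e then p e.1 e.2 else 1 - p e.1 e.2))
      = ENNReal.ofReal (W p A) := by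
    rw [W, ENNReal.ofReal_prod_of_nonneg (fun e _ => w_nonneg hp e (A e))]; rfl
  rw [Measure.smul_apply, Measure.dirac_apply' A hS, smul_eq_mul, hw]
  by_cases hA : A ∈ S
  · rw [Set.indicator_of_mem hA, Set.indicator_of_mem hA, Pi.one_apply, mul_one]
  · rw [Set.indicator_of_notMem hA, Set.indicator_of_notMem hA, mul_zero, ENNReal.ofReal_zero]

lemma gm_apply (hp : ∀ i j, 0 ≤ p i j ∧ p i j ≤ 1) (S : Set (Adj n)) :
    ((graphMeasure n p) S).toReal = ∑ A : Adj n, Set.indicator S (W p) A := by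
  rw [graphMeasure, Measure.finset_sum_apply]
  rw [Finset.sum_congr rfl fun A _ => gm_term hp S A]
  rw [ENNReal.toReal_sum (fun A _ => ENNReal.ofReal_ne_top)]
  exact Finset.sum_congr rfl fun A _ =>
    ENNReal.toReal_ofReal (Set.indicator_nonneg (fun a _ => W_nonneg hp a) A)

lemma gm_ne_top (hp : ∀ i j, 0 ≤ p i j ∧ p i j ≤ 1) (S : Set (Adj n)) :
    (graphMeasure n p) S ≠ ⊤ := by
  rw [graphMeasure, Measure.finset_sum_apply,
    Finset.sum_congr rfl fun A _ => gm_term hp S A]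
  exact (ENNReal.sum_lt_top.mpr fun A _ => ENNReal.ofReal_lt_top).ne

lemma gm_mono (hp : ∀ i j, 0 ≤ p i j ∧ p i j ≤ 1) {S T : Set (Adj n)} (h : S ⊆ T) :
    ((graphMeasure n p) S).toReal ≤ ((graphMeasure n p) T).toReal :=
  ENNReal.toReal_mono (gm_ne_top hp T) (measure_mono h)


lemma expect_prod (hp : ∀ i j, 0 ≤ p i j ∧ p i j ≤ 1)
    (s : Finset (Fin n × Fin n)) (g : Fin n × Fin n → Bool → ℝ) :
    ∑ A : Adj n, W p A * ∏ e ∈ s, g e (A e)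
      = ∏ e ∈ s, (p e.1 e.2 * g e true + (1 - p e.1 e.2) * g e false) := by
  classical
  have h1 : ∀ A : Adj n, W p A * ∏ e ∈ s, g e (A e)
      = ∏ e : Fin n × Fin n, (w p e (A e) * (if e ∈ s then g e (A e) else 1)) := by
    intro A
    rw [Finset.prod_mul_distrib, ← W]
    congr 1
    rw [Finset.prod_ite_mem, Finset.univ_inter]
  simp_rw [h1]
  have h2 : ∀ e : Fin n × Fin n,
      (w p e true * (if e ∈ s then g e true else 1))
        + (w p e false * (if e ∈ s then g e false else 1))
      = (if e ∈ s then p e.1 e.2 * g e true + (1 - p e.1 e.2) * g e false else 1) := by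
    intro e
    by_cases he : e ∈ s <;> simp [he, w]
  calc ∑ A : Adj n, ∏ e : Fin n × Fin n, (w p e (A e) * (if e ∈ s then g e (A e) else 1))
      = ∏ e : Fin n × Fin n, ∑ b : Bool,
          (w p e b * (if e ∈ s then g e b else 1)) := by
        rw [Finset.prod_univ_sum (fun _ => (univ : Finset Bool))]
        rw [Fintype.piFinset_univ]
    _ = ∏ e : Fin n × Fin n,
          (if e ∈ s then p e.1 e.2 * g e true + (1 - p e.1 e.2) * g e false else 1) := by
        refine Finset.prod_congr rfl fun e _ => ?_
        rw [Fintype.sum_bool, h2 e]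
    _ = _ := by rw [Finset.prod_ite_mem, Finset.univ_inter]

lemma expect_one (hp : ∀ i j, 0 ≤ p i j ∧ p i j ≤ 1) :
    ∑ A : Adj n, W p A = 1 := by
  have := expect_prod hp (∅ : Finset (Fin n × Fin n)) (fun _ _ => (1:ℝ))
  simpa using this

lemma cheb (hp : ∀ i j, 0 ≤ p i j ∧ p i j ≤ 1) (f : Adj n → ℝ) {V τ : ℝ} (hτ : 0 < τ)
    (hV : ∑ A : Adj n, W p A * f A ^ 2 ≤ V) :
    ((graphMeasure n p) {A | τ < |f A|}).toReal ≤ V / τ ^ 2 := by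
  rw [gm_apply hp]
  have h1 : ∀ A : Adj n, Set.indicator {A | τ < |f A|} (W p) A ≤ W p A * f A ^ 2 / τ ^ 2 := by
    intro A
    by_cases hA : A ∈ {A : Adj n | τ < |f A|}
    · rw [Set.indicator_of_mem hA]
      have h2 : τ ^ 2 ≤ f A ^ 2 := by
        have h3 : τ < |f A| := hA
        nlinarith [abs_nonneg (f A), sq_abs (f A)]
      have h4 : 1 ≤ f A ^ 2 / τ ^ 2 := (one_le_div (by positivity)).mpr h2
      calc W p A = W p A * 1 := (mul_one _).symm
        _ ≤ W p A * (f A ^ 2 / τ ^ 2) := mul_le_mul_of_nonneg_left h4 (W_nonneg hp A)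
        _ = W p A * f A ^ 2 / τ ^ 2 := by ring
    · rw [Set.indicator_of_notMem hA]
      have := W_nonneg hp A
      positivity
  calc ∑ A : Adj n, Set.indicator {A | τ < |f A|} (W p) A
      ≤ ∑ A : Adj n, W p A * f A ^ 2 / τ ^ 2 := Finset.sum_le_sum fun A _ => h1 A
    _ = (∑ A : Adj n, W p A * f A ^ 2) / τ ^ 2 := by rw [← Finset.sum_div]
    _ ≤ V / τ ^ 2 := by gcongr

lemma cheb_zero (hp : ∀ i j, 0 ≤ p i j ∧ p i j ≤ 1) (f : Adj n → ℝ) {τ : ℝ} (hτ : 0 ≤ τ)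
    (hV : ∑ A : Adj n, W p A * f A ^ 2 ≤ 0) :
    ((graphMeasure n p) {A | τ < |f A|}).toReal = 0 := by
  rw [gm_apply hp]
  apply Finset.sum_eq_zero
  intro A _
  by_cases hA : A ∈ {A : Adj n | τ < |f A|}
  · rw [Set.indicator_of_mem hA]
    have hsum : ∑ A : Adj n, W p A * f A ^ 2 = 0 :=
      le_antisymm hV (Finset.sum_nonneg fun A _ => mul_nonneg (W_nonneg hp _) (sq_nonneg _))
    have hzero : W p A * f A ^ 2 = 0 :=
      (Finset.sum_eq_zero_iff_of_nonneg fun A _ => mul_nonneg (W_nonneg hp _) (sq_nonneg _)).mp hsum A (mem_univ A)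
    have hf : f A ≠ 0 := by
      have h3 : τ < |f A| := hA
      intro h; rw [h] at h3; simp at h3; linarith
    rcases mul_eq_zero.mp hzero with h | h
    · exact h
    · exact absurd (pow_eq_zero_iff (by norm_num) |>.mp h) hf
  · exact Set.indicator_of_notMem hA _

def S2 (n : ℕ) : Finset (Fin n × Fin n) := univ.filter fun e => e.1 < e.2
def S3 (n : ℕ) : Finset (Fin n × Fin n × Fin n) :=
  univ.filter fun t => t.1 < t.2.1 ∧ t.2.1 < t.2.2
def Et (t : Fin n × Fin n × Fin n) : Finset (Fin n × Fin n) :=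
  {(t.1, t.2.1), (t.2.1, t.2.2), (t.1, t.2.2)}

lemma sum2_eq (f : Fin n → Fin n → ℝ) :
    (∑ i : Fin n, ∑ j : Fin n, if i < j then f i j else 0) = ∑ e ∈ S2 n, f e.1 e.2 := by
  rw [S2, Finset.sum_filter, Fintype.sum_prod_type]

lemma sum3_eq (f : Fin n → Fin n → Fin n → ℝ) :
    (∑ i : Fin n, ∑ j : Fin n, ∑ k : Fin n, if i < j ∧ j < k then f i j k else 0)
      = ∑ t ∈ S3 n, f t.1 t.2.1 t.2.2 := by
  rw [S3, Finset.sum_filter, Fintype.sum_prod_type]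
  apply Finset.sum_congr rfl; intro i _
  rw [Fintype.sum_prod_type]

lemma mem_S3 {t : Fin n × Fin n × Fin n} (ht : t ∈ S3 n) : t.1 < t.2.1 ∧ t.2.1 < t.2.2 := by
  simpa [S3] using ht

lemma mem_S2 {e : Fin n × Fin n} (he : e ∈ S2 n) : e.1 < e.2 := by
  simpa [S2] using he

lemma prod_Et {M : Type*} [CommMonoid M] {t : Fin n × Fin n × Fin n}
    (ht : t.1 < t.2.1 ∧ t.2.1 < t.2.2) (f : Fin n × Fin n → M) :
    ∏ e ∈ Et t, f e = f (t.1, t.2.1) * f (t.2.1, t.2.2) * f (t.1, t.2.2) := by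
  obtain ⟨i, j, k⟩ := t
  obtain ⟨h1, h2⟩ := ht
  simp only [Fin.lt_def] at h1 h2
  rw [Et, Finset.prod_insert (by
      intro hmem
      simp only [mem_insert, mem_singleton, Prod.ext_iff, Fin.ext_iff] at hmem
      omega),
    Finset.prod_insert (by
      intro hmem
      simp only [mem_singleton, Prod.ext_iff, Fin.ext_iff] at hmem
      omega),
    Finset.prod_singleton, mul_assoc]

lemma card_Et {t : Fin n × Fin n × Fin n} (ht : t.1 < t.2.1 ∧ t.2.1 < t.2.2) :
    (Et t).card = 3 := by
  obtain ⟨i, j, k⟩ := t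
  obtain ⟨h1, h2⟩ := ht
  simp only [Fin.lt_def] at h1 h2
  rw [Et, Finset.card_insert_of_notMem (by
      intro hmem
      simp only [mem_insert, mem_singleton, Prod.ext_iff, Fin.ext_iff] at hmem
      omega),
    Finset.card_insert_of_notMem (by
      intro hmem
      simp only [mem_singleton, Prod.ext_iff, Fin.ext_iff] at hmem
      omega),
    Finset.card_singleton]

lemma card_Et_le (t : Fin n × Fin n × Fin n) : (Et t).card ≤ 3 := by
  rw [Et]
  exact (Finset.card_insert_le _ _).trans (by
    exact Nat.succ_le_succ ((Finset.card_insert_le _ _).trans (by simp)))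

lemma eq_of_two_shared {x y : Fin n × Fin n × Fin n}
    (hx : x.1 < x.2.1 ∧ x.2.1 < x.2.2) (hy : y.1 < y.2.1 ∧ y.2.1 < y.2.2)
    {a b : Fin n × Fin n} (ha1 : a ∈ Et x) (ha2 : a ∈ Et y)
    (hb1 : b ∈ Et x) (hb2 : b ∈ Et y) (hab : a ≠ b) : x = y := by
  obtain ⟨i, j, k⟩ := x; obtain ⟨i', j', k'⟩ := y; obtain ⟨a1, a2⟩ := a; obtain ⟨b1, b2⟩ := b
  obtain ⟨hx1, hx2⟩ := hx; obtain ⟨hy1, hy2⟩ := hy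
  simp only [Et, mem_insert, mem_singleton, Prod.mk.injEq] at ha1 ha2 hb1 hb2
  simp only [Prod.mk.injEq]
  simp only [Fin.ext_iff, Fin.lt_def] at ha1 ha2 hb1 hb2 hx1 hx2 hy1 hy2 ⊢
  rw [Ne, Prod.mk.injEq, Fin.ext_iff, Fin.ext_iff] at hab
  omega

lemma inter_card_le {x y : Fin n × Fin n × Fin n}
    (hx : x.1 < x.2.1 ∧ x.2.1 < x.2.2) (hy : y.1 < y.2.1 ∧ y.2.1 < y.2.2)
    (hne : x ≠ y) : (Et x ∩ Et y).card ≤ 1 := by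
  by_contra h
  push_neg at h
  obtain ⟨a, ha, b, hb, hab⟩ := Finset.one_lt_card.mp h
  obtain ⟨ha1, ha2⟩ := Finset.mem_inter.mp ha
  obtain ⟨hb1, hb2⟩ := Finset.mem_inter.mp hb
  exact hne (eq_of_two_shared hx hy ha1 ha2 hb1 hb2 hab)

lemma card_union_ge {x y : Fin n × Fin n × Fin n}
    (hx : x.1 < x.2.1 ∧ x.2.1 < x.2.2) (hy : y.1 < y.2.1 ∧ y.2.1 < y.2.2)
    (hne : x ≠ y) : 5 ≤ (Et x ∪ Et y).card := by
  have h1 := Finset.card_union_add_card_inter (Et x) (Et y)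
  have h2 := inter_card_le hx hy hne
  rw [card_Et hx, card_Et hy] at h1
  omega

lemma pair_eq_of_seteq {i j i' j' : Fin n} (h1 : i < j) (h2 : i' < j')
    (h : ({i, j} : Finset (Fin n)) = {i', j'}) : i = i' ∧ j = j' := by
  have hi : i ∈ ({i', j'} : Finset (Fin n)) := h ▸ (by simp)
  have hj : j ∈ ({i', j'} : Finset (Fin n)) := h ▸ (by simp)
  simp only [mem_insert, mem_singleton, Fin.ext_iff] at hi hj ⊢
  simp only [Fin.lt_def] at h1 h2
  omega

lemma triple_eq_of_seteq {i j k i' j' k' : Fin n} (h1 : i < j) (h2 : j < k)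
    (h1' : i' < j') (h2' : j' < k')
    (h : ({i, j, k} : Finset (Fin n)) = {i', j', k'}) : i = i' ∧ j = j' ∧ k = k' := by
  have hi : i ∈ ({i', j', k'} : Finset (Fin n)) := h ▸ (by simp)
  have hj : j ∈ ({i', j', k'} : Finset (Fin n)) := h ▸ (by simp)
  have hk : k ∈ ({i', j', k'} : Finset (Fin n)) := h ▸ (by simp)
  have hi' : i' ∈ ({i, j, k} : Finset (Fin n)) := h ▸ (by simp)
  simp only [mem_insert, mem_singleton, Fin.ext_iff] at hi hj hk hi' ⊢
  simp only [Fin.lt_def] at h1 h2 h1' h2'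
  omega

lemma card_S2 : (S2 n).card ≤ n.choose 2 := by
  classical
  have h := Finset.card_le_card_of_injOn (s := S2 n) (t := Finset.powersetCard 2 (univ : Finset (Fin n)))
    (fun e : Fin n × Fin n => ({e.1, e.2} : Finset (Fin n)))
    (fun e he => by
      have h1 : e.1 < e.2 := mem_S2 he
      simp only [Fin.lt_def] at h1
      rw [Finset.mem_coe, Finset.mem_powersetCard]
      refine ⟨Finset.subset_univ _, ?_⟩
      rw [Finset.card_insert_of_notMem (by
        intro hmem; simp only [mem_singleton, Fin.ext_iff] at hmem; omega),
        Finset.card_singleton])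
    (fun a ha b hb hab => by
      have h1 : a.1 < a.2 := mem_S2 ha
      have h2 : b.1 < b.2 := mem_S2 hb
      obtain ⟨e1, e2⟩ := pair_eq_of_seteq h1 h2 hab
      exact Prod.ext e1 e2)
  simpa [Finset.card_powersetCard, Finset.card_univ] using h

lemma card_S3 : (S3 n).card ≤ n.choose 3 := by
  classical
  have h := Finset.card_le_card_of_injOn (s := S3 n) (t := Finset.powersetCard 3 (univ : Finset (Fin n)))
    (fun t : Fin n × Fin n × Fin n => ({t.1, t.2.1, t.2.2} : Finset (Fin n)))
    (fun t ht => by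
      obtain ⟨h1, h2⟩ := mem_S3 ht
      simp only [Fin.lt_def] at h1 h2
      rw [Finset.mem_coe, Finset.mem_powersetCard]
      refine ⟨Finset.subset_univ _, ?_⟩
      rw [Finset.card_insert_of_notMem (by
        intro hmem; simp only [mem_insert, mem_singleton, Fin.ext_iff] at hmem; omega),
        Finset.card_insert_of_notMem (by
        intro hmem; simp only [mem_singleton, Fin.ext_iff] at hmem; omega),
        Finset.card_singleton])
    (fun a ha b hb hab => by
      obtain ⟨a1, a2⟩ := mem_S3 ha
      obtain ⟨b1, b2⟩ := mem_S3 hb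
      obtain ⟨e1, e2, e3⟩ := triple_eq_of_seteq a1 a2 b1 b2 hab
      exact Prod.ext e1 (Prod.ext e2 e3))
  simpa [Finset.card_powersetCard, Finset.card_univ] using h

lemma card_shared_le (t : Fin n × Fin n × Fin n) :
    (((S3 n).erase t).filter fun t' => ((Et t) ∩ (Et t')).Nonempty).card ≤ 9 * n := by
  classical
  set B : Finset (Fin n × Fin n × Fin n) := (Et t).biUnion (fun e =>
    ((univ.image fun x => (e.1, e.2, x)) ∪ (univ.image fun x => (e.1, x, e.2)))
      ∪ (univ.image fun x => (x, e.1, e.2))) with hB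
  have hsub : (((S3 n).erase t).filter fun t' => ((Et t) ∩ (Et t')).Nonempty) ⊆ B := by
    intro t' ht'
    obtain ⟨e, he⟩ := (Finset.mem_filter.mp ht').2
    obtain ⟨he1, he2⟩ := Finset.mem_inter.mp he
    rw [hB, Finset.mem_biUnion]
    refine ⟨e, he1, ?_⟩
    simp only [Et, mem_insert, mem_singleton] at he2
    simp only [Finset.mem_union, Finset.mem_image]
    rcases he2 with h | h | h
    · exact Or.inl (Or.inl ⟨t'.2.2, mem_univ _, by rw [h]⟩)
    · exact Or.inr ⟨t'.1, mem_univ _, by rw [h]⟩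
    · exact Or.inl (Or.inr ⟨t'.2.1, mem_univ _, by rw [h]⟩)
  calc (((S3 n).erase t).filter fun t' => ((Et t) ∩ (Et t')).Nonempty).card
      ≤ B.card := Finset.card_le_card hsub
    _ ≤ ∑ e ∈ Et t, (((univ.image fun x => (e.1, e.2, x)) ∪ (univ.image fun x => (e.1, x, e.2)))
          ∪ (univ.image fun x => (x, e.1, e.2))).card := Finset.card_biUnion_le
    _ ≤ ∑ _e ∈ Et t, 3 * n := Finset.sum_le_sum (fun e _ => by
        refine (Finset.card_union_le _ _).trans ?_
        have h1 := Finset.card_union_le (univ.image fun x : Fin n => (e.1, e.2, x))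
          (univ.image fun x : Fin n => (e.1, x, e.2))
        have h2 := Finset.card_image_le (s := (univ : Finset (Fin n)))
          (f := fun x => (e.1, e.2, x))
        have h3 := Finset.card_image_le (s := (univ : Finset (Fin n)))
          (f := fun x => (e.1, x, e.2))
        have h4 := Finset.card_image_le (s := (univ : Finset (Fin n)))
          (f := fun x => (x, e.1, e.2))
        simp only [Finset.card_univ, Fintype.card_fin] at h1 h2 h3 h4
        omega)
    _ ≤ 9 * n := by
        rw [Finset.sum_const, smul_eq_mul]
        have := card_Et_le t
        nlinarith

lemma two_choose (n : ℕ) : 2 * n.choose 2 = n * (n - 1) := by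
  induction n with
  | zero => rfl
  | succ m ih =>
    rw [Nat.choose_succ_succ, Nat.mul_add, ih, Nat.choose_one_right]
    cases m with
    | zero => rfl
    | succ l => simp [Nat.succ_sub_one]; ring
lemma three_choose (n : ℕ) : 6 * n.choose 3 = n * (n - 1) * (n - 2) := by
  induction n with
  | zero => rfl
  | succ m ih =>
    rw [Nat.choose_succ_succ, Nat.mul_add, ih]
    have h2 := two_choose m
    match m with
    | 0 => rfl
    | 1 => rfl
    | (o+2) =>
      show 6 * (o+2).choose 2 + (o+2)*(o+1)*o = (o+3)*(o+2)*(o+1)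
      have e1 : (o+2) - 1 = o + 1 := rfl
      rw [e1] at h2
      have e : (o+2)*(o+1)*o + 3*((o+2)*(o+1)) = (o+3)*(o+2)*(o+1) := by ring
      linarith
lemma choose2_lower {n : ℕ} (hn : 2 ≤ n) : (n : ℝ)^2 ≤ 4 * (n.choose 2 : ℝ) := by
  have h2 : (2 : ℝ) * (n.choose 2 : ℝ) = (n : ℝ) * ((n : ℝ) - 1) := by
    have h3 : ((2 * n.choose 2 : ℕ) : ℝ) = ((n * (n-1) : ℕ) : ℝ) := Nat.cast_inj.mpr (two_choose n)
    push_cast [Nat.cast_sub (by omega : 1 ≤ n)] at h3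
    linarith
  have hn' : (2 : ℝ) ≤ (n : ℝ) := by exact_mod_cast hn
  nlinarith
lemma choose3_lower {n : ℕ} (hn : 3 ≤ n) : (n : ℝ)^3 ≤ 27 * (n.choose 3 : ℝ) := by
  have h2 : (6 : ℝ) * (n.choose 3 : ℝ) = (n : ℝ) * ((n : ℝ) - 1) * ((n : ℝ) - 2) := by
    have h3 : ((6 * n.choose 3 : ℕ) : ℝ) = ((n * (n-1) * (n-2) : ℕ) : ℝ) :=
      Nat.cast_inj.mpr (three_choose n)
    push_cast [Nat.cast_sub (by omega : 1 ≤ n), Nat.cast_sub (by omega : 2 ≤ n)] at h3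
    linarith
  have hn' : (3 : ℝ) ≤ (n : ℝ) := by exact_mod_cast hn
  nlinarith [sq_nonneg ((n:ℝ) - 3), sq_nonneg ((n:ℝ) + 3)]

variable {p : Fin n → Fin n → ℝ}

-- edge-centred variable
def Y (p : Fin n → Fin n → ℝ) (e : Fin n × Fin n) (b : Bool) : ℝ :=
  (if b then 1 else 0) - p e.1 e.2

lemma pHat_sub (A : Adj n) :
    pHat A - pBar p = ((n.choose 2 : ℝ))⁻¹ * ∑ e ∈ S2 n, Y p e (A e) := by
  rw [pHat, pBar, sum2_eq (fun i j => eV A i j), sum2_eq (fun i j => p i j), ← mul_sub,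
    ← Finset.sum_sub_distrib]
  rfl

lemma moment2_single (hp : ∀ i j, 0 ≤ p i j ∧ p i j ≤ 1) (e : Fin n × Fin n) :
    ∑ A : Adj n, W p A * (Y p e (A e) * Y p e (A e))
      = p e.1 e.2 * (1 - p e.1 e.2) := by
  have h := expect_prod hp {e} (fun x b => Y p x b * Y p x b)
  simp only [Finset.prod_singleton] at h
  rw [h]
  simp only [Y, if_true, Bool.false_eq_true, if_false]
  ring

lemma moment_pair (hp : ∀ i j, 0 ≤ p i j ∧ p i j ≤ 1) {e e' : Fin n × Fin n} (hne : e ≠ e') :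
    ∑ A : Adj n, W p A * (Y p e (A e) * Y p e' (A e')) = 0 := by
  have h : ∀ A : Adj n, Y p e (A e) * Y p e' (A e') = ∏ x ∈ ({e, e'} : Finset _), Y p x (A x) :=
    fun A => (Finset.prod_pair (f := fun x => Y p x (A x)) hne).symm
  simp_rw [h]
  rw [expect_prod hp {e, e'} (fun x b => Y p x b)]
  apply Finset.prod_eq_zero (Finset.mem_insert_self e {e'})
  simp only [Y, if_true, Bool.false_eq_true, if_false]
  ring

lemma var_pHat (hp : ∀ i j, 0 ≤ p i j ∧ p i j ≤ 1) {σ : ℝ} (hσ0 : 0 ≤ σ)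
    (hpσ : ∀ i j, p i j ≤ σ) :
    ∑ A : Adj n, W p A * (pHat A - pBar p) ^ 2 ≤ (n.choose 2 : ℝ)⁻¹ * σ := by
  classical
  set c : ℝ := ((n.choose 2 : ℝ))⁻¹ with hc
  have hstep : ∀ A : Adj n, W p A * (pHat A - pBar p) ^ 2
      = c ^ 2 * ∑ e ∈ S2 n, ∑ e' ∈ S2 n, W p A * (Y p e (A e) * Y p e' (A e')) := by
    intro A
    rw [pHat_sub A, mul_pow, pow_two (∑ e ∈ S2 n, Y p e (A e)), Finset.sum_mul_sum]
    calc W p A * (c ^ 2 * ∑ e ∈ S2 n, ∑ e' ∈ S2 n, Y p e (A e) * Y p e' (A e'))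
        = c ^ 2 * (W p A * ∑ e ∈ S2 n, ∑ e' ∈ S2 n, Y p e (A e) * Y p e' (A e')) := by ring
      _ = _ := by
          congr 1
          rw [Finset.mul_sum]
          apply Finset.sum_congr rfl; intro e _
          rw [Finset.mul_sum]
  rw [Finset.sum_congr rfl fun A _ => hstep A, ← Finset.mul_sum]
  rw [Finset.sum_comm]
  have hswap : ∀ e ∈ S2 n, (∑ A : Adj n, ∑ e' ∈ S2 n, W p A * (Y p e (A e) * Y p e' (A e')))
      = ∑ e' ∈ S2 n, ∑ A : Adj n, W p A * (Y p e (A e) * Y p e' (A e')) :=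
    fun e _ => Finset.sum_comm
  rw [Finset.sum_congr rfl hswap]
  have hdiag : ∀ e ∈ S2 n, (∑ e' ∈ S2 n, ∑ A : Adj n, W p A * (Y p e (A e) * Y p e' (A e')))
      = p e.1 e.2 * (1 - p e.1 e.2) := by
    intro e he
    rw [Finset.sum_eq_single_of_mem e he (fun e' _ hne => moment_pair hp (Ne.symm hne))]
    exact moment2_single hp e
  rw [Finset.sum_congr rfl hdiag]
  have hbound : ∑ e ∈ S2 n, p e.1 e.2 * (1 - p e.1 e.2) ≤ (n.choose 2 : ℝ) * σ := by
    calc ∑ e ∈ S2 n, p e.1 e.2 * (1 - p e.1 e.2) ≤ ∑ e ∈ S2 n, σ := by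
          apply Finset.sum_le_sum
          intro e _
          nlinarith [(hp e.1 e.2).1, (hp e.1 e.2).2, hpσ e.1 e.2]
      _ = (S2 n).card * σ := by rw [Finset.sum_const, nsmul_eq_mul]
      _ ≤ (n.choose 2 : ℝ) * σ := by
          apply mul_le_mul_of_nonneg_right _ hσ0
          exact_mod_cast card_S2
  rcases eq_or_ne ((n.choose 2 : ℝ)) 0 with h0 | h0
  · rw [hc, h0]
    simp
  · calc c ^ 2 * ∑ e ∈ S2 n, p e.1 e.2 * (1 - p e.1 e.2)
        ≤ c ^ 2 * ((n.choose 2 : ℝ) * σ) := by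
          apply mul_le_mul_of_nonneg_left hbound (by positivity)
      _ = c * σ := by
          rw [hc]; field_simp

def XT (t : Fin n × Fin n × Fin n) (A : Adj n) : ℝ := ∏ e ∈ Et t, (if A e then (1:ℝ) else 0)
def qT (p : Fin n → Fin n → ℝ) (t : Fin n × Fin n × Fin n) : ℝ := ∏ e ∈ Et t, p e.1 e.2

lemma prod01_union {ι : Type*} [DecidableEq ι] {s t : Finset ι} {f : ι → ℝ}
    (hf : ∀ i, f i = 0 ∨ f i = 1) :
    (∏ i ∈ s, f i) * ∏ i ∈ t, f i = ∏ i ∈ s ∪ t, f i := by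
  by_cases h : ∀ i ∈ s ∩ t, f i = 1
  · rw [← Finset.prod_union_inter, Finset.prod_eq_one h, mul_one]
  · push_neg at h
    obtain ⟨i, hi, hfi⟩ := h
    have hf0 : f i = 0 := (hf i).resolve_right hfi
    obtain ⟨hi1, hi2⟩ := Finset.mem_inter.mp hi
    rw [Finset.prod_eq_zero hi1 hf0, Finset.prod_eq_zero (Finset.mem_union_left t hi1) hf0,
      zero_mul]

lemma expect_XT (hp : ∀ i j, 0 ≤ p i j ∧ p i j ≤ 1) (t : Fin n × Fin n × Fin n) :
    ∑ A : Adj n, W p A * XT t A = qT p t := by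
  rw [show (fun A : Adj n => W p A * XT t A) = fun A => W p A * ∏ e ∈ Et t,
    (fun e b => if b then (1:ℝ) else 0) e (A e) from rfl]
  rw [expect_prod hp (Et t) (fun e b => if b then (1:ℝ) else 0)]
  apply Finset.prod_congr rfl
  intro e _
  simp

lemma expect_XX (hp : ∀ i j, 0 ≤ p i j ∧ p i j ≤ 1) (t t' : Fin n × Fin n × Fin n) :
    ∑ A : Adj n, W p A * (XT t A * XT t' A) = ∏ e ∈ Et t ∪ Et t', p e.1 e.2 := by
  have h : ∀ A : Adj n, XT t A * XT t' A
      = ∏ e ∈ Et t ∪ Et t', (fun e b => if b then (1:ℝ) else 0) e (A e) := by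
    intro A
    exact prod01_union (f := fun e => if A e then (1:ℝ) else 0)
      (fun e => by by_cases hA : A e <;> simp [hA])
  simp_rw [h]
  rw [expect_prod hp (Et t ∪ Et t') (fun e b => if b then (1:ℝ) else 0)]
  apply Finset.prod_congr rfl
  intro e _
  simp

lemma cov_eq (hp : ∀ i j, 0 ≤ p i j ∧ p i j ≤ 1) (t t' : Fin n × Fin n × Fin n) :
    ∑ A : Adj n, W p A * ((XT t A - qT p t) * (XT t' A - qT p t'))
      = (∏ e ∈ Et t ∪ Et t', p e.1 e.2) - qT p t * qT p t' := by
  have h : ∀ A : Adj n, W p A * ((XT t A - qT p t) * (XT t' A - qT p t'))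
      = W p A * (XT t A * XT t' A) - qT p t' * (W p A * XT t A)
        - qT p t * (W p A * XT t' A) + (qT p t * qT p t') * W p A := fun A => by ring
  rw [Finset.sum_congr rfl fun A _ => h A]
  rw [Finset.sum_add_distrib, Finset.sum_sub_distrib, Finset.sum_sub_distrib,
    ← Finset.mul_sum, ← Finset.mul_sum, ← Finset.mul_sum,
    expect_XX hp t t', expect_XT hp t, expect_XT hp t', expect_one hp]
  ring

lemma var_F3 (hp : ∀ i j, 0 ≤ p i j ∧ p i j ≤ 1) {σ : ℝ} (hσ0 : 0 ≤ σ) (hσ1 : σ ≤ 1)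
    (hpσ : ∀ i j, p i j ≤ σ) :
    ∑ A : Adj n, W p A * (F3hat A - qBar p) ^ 2
      ≤ (n.choose 3 : ℝ)⁻¹ * (σ ^ 3 + 9 * n * σ ^ 5) := by
  classical
  set c : ℝ := ((n.choose 3 : ℝ))⁻¹ with hc
  -- representation
  have hrep : ∀ A : Adj n, F3hat A - qBar p = c * ∑ t ∈ S3 n, (XT t A - qT p t) := by
    intro A
    rw [F3hat, qBar,
      sum3_eq (fun i j k => eV A i j * eV A j k * eV A i k),
      sum3_eq (fun i j k => p i j * p j k * p i k), ← mul_sub, ← Finset.sum_sub_distrib]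
    congr 1
    apply Finset.sum_congr rfl
    intro t ht
    have h1 := mem_S3 ht
    rw [XT, qT, prod_Et h1 (fun e => if A e then (1:ℝ) else 0), prod_Et h1 (fun e => p e.1 e.2)]
    rfl
  have hstep : ∀ A : Adj n, W p A * (F3hat A - qBar p) ^ 2
      = c ^ 2 * ∑ t ∈ S3 n, ∑ t' ∈ S3 n,
          W p A * ((XT t A - qT p t) * (XT t' A - qT p t')) := by
    intro A
    rw [hrep A, mul_pow, pow_two (∑ t ∈ S3 n, (XT t A - qT p t)), Finset.sum_mul_sum]
    calc W p A * (c ^ 2 * ∑ t ∈ S3 n, ∑ t' ∈ S3 n, (XT t A - qT p t) * (XT t' A - qT p t'))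
        = c ^ 2 * (W p A * ∑ t ∈ S3 n, ∑ t' ∈ S3 n,
            (XT t A - qT p t) * (XT t' A - qT p t')) := by ring
      _ = _ := by
          congr 1
          rw [Finset.mul_sum]
          apply Finset.sum_congr rfl; intro t _
          rw [Finset.mul_sum]
  rw [Finset.sum_congr rfl fun A _ => hstep A, ← Finset.mul_sum, Finset.sum_comm]
  have hswap : ∀ t ∈ S3 n, (∑ A : Adj n, ∑ t' ∈ S3 n,
      W p A * ((XT t A - qT p t) * (XT t' A - qT p t')))
      = ∑ t' ∈ S3 n, ∑ A : Adj n, W p A * ((XT t A - qT p t) * (XT t' A - qT p t')) :=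
    fun t _ => Finset.sum_comm
  rw [Finset.sum_congr rfl hswap]
  simp_rw [Finset.sum_congr rfl fun t (ht : t ∈ S3 n) =>
    Finset.sum_congr rfl fun t' (ht' : t' ∈ S3 n) => cov_eq hp t t']
  -- bound inner sums
  have hqT : ∀ t ∈ S3 n, 0 ≤ qT p t ∧ qT p t ≤ σ ^ 3 := by
    intro t ht
    constructor
    · exact Finset.prod_nonneg fun e _ => (hp e.1 e.2).1
    · have h1 : qT p t ≤ ∏ _e ∈ Et t, σ :=
        Finset.prod_le_prod (fun e _ => (hp e.1 e.2).1) (fun e _ => hpσ e.1 e.2)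
      rwa [Finset.prod_const, card_Et (mem_S3 ht)] at h1
  have hinner : ∀ t ∈ S3 n,
      (∑ t' ∈ S3 n, ((∏ e ∈ Et t ∪ Et t', p e.1 e.2) - qT p t * qT p t'))
        ≤ σ ^ 3 + 9 * n * σ ^ 5 := by
    intro t ht
    rw [← Finset.add_sum_erase _ _ ht]
    have hdiag : (∏ e ∈ Et t ∪ Et t, p e.1 e.2) - qT p t * qT p t ≤ σ ^ 3 := by
      rw [Finset.union_self, show (∏ e ∈ Et t, p e.1 e.2) = qT p t from rfl]
      have h1 := hqT t ht
      nlinarith [h1.1, h1.2]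
    have hoff : (∑ t' ∈ (S3 n).erase t, ((∏ e ∈ Et t ∪ Et t', p e.1 e.2) - qT p t * qT p t'))
        ≤ 9 * n * σ ^ 5 := by
      have hterm : ∀ t' ∈ (S3 n).erase t,
          (∏ e ∈ Et t ∪ Et t', p e.1 e.2) - qT p t * qT p t'
            ≤ if ((Et t) ∩ (Et t')).Nonempty then σ ^ 5 else 0 := by
        intro t' ht'
        have ht'3 : t' ∈ S3 n := Finset.mem_of_mem_erase ht'
        have hne : t' ≠ t := Finset.ne_of_mem_erase ht'
        by_cases hint : ((Et t) ∩ (Et t')).Nonempty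
        · rw [if_pos hint]
          have h5 : 5 ≤ (Et t ∪ Et t').card := card_union_ge (mem_S3 ht) (mem_S3 ht'3) hne.symm
          have hq := hqT t ht
          have hq' := hqT t' ht'3
          calc (∏ e ∈ Et t ∪ Et t', p e.1 e.2) - qT p t * qT p t'
              ≤ ∏ e ∈ Et t ∪ Et t', p e.1 e.2 := by nlinarith [hq.1, hq'.1]
            _ ≤ σ ^ 5 := by
                have h2 : (∏ e ∈ Et t ∪ Et t', p e.1 e.2) ≤ ∏ _e ∈ Et t ∪ Et t', σ :=
                  Finset.prod_le_prod (fun e _ => (hp e.1 e.2).1) (fun e _ => hpσ e.1 e.2)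
                rw [Finset.prod_const] at h2
                exact h2.trans (pow_le_pow_of_le_one hσ0 hσ1 h5)
        · rw [if_neg hint]
          have hdisj : Disjoint (Et t) (Et t') := by
            rw [Finset.disjoint_iff_inter_eq_empty]
            exact Finset.not_nonempty_iff_eq_empty.mp hint
          have heq : (∏ e ∈ Et t ∪ Et t', p e.1 e.2) = qT p t * qT p t' := by
            rw [Finset.prod_union hdisj]; rfl
          rw [heq, sub_self]
      calc (∑ t' ∈ (S3 n).erase t, ((∏ e ∈ Et t ∪ Et t', p e.1 e.2) - qT p t * qT p t'))
          ≤ ∑ t' ∈ (S3 n).erase t, (if ((Et t) ∩ (Et t')).Nonempty then σ ^ 5 else 0) :=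
            Finset.sum_le_sum hterm
        _ = ∑ t' ∈ ((S3 n).erase t).filter (fun t' => ((Et t) ∩ (Et t')).Nonempty), σ ^ 5 :=
            (Finset.sum_filter _ _).symm
        _ = (((S3 n).erase t).filter (fun t' => ((Et t) ∩ (Et t')).Nonempty)).card * σ ^ 5 := by
            rw [Finset.sum_const, nsmul_eq_mul]
        _ ≤ 9 * n * σ ^ 5 := by
            apply mul_le_mul_of_nonneg_right _ (by positivity)
            exact_mod_cast card_shared_le t
    linarith
  have htotal : (∑ t ∈ S3 n, ∑ t' ∈ S3 n, ((∏ e ∈ Et t ∪ Et t', p e.1 e.2) - qT p t * qT p t'))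
      ≤ (n.choose 3 : ℝ) * (σ ^ 3 + 9 * n * σ ^ 5) := by
    calc (∑ t ∈ S3 n, ∑ t' ∈ S3 n, ((∏ e ∈ Et t ∪ Et t', p e.1 e.2) - qT p t * qT p t'))
        ≤ ∑ _t ∈ S3 n, (σ ^ 3 + 9 * n * σ ^ 5) := Finset.sum_le_sum hinner
      _ = (S3 n).card * (σ ^ 3 + 9 * n * σ ^ 5) := by rw [Finset.sum_const, nsmul_eq_mul]
      _ ≤ (n.choose 3 : ℝ) * (σ ^ 3 + 9 * n * σ ^ 5) := by
          apply mul_le_mul_of_nonneg_right _ (by positivity)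
          exact_mod_cast card_S3
  rcases eq_or_ne ((n.choose 3 : ℝ)) 0 with h0 | h0
  · rw [hc, h0]
    simp
  · calc c ^ 2 * (∑ t ∈ S3 n, ∑ t' ∈ S3 n, ((∏ e ∈ Et t ∪ Et t', p e.1 e.2) - qT p t * qT p t'))
        ≤ c ^ 2 * ((n.choose 3 : ℝ) * (σ ^ 3 + 9 * n * σ ^ 5)) :=
          mul_le_mul_of_nonneg_left htotal (by positivity)
      _ = c * (σ ^ 3 + 9 * n * σ ^ 5) := by rw [hc]; field_simp

lemma pBar_nonneg (hp : ∀ i j, 0 ≤ p i j ∧ p i j ≤ 1) : 0 ≤ pBar p := by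
  rw [pBar]
  apply mul_nonneg (inv_nonneg.mpr (Nat.cast_nonneg _))
  apply Finset.sum_nonneg; intro i _
  apply Finset.sum_nonneg; intro j _
  by_cases h : i < j <;> simp [h, (hp i j).1]

lemma pBar_le (hp : ∀ i j, 0 ≤ p i j ∧ p i j ≤ 1) {ρ : ℝ} (hρ0 : 0 ≤ ρ)
    (hρ : ∀ i j, p i j ≤ ρ) : pBar p ≤ ρ := by
  rw [pBar, sum2_eq (fun i j => p i j)]
  have h1 : (∑ e ∈ S2 n, p e.1 e.2) ≤ (n.choose 2 : ℝ) * ρ := by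
    calc (∑ e ∈ S2 n, p e.1 e.2) ≤ ∑ _e ∈ S2 n, ρ :=
          Finset.sum_le_sum fun e _ => hρ e.1 e.2
      _ = (S2 n).card * ρ := by rw [Finset.sum_const, nsmul_eq_mul]
      _ ≤ (n.choose 2 : ℝ) * ρ := by
          apply mul_le_mul_of_nonneg_right _ hρ0
          exact_mod_cast card_S2
  rcases eq_or_ne ((n.choose 2 : ℝ)) 0 with h0 | h0
  · rw [h0, inv_zero, zero_mul]; exact hρ0
  · have hpos : 0 < (n.choose 2 : ℝ) := lt_of_le_of_ne (Nat.cast_nonneg _) (Ne.symm h0)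
    calc ((n.choose 2 : ℝ))⁻¹ * (∑ e ∈ S2 n, p e.1 e.2)
        ≤ ((n.choose 2 : ℝ))⁻¹ * ((n.choose 2 : ℝ) * ρ) :=
          mul_le_mul_of_nonneg_left h1 (by positivity)
      _ = ρ := by field_simp


lemma cube_bound {ρ t pb ph : ℝ} {n : ℕ} (hρ0 : 0 ≤ ρ) (hpB0 : 0 ≤ pb) (hpBρ : pb ≤ ρ)
    (ht1 : 1 ≤ t) (hd : |ph - pb| ≤ t * Real.sqrt ρ / n) :
    |ph ^ 3 - pb ^ 3| ≤ 3 * t ^ 3 * (ρ ^ 2 * Real.sqrt ρ / n + ρ ^ 2 / (n:ℝ) ^ 2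
      + ρ * Real.sqrt ρ / (n:ℝ) ^ 3) := by
  set τ : ℝ := t * Real.sqrt ρ / n with hτdef
  have ht0 : 0 < t := by linarith
  have hd0 : 0 ≤ |ph - pb| := abs_nonneg _
  have hτ0 : 0 ≤ τ := hd0.trans hd
  have hid : ph ^ 3 - pb ^ 3
      = 3 * pb ^ 2 * (ph - pb) + 3 * pb * (ph - pb) ^ 2 + (ph - pb) ^ 3 := by ring
  have k1 : |3 * pb ^ 2 * (ph - pb)| = 3 * pb ^ 2 * |ph - pb| := by
    rw [abs_mul, abs_of_nonneg (by positivity : (0:ℝ) ≤ 3 * pb ^ 2)]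
  have k2 : |3 * pb * (ph - pb) ^ 2| = 3 * pb * |ph - pb| ^ 2 := by
    rw [abs_mul, abs_of_nonneg (mul_nonneg (by norm_num) hpB0), abs_pow]
  have k3 : |(ph - pb) ^ 3| = |ph - pb| ^ 3 := abs_pow _ _
  have habs : |ph ^ 3 - pb ^ 3|
      ≤ 3 * pb ^ 2 * |ph - pb| + 3 * pb * |ph - pb| ^ 2 + |ph - pb| ^ 3 := by
    rw [hid]
    calc |3 * pb ^ 2 * (ph - pb) + 3 * pb * (ph - pb) ^ 2 + (ph - pb) ^ 3|
        ≤ |3 * pb ^ 2 * (ph - pb)| + |3 * pb * (ph - pb) ^ 2| + |(ph - pb) ^ 3| :=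
          abs_add_three _ _ _
      _ = 3 * pb ^ 2 * |ph - pb| + 3 * pb * |ph - pb| ^ 2 + |ph - pb| ^ 3 := by
          rw [k1, k2, k3]
  have hτ2 : τ ^ 2 = t ^ 2 * ρ / (n : ℝ) ^ 2 := by
    rw [hτdef, div_pow, mul_pow, Real.sq_sqrt hρ0]
  have hτ3 : τ ^ 3 = t ^ 3 * (ρ * Real.sqrt ρ) / (n : ℝ) ^ 3 := by
    rw [hτdef, div_pow, mul_pow, pow_succ (Real.sqrt ρ) 2, Real.sq_sqrt hρ0]
  have h1 : 3 * pb ^ 2 * |ph - pb| ≤ 3 * ρ ^ 2 * τ := by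
    have : pb ^ 2 ≤ ρ ^ 2 := by nlinarith
    nlinarith
  have h2 : 3 * pb * |ph - pb| ^ 2 ≤ 3 * ρ * τ ^ 2 := by
    have h2a : |ph - pb| ^ 2 ≤ τ ^ 2 := by nlinarith
    nlinarith [sq_nonneg τ]
  have h3 : |ph - pb| ^ 3 ≤ τ ^ 3 := pow_le_pow_left₀ hd0 hd 3
  have e1 : 3 * ρ ^ 2 * τ = 3 * t * (ρ ^ 2 * Real.sqrt ρ / n) := by rw [hτdef]; ring
  have e2 : 3 * ρ * τ ^ 2 = 3 * t ^ 2 * (ρ ^ 2 / (n : ℝ) ^ 2) := by rw [hτ2]; ring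
  have e3 : τ ^ 3 = t ^ 3 * (ρ * Real.sqrt ρ / (n : ℝ) ^ 3) := by rw [hτ3]; ring
  have ht2 : t ≤ t ^ 3 := by
    calc t = t ^ 1 := (pow_one t).symm
      _ ≤ t ^ 3 := pow_le_pow_right₀ ht1 (by norm_num)
  have ht3 : t ^ 2 ≤ t ^ 3 := pow_le_pow_right₀ ht1 (by norm_num)
  have hx1 : (0:ℝ) ≤ ρ ^ 2 * Real.sqrt ρ / n := by positivity
  have hx2 : (0:ℝ) ≤ ρ ^ 2 / (n : ℝ) ^ 2 := by positivity
  have hx3 : (0:ℝ) ≤ ρ * Real.sqrt ρ / (n : ℝ) ^ 3 := by positivity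
  have b1 : 3 * t * (ρ ^ 2 * Real.sqrt ρ / n) ≤ 3 * t ^ 3 * (ρ ^ 2 * Real.sqrt ρ / n) := by
    nlinarith
  have b2 : 3 * t ^ 2 * (ρ ^ 2 / (n : ℝ) ^ 2) ≤ 3 * t ^ 3 * (ρ ^ 2 / (n : ℝ) ^ 2) := by
    nlinarith
  have b3 : t ^ 3 * (ρ * Real.sqrt ρ / (n : ℝ) ^ 3)
      ≤ 3 * t ^ 3 * (ρ * Real.sqrt ρ / (n : ℝ) ^ 3) := by nlinarith
  calc |ph ^ 3 - pb ^ 3| ≤ 3 * pb ^ 2 * |ph - pb| + 3 * pb * |ph - pb| ^ 2 + |ph - pb| ^ 3 :=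
        habs
    _ ≤ 3 * ρ ^ 2 * τ + 3 * ρ * τ ^ 2 + τ ^ 3 := by linarith
    _ = 3 * t * (ρ ^ 2 * Real.sqrt ρ / n) + 3 * t ^ 2 * (ρ ^ 2 / (n : ℝ) ^ 2)
        + t ^ 3 * (ρ * Real.sqrt ρ / (n : ℝ) ^ 3) := by rw [e1, e2, e3]
    _ ≤ 3 * t ^ 3 * (ρ ^ 2 * Real.sqrt ρ / n) + 3 * t ^ 3 * (ρ ^ 2 / (n : ℝ) ^ 2)
        + 3 * t ^ 3 * (ρ * Real.sqrt ρ / (n : ℝ) ^ 3) := by linarith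
    _ = 3 * t ^ 3 * (ρ ^ 2 * Real.sqrt ρ / n + ρ ^ 2 / (n : ℝ) ^ 2
        + ρ * Real.sqrt ρ / (n : ℝ) ^ 3) := by ring

lemma key1 {ε t ρ : ℝ} {n : ℕ} (hε : 0 < ε) (ht1 : 1 ≤ t) (htε : 256 ≤ ε * t ^ 2)
    (hρpos : 0 < ρ) (hn2 : 2 ≤ n) :
    (n.choose 2 : ℝ)⁻¹ * min ρ 1 / (t * Real.sqrt ρ / n) ^ 2 ≤ ε := by
  have hC2pos : 0 < (n.choose 2 : ℝ) := by exact_mod_cast Nat.choose_pos hn2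
  have hn2' : (n:ℝ)^2 ≤ 4 * (n.choose 2 : ℝ) := choose2_lower hn2
  have hnpos : (0:ℝ) < n := by
    have : (2:ℝ) ≤ (n:ℝ) := by exact_mod_cast hn2
    linarith
  have ht0 : 0 < t := by linarith
  have hτ2 : (t * Real.sqrt ρ / n) ^ 2 = t ^ 2 * ρ / (n : ℝ) ^ 2 := by
    rw [div_pow, mul_pow, Real.sq_sqrt hρpos.le]
  rw [hτ2, div_le_iff₀ (by positivity)]
  have hσρ : min ρ 1 ≤ ρ := min_le_left _ _
  have hσ0 : 0 ≤ min ρ 1 := le_min hρpos.le zero_le_one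
  have ha : (n.choose 2 : ℝ)⁻¹ * min ρ 1 * (n:ℝ)^2
      ≤ (n.choose 2 : ℝ)⁻¹ * ρ * (4 * (n.choose 2 : ℝ)) := by
    have hi : 0 ≤ (n.choose 2 : ℝ)⁻¹ := by positivity
    have s1 : (min ρ 1) * (n:ℝ)^2 ≤ ρ * (4 * (n.choose 2 : ℝ)) := by
      nlinarith [mul_nonneg (sub_nonneg.mpr hσρ) (sq_nonneg (n:ℝ)),
        mul_nonneg hρpos.le (sub_nonneg.mpr hn2')]
    calc (n.choose 2 : ℝ)⁻¹ * min ρ 1 * (n:ℝ)^2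
        = (n.choose 2 : ℝ)⁻¹ * (min ρ 1 * (n:ℝ)^2) := by ring
      _ ≤ (n.choose 2 : ℝ)⁻¹ * (ρ * (4 * (n.choose 2 : ℝ))) :=
          mul_le_mul_of_nonneg_left s1 hi
      _ = (n.choose 2 : ℝ)⁻¹ * ρ * (4 * (n.choose 2 : ℝ)) := by ring
  have hb : (n.choose 2 : ℝ)⁻¹ * ρ * (4 * (n.choose 2 : ℝ)) = 4 * ρ := by
    field_simp
  have hcap : 4 * ρ ≤ ε * (t ^ 2 * ρ) := by nlinarith
  calc (n.choose 2 : ℝ)⁻¹ * min ρ 1 ≤ ε * (t ^ 2 * ρ) / (n:ℝ)^2 := by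
        rw [le_div_iff₀ (by positivity)]; linarith
    _ = ε * (t ^ 2 * ρ / (n:ℝ)^2) := by ring

lemma key2 {ε t ρ : ℝ} {n : ℕ} (hε : 0 < ε) (ht1 : 1 ≤ t) (htε : 256 ≤ ε * t ^ 2)
    (hρpos : 0 < ρ) (hn3 : 3 ≤ n) :
    (n.choose 3 : ℝ)⁻¹ * ((min ρ 1) ^ 3 + 9 * n * (min ρ 1) ^ 5)
      / (3 * t ^ 3 * (ρ ^ 2 * Real.sqrt ρ / n + ρ * Real.sqrt ρ / ((n:ℝ) * Real.sqrt n))) ^ 2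
      ≤ ε := by
  have hC3pos : 0 < (n.choose 3 : ℝ) := by exact_mod_cast Nat.choose_pos hn3
  have hn3' : (n:ℝ)^3 ≤ 27 * (n.choose 3 : ℝ) := choose3_lower hn3
  have hnpos : (0:ℝ) < n := by
    have : (3:ℝ) ≤ (n:ℝ) := by exact_mod_cast hn3
    linarith
  have ht0 : 0 < t := by linarith
  have hσρ : min ρ 1 ≤ ρ := min_le_left _ _
  have hσ0 : 0 ≤ min ρ 1 := le_min hρpos.le zero_le_one
  have hτpos : 0 < 3 * t ^ 3 * (ρ ^ 2 * Real.sqrt ρ / n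
      + ρ * Real.sqrt ρ / ((n:ℝ) * Real.sqrt n)) := by positivity
  rw [div_le_iff₀ (by positivity)]
  have hx2 : (ρ ^ 2 * Real.sqrt ρ / (n:ℝ)) ^ 2 = ρ ^ 5 / (n:ℝ) ^ 2 := by
    rw [div_pow, mul_pow, Real.sq_sqrt hρpos.le]; ring
  have hy2 : (ρ * Real.sqrt ρ / ((n:ℝ) * Real.sqrt n)) ^ 2 = ρ ^ 3 / (n:ℝ) ^ 3 := by
    rw [div_pow, mul_pow, mul_pow, Real.sq_sqrt hρpos.le, Real.sq_sqrt (Nat.cast_nonneg n)]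
    ring
  have hτsq : 9 * t ^ 6 * (ρ ^ 5 / (n:ℝ) ^ 2 + ρ ^ 3 / (n:ℝ) ^ 3)
      ≤ (3 * t ^ 3 * (ρ ^ 2 * Real.sqrt ρ / n + ρ * Real.sqrt ρ / ((n:ℝ) * Real.sqrt n))) ^ 2 := by
    have hxy : 0 ≤ (ρ ^ 2 * Real.sqrt ρ / (n:ℝ)) * (ρ * Real.sqrt ρ / ((n:ℝ) * Real.sqrt n)) := by
      positivity
    have hexp : (3 * t ^ 3 * (ρ ^ 2 * Real.sqrt ρ / n
        + ρ * Real.sqrt ρ / ((n : ℝ) * Real.sqrt n))) ^ 2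
        = 9 * t ^ 6 * ((ρ ^ 2 * Real.sqrt ρ / (n:ℝ)) ^ 2
          + 2 * ((ρ ^ 2 * Real.sqrt ρ / (n:ℝ)) * (ρ * Real.sqrt ρ / ((n:ℝ) * Real.sqrt n)))
          + (ρ * Real.sqrt ρ / ((n:ℝ) * Real.sqrt n)) ^ 2) := by ring
    rw [hexp, hx2, hy2]
    nlinarith [hxy, pow_pos ht0 6]
  have hεt6 : 256 ≤ ε * t ^ 6 := by
    have h1 : t ^ 2 ≤ t ^ 6 := pow_le_pow_right₀ ht1 (by norm_num)
    nlinarith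
  have hρ3 : (min ρ 1) ^ 3 ≤ ρ ^ 3 := pow_le_pow_left₀ hσ0 hσρ 3
  have hρ5 : (min ρ 1) ^ 5 ≤ ρ ^ 5 := pow_le_pow_left₀ hσ0 hσρ 5
  have hinv : (n.choose 3 : ℝ)⁻¹ ≤ 27 / (n:ℝ) ^ 3 := by
    rw [inv_eq_one_div, div_le_div_iff₀ hC3pos (by positivity)]
    linarith
  have hV : (n.choose 3 : ℝ)⁻¹ * ((min ρ 1) ^ 3 + 9 * n * (min ρ 1) ^ 5)
      ≤ 27 * ρ ^ 3 / (n:ℝ) ^ 3 + 243 * ρ ^ 5 / (n:ℝ) ^ 2 := by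
    have hsum0 : (0:ℝ) ≤ (min ρ 1) ^ 3 + 9 * n * (min ρ 1) ^ 5 := by positivity
    calc (n.choose 3 : ℝ)⁻¹ * ((min ρ 1) ^ 3 + 9 * n * (min ρ 1) ^ 5)
        ≤ (27 / (n:ℝ) ^ 3) * ((min ρ 1) ^ 3 + 9 * n * (min ρ 1) ^ 5) :=
          mul_le_mul_of_nonneg_right hinv hsum0
      _ = 27 * (min ρ 1) ^ 3 / (n:ℝ) ^ 3 + 243 * (min ρ 1) ^ 5 * ((n:ℝ) / (n:ℝ) ^ 3) := by
          ring
      _ = 27 * (min ρ 1) ^ 3 / (n:ℝ) ^ 3 + 243 * (min ρ 1) ^ 5 / (n:ℝ) ^ 2 := by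
          rw [show (n:ℝ) / (n:ℝ) ^ 3 = 1 / (n:ℝ) ^ 2 by field_simp]
          ring
      _ ≤ 27 * ρ ^ 3 / (n:ℝ) ^ 3 + 243 * ρ ^ 5 / (n:ℝ) ^ 2 := by gcongr
  have h1 : (0:ℝ) ≤ ρ ^ 5 / (n:ℝ) ^ 2 := by positivity
  have h2 : (0:ℝ) ≤ ρ ^ 3 / (n:ℝ) ^ 3 := by positivity
  calc (n.choose 3 : ℝ)⁻¹ * ((min ρ 1) ^ 3 + 9 * n * (min ρ 1) ^ 5)
      ≤ 27 * ρ ^ 3 / (n:ℝ) ^ 3 + 243 * ρ ^ 5 / (n:ℝ) ^ 2 := hV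
    _ ≤ 256 * (ρ ^ 5 / (n:ℝ) ^ 2 + ρ ^ 3 / (n:ℝ) ^ 3) := by
        have e1 : 27 * ρ ^ 3 / (n:ℝ) ^ 3 = 27 * (ρ ^ 3 / (n:ℝ) ^ 3) := by ring
        have e2 : 243 * ρ ^ 5 / (n:ℝ) ^ 2 = 243 * (ρ ^ 5 / (n:ℝ) ^ 2) := by ring
        linarith
    _ ≤ ε * (9 * t ^ 6 * (ρ ^ 5 / (n:ℝ) ^ 2 + ρ ^ 3 / (n:ℝ) ^ 3)) := by
        have hS : (0:ℝ) ≤ ρ ^ 5 / (n:ℝ) ^ 2 + ρ ^ 3 / (n:ℝ) ^ 3 := by positivity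
        have hm := mul_le_mul_of_nonneg_right hεt6 hS
        nlinarith [hm]
    _ ≤ ε * (3 * t ^ 3 * (ρ ^ 2 * Real.sqrt ρ / n
        + ρ * Real.sqrt ρ / ((n:ℝ) * Real.sqrt n))) ^ 2 :=
        mul_le_mul_of_nonneg_left hτsq hε.le

end GLX

open GLX

/-- **Lemma 1 (Gao–Lafferty).** For independent `Bernoulli(p_{ij})` edges with
`max p_{ij} ≤ ρ`, one has, uniformly over `n` and the edge probabilities,
`|p̂³ − p̄³| = O_P(ρ^{5/2}/n + ρ²/n² + ρ^{3/2}/n³)` and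
`|q̂ − q̄| = O_P(ρ^{5/2}/n + ρ^{3/2}/n^{3/2})`.  Here `ρ^{5/2} = ρ²√ρ`,
`ρ^{3/2} = ρ√ρ` and `n^{3/2} = n√n`. -/
theorem OP_pq_bounds :
    ∀ ε : ℝ, 0 < ε → ∃ M : ℝ,
      ∀ (n : ℕ) (p : Fin n → Fin n → ℝ) (ρ : ℝ), 0 ≤ ρ →
        (∀ i j, 0 ≤ p i j ∧ p i j ≤ 1) → (∀ i j, p i j ≤ ρ) →
        ((graphMeasure n p)
            {A | M * (ρ ^ 2 * Real.sqrt ρ / n + ρ ^ 2 / (n : ℝ) ^ 2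
                + ρ * Real.sqrt ρ / (n : ℝ) ^ 3) <
              |pHat A ^ 3 - pBar p ^ 3|}).toReal ≤ ε ∧
        ((graphMeasure n p)
            {A | M * (ρ ^ 2 * Real.sqrt ρ / n
                + ρ * Real.sqrt ρ / ((n : ℝ) * Real.sqrt n)) <
              |F3hat A - qBar p|}).toReal ≤ ε := by
  intro ε hε
  have hsε : 0 < Real.sqrt ε := Real.sqrt_pos.mpr hε
  obtain ⟨t, ht_def⟩ : ∃ t : ℝ, t = 1 + 16 / Real.sqrt ε := ⟨_, rfl⟩
  have ht1 : 1 ≤ t := by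
    rw [ht_def]
    have : 0 ≤ 16 / Real.sqrt ε := by positivity
    linarith
  have ht0 : 0 < t := by linarith
  have htε : 256 ≤ ε * t ^ 2 := by
    have h1 : 16 / Real.sqrt ε ≤ t := by
      rw [ht_def]; linarith
    have h2 : (16 / Real.sqrt ε) ^ 2 = 256 / ε := by
      rw [div_pow, Real.sq_sqrt hε.le]; norm_num
    have h3 : 256 / ε ≤ t ^ 2 := h2 ▸ pow_le_pow_left₀ (by positivity) h1 2
    calc (256 : ℝ) = ε * (256 / ε) := by field_simp
      _ ≤ ε * t ^ 2 := mul_le_mul_of_nonneg_left h3 hε.le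
  refine ⟨3 * t ^ 3, ?_⟩
  intro n p ρ hρ0 hp hρ
  have hσ0 : 0 ≤ min ρ 1 := le_min hρ0 zero_le_one
  have hσ1 : min ρ 1 ≤ 1 := min_le_right _ _
  have hσρ : min ρ 1 ≤ ρ := min_le_left _ _
  have hpσ : ∀ i j, p i j ≤ min ρ 1 := fun i j => le_min (hρ i j) (hp i j).2
  have hpB0 : 0 ≤ pBar p := pBar_nonneg hp
  have hpBρ : pBar p ≤ ρ := pBar_le hp hρ0 hρ
  constructor
  · -- part 1
    have hsub : {A : Adj n | 3 * t ^ 3 * (ρ ^ 2 * Real.sqrt ρ / n + ρ ^ 2 / (n : ℝ) ^ 2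
          + ρ * Real.sqrt ρ / (n : ℝ) ^ 3) < |pHat A ^ 3 - pBar p ^ 3|}
        ⊆ {A : Adj n | t * Real.sqrt ρ / n < |pHat A - pBar p|} := by
      intro A hA
      simp only [Set.mem_setOf_eq] at hA ⊢
      by_contra hc
      push_neg at hc
      exact absurd hA (not_lt.mpr (cube_bound hρ0 hpB0 hpBρ ht1 hc))
    have hmono := gm_mono hp hsub
    by_cases hcase : ρ = 0 ∨ n < 2
    · have hz : (n.choose 2 : ℝ)⁻¹ * min ρ 1 = 0 := by
        rcases hcase with h | h
        · rw [h]; simp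
        · rw [Nat.choose_eq_zero_of_lt h]; simp
      have hτ0 : 0 ≤ t * Real.sqrt ρ / n := by positivity
      have h0 := cheb_zero hp (fun A => pHat A - pBar p) hτ0
        ((var_pHat hp hσ0 hpσ).trans (le_of_eq hz))
      rw [h0] at hmono
      linarith
    · push_neg at hcase
      obtain ⟨hρne, hn2⟩ := hcase
      have hρpos : 0 < ρ := lt_of_le_of_ne hρ0 (Ne.symm hρne)
      have hnpos : (0:ℝ) < n := by
        have : (2:ℝ) ≤ (n:ℝ) := by exact_mod_cast hn2
        linarith
      have hτpos : 0 < t * Real.sqrt ρ / n := by positivity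
      have hch := cheb hp (fun A => pHat A - pBar p) hτpos (var_pHat hp hσ0 hpσ)
      have := key1 hε ht1 htε hρpos hn2
      linarith
  · -- part 2
    have hτ0 : 0 ≤ 3 * t ^ 3 * (ρ ^ 2 * Real.sqrt ρ / n
        + ρ * Real.sqrt ρ / ((n : ℝ) * Real.sqrt n)) := by positivity
    by_cases hcase : ρ = 0 ∨ n < 3
    · have hz : (n.choose 3 : ℝ)⁻¹ * ((min ρ 1) ^ 3 + 9 * n * (min ρ 1) ^ 5) = 0 := by
        rcases hcase with h | h
        · rw [h]; simp
        · rw [Nat.choose_eq_zero_of_lt h]; simp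
      have h0 := cheb_zero hp (fun A => F3hat A - qBar p) hτ0
        ((var_F3 hp hσ0 hσ1 hpσ).trans (le_of_eq hz))
      rw [h0]
      exact hε.le
    · push_neg at hcase
      obtain ⟨hρne, hn3⟩ := hcase
      have hρpos : 0 < ρ := lt_of_le_of_ne hρ0 (Ne.symm hρne)
      have hnpos : (0:ℝ) < n := by
        have : (3:ℝ) ≤ (n:ℝ) := by exact_mod_cast hn3
        linarith
      have hτpos : 0 < 3 * t ^ 3 * (ρ ^ 2 * Real.sqrt ρ / n
          + ρ * Real.sqrt ρ / ((n : ℝ) * Real.sqrt n)) := by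
        have h1 : 0 < ρ ^ 2 * Real.sqrt ρ / n := by positivity
        positivity
      have hch := cheb hp (fun A => F3hat A - qBar p) hτpos (var_F3 hp hσ0 hσ1 hpσ)
      have := key2 hε ht1 htε hρpos hn3
      linarith

end
end

section
/- Consider the low-rank latent variable model: ξ_{il}, (i,l) ∈ [n]×[r], i.i.d. Uniform(0,1); g_1, …, g_r : [0,1] → ℝ bounded measurable with g(ξ_i) = (g_1(ξ_{i1}), …, g_r(ξ_{ir})); given ξ, A_{ij} ~ Bernoulli(g(ξ_i)ᵀg(ξ_j)) independently for i < j, where g(ξ_i)ᵀg(ξ_j) ∈ [0,1]. Let ‖g‖_∞ = √(Σ_{l=1}^r ‖g_l‖_∞²), p̂ = (1/C(n,2)) Σ_{i<j} A_{ij}, q̂ = (1/C(n,3)) Σ_{i<j<k} A_{ij}A_{ik}A_{jk}, p̃ = (1/C(n,2)) Σ_{i<j} 𝔼[g(ξ_i)ᵀg(ξ_j)], and q̃ = (1/C(n,3)) Σ_{i<j<k} 𝔼[g(ξ_i)ᵀg(ξ_j) · g(ξ_i)ᵀg(ξ_k) · g(ξ_j)ᵀg(ξ_k)]. Then |p̂³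 − p̃³| = O_P( ‖g‖_∞⁶/√n + ‖g‖_∞⁵/n + ‖g‖_∞⁴/n² + ‖g‖_∞³/n³ ) and |q̂ − q̃| = O_P( ‖g‖_∞⁶/√n + ‖g‖_∞⁵/n + ‖g‖_∞³/n^{3/2} ), where X_n = O_P(r_n) means: for every ε > 0 there is a constant M such that ℙ(|X_n| > M r_n) ≤ ε for all n and all admissible g. -/
open MeasureTheory ProbabilityTheory Filter Finset
open scoped ENNReal NNReal

noncomputable section

/-- The law of the array of latent variables `ξ_{il}`, i.i.d. `Uniform(0,1)`. -/
def latentPi (n r : ℕ) : Measure (Fin n → Fin r → ℝ) := Measure.pi fun _ => cube r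

/-- The (marginal) law of the adjacency array in the low-rank latent variable
model. -/
def latentMeasure (n r : ℕ) (g : Fin r → ℝ → ℝ) : Measure (Adj n) :=
  (latentPi n r).bind
    (fun ξ => graphMeasure n fun i j => ∑ l : Fin r, g l (ξ i l) * g l (ξ j l))

/-- `p̃ = (1/C(n,2)) Σ_{i<j} 𝔼[g(ξ_i)ᵀ g(ξ_j)]`. -/
def pTilde (n r : ℕ) (g : Fin r → ℝ → ℝ) : ℝ :=
  ((n.choose 2 : ℝ))⁻¹ * ∑ i : Fin n, ∑ j : Fin n,
    if i < j then
      ∫ ξ, (∑ l : Fin r, g l (ξ i l) * g l (ξ j l)) ∂(latentPi n r)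
    else 0

/-- `q̃ = (1/C(n,3)) Σ_{i<j<k} 𝔼[g(ξ_i)ᵀg(ξ_j) · g(ξ_i)ᵀg(ξ_k) · g(ξ_j)ᵀg(ξ_k)]`. -/
def qTilde (n r : ℕ) (g : Fin r → ℝ → ℝ) : ℝ :=
  ((n.choose 3 : ℝ))⁻¹ * ∑ i : Fin n, ∑ j : Fin n, ∑ k : Fin n,
    if i < j ∧ j < k then
      ∫ ξ, (∑ l : Fin r, g l (ξ i l) * g l (ξ j l))
        * (∑ l : Fin r, g l (ξ i l) * g l (ξ k l))
        * (∑ l : Fin r, g l (ξ j l) * g l (ξ k l)) ∂(latentPi n r)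
    else 0
section Aux
namespace GLaux

open ENNReal

variable {n r : ℕ}

instance : IsProbabilityMeasure unif01 := by
  constructor
  simp [unif01, Real.volume_Icc]

instance : IsProbabilityMeasure (cube r) := by
  unfold cube; infer_instance

instance : IsProbabilityMeasure (latentPi n r) := by
  unfold latentPi; infer_instance

/-- `graphMeasure` lintegral of a product of edge indicators. -/
lemma lintegral_graphMeasure_prod (p : Fin n → Fin n → ℝ)
    (hp : ∀ i j, p i j ∈ Set.Icc (0:ℝ) 1) (S : Finset (Fin n × Fin n)) :
    ∫⁻ A, ∏ e ∈ S, (if A e then 1 else 0 : ℝ≥0∞) ∂(graphMeasure n p)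
      = ∏ e ∈ S, ENNReal.ofReal (p e.1 e.2) := by
  classical
  rw [graphMeasure, lintegral_finset_sum_measure]
  simp only [lintegral_smul_measure, lintegral_dirac, smul_eq_mul]
  have key : ∀ A : Adj n,
      (∏ e : Fin n × Fin n, ENNReal.ofReal (if A e then p e.1 e.2 else 1 - p e.1 e.2))
        * ∏ e ∈ S, (if A e then 1 else 0 : ℝ≥0∞)
      = ∏ e : Fin n × Fin n,
          (ENNReal.ofReal (if A e then p e.1 e.2 else 1 - p e.1 e.2)
            * (if e ∈ S then (if A e then 1 else 0 : ℝ≥0∞) else 1)) := by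
    intro A
    rw [Finset.prod_mul_distrib]
    congr 1
    rw [Finset.prod_ite_mem Finset.univ S fun e => (if A e then 1 else 0 : ℝ≥0∞),
      Finset.univ_inter]
  simp only [key]
  have hpi := Finset.prod_univ_sum (fun _ : Fin n × Fin n => (Finset.univ : Finset Bool))
    (fun e b => ENNReal.ofReal (if b then p e.1 e.2 else 1 - p e.1 e.2)
      * (if e ∈ S then (if b then 1 else 0 : ℝ≥0∞) else 1))
  rw [Fintype.piFinset_univ] at hpi
  rw [← hpi]
  have hrhs : (∏ e ∈ S, ENNReal.ofReal (p e.1 e.2))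
      = ∏ e : Fin n × Fin n, (if e ∈ S then ENNReal.ofReal (p e.1 e.2) else 1) := by
    rw [Finset.prod_ite_mem Finset.univ S fun e => ENNReal.ofReal (p e.1 e.2),
      Finset.univ_inter]
  rw [hrhs]
  refine Finset.prod_congr rfl fun e _ => ?_
  have h0 : (0:ℝ) ≤ p e.1 e.2 := (hp e.1 e.2).1
  have h1 : (0:ℝ) ≤ 1 - p e.1 e.2 := by linarith [(hp e.1 e.2).2]
  by_cases he : e ∈ S
  · simp [he, Fintype.sum_bool]
  · simp only [he, if_false, mul_one, Fintype.sum_bool, if_true]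
    rw [show (if (false = true) then p e.1 e.2 else 1 - p e.1 e.2) = 1 - p e.1 e.2 from rfl,
      ← ENNReal.ofReal_add h0 h1]
    norm_num

lemma graphMeasure_univ (p : Fin n → Fin n → ℝ)
    (hp : ∀ i j, p i j ∈ Set.Icc (0:ℝ) 1) :
    (graphMeasure n p) Set.univ = 1 := by
  have := lintegral_graphMeasure_prod p hp ∅
  simpa using this


/-- Edge probability function. -/
def P (g : Fin r → ℝ → ℝ) (ξ : Fin n → Fin r → ℝ) (e : Fin n × Fin n) : ℝ :=
  ∑ l, g l (ξ e.1 l) * g l (ξ e.2 l)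

/-- Edge indicator. -/
def ev (A : Adj n) (e : Fin n × Fin n) : ℝ := if A e then 1 else 0

lemma ev_eq_eV (A : Adj n) (i j : Fin n) : ev A (i, j) = eV A i j := rfl

lemma ev_01 (A : Adj n) (e : Fin n × Fin n) : ev A e = 0 ∨ ev A e = 1 := by
  unfold ev; split_ifs <;> simp

lemma measurable_P (g : Fin r → ℝ → ℝ) (hg : ∀ l, Measurable (g l)) (e : Fin n × Fin n) :
    Measurable fun ξ : Fin n → Fin r → ℝ => P g ξ e := by
  apply Finset.measurable_sum
  intro l _
  exact (((hg l).comp ((measurable_pi_apply l).comp (measurable_pi_apply e.1)))).mul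
    (((hg l).comp ((measurable_pi_apply l).comp (measurable_pi_apply e.2))))

lemma ae_box : ∀ᵐ ξ ∂(latentPi n r), ∀ i l, ξ i l ∈ Set.Icc (0:ℝ) 1 := by
  set Box : Set (Fin n → Fin r → ℝ) :=
    Set.univ.pi fun _ => Set.univ.pi fun _ => Set.Icc (0:ℝ) 1 with hBox
  have hmeas : MeasurableSet Box :=
    MeasurableSet.univ_pi fun _ => MeasurableSet.univ_pi fun _ => measurableSet_Icc
  have h1 : (latentPi n r) Box = 1 := by
    rw [hBox, latentPi, Measure.pi_pi]
    have hone : (cube r) (Set.univ.pi fun _ : Fin r => Set.Icc (0:ℝ) 1) = 1 := by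
      rw [cube, Measure.pi_pi]
      have hu : unif01 (Set.Icc (0:ℝ) 1) = 1 := by
        rw [unif01, Measure.restrict_apply measurableSet_Icc]
        simp [Real.volume_Icc]
      rw [Finset.prod_congr rfl fun l _ => hu, Finset.prod_const, one_pow]
    rw [Finset.prod_congr rfl fun i _ => hone, Finset.prod_const, one_pow]
  have hc : (latentPi n r) Boxᶜ = 0 := by
    rw [measure_compl hmeas (measure_ne_top _ _), h1, measure_univ]
    simp
  rw [MeasureTheory.ae_iff]
  refine measure_mono_null ?_ hc
  intro ξ hξ
  simp only [Set.mem_compl_iff, hBox]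
  intro hmem
  rw [Set.mem_pi] at hmem
  exact hξ fun i l => (Set.mem_pi.mp (hmem i (Set.mem_univ i))) l (Set.mem_univ l)

lemma measurable_kernel (g : Fin r → ℝ → ℝ) (hg : ∀ l, Measurable (g l)) :
    Measurable fun ξ : Fin n → Fin r → ℝ =>
      graphMeasure n (fun i j => ∑ l, g l (ξ i l) * g l (ξ j l)) := by
  apply Measure.measurable_of_measurable_coe
  intro s hs
  simp only [graphMeasure, Measure.coe_finset_sum, Finset.sum_apply, Measure.smul_apply,
    smul_eq_mul]
  apply Finset.measurable_sum
  intro A _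
  apply Measurable.mul _ measurable_const
  apply Finset.measurable_prod
  intro e _
  apply ENNReal.measurable_ofReal.comp
  by_cases hb : A e = true
  · simp only [if_pos hb]
    exact measurable_P g hg e
  · simp only [if_neg hb]
    exact measurable_const.sub (measurable_P g hg e)

lemma measurable_adj (f : Adj n → ℝ≥0∞) : Measurable f :=
  measurable_of_countable f

lemma lintegral_latent (g : Fin r → ℝ → ℝ) (hg : ∀ l, Measurable (g l))
    (hP01 : ∀ x y : Fin r → ℝ, (∀ l, x l ∈ Set.Icc (0 : ℝ) 1) →
      (∀ l, y l ∈ Set.Icc (0 : ℝ) 1) →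
      0 ≤ ∑ l : Fin r, g l (x l) * g l (y l) ∧
        ∑ l : Fin r, g l (x l) * g l (y l) ≤ 1)
    (S : Finset (Fin n × Fin n)) :
    ∫⁻ A, ∏ e ∈ S, (if A e then 1 else 0 : ℝ≥0∞) ∂(latentMeasure n r g)
      = ∫⁻ ξ, ∏ e ∈ S, ENNReal.ofReal (P g ξ e) ∂(latentPi n r) := by
  rw [latentMeasure, Measure.lintegral_bind (measurable_kernel g hg).aemeasurable (measurable_adj _).aemeasurable]
  apply lintegral_congr_ae
  filter_upwards [ae_box] with ξ hξ
  have hp : ∀ i j : Fin n, (∑ l, g l (ξ i l) * g l (ξ j l)) ∈ Set.Icc (0:ℝ) 1 := by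
    intro i j
    have := hP01 (ξ i) (ξ j) (fun l => hξ i l) (fun l => hξ j l)
    exact ⟨this.1, this.2⟩
  rw [lintegral_graphMeasure_prod _ hp S]
  rfl

lemma latent_isProb (g : Fin r → ℝ → ℝ) (hg : ∀ l, Measurable (g l))
    (hP01 : ∀ x y : Fin r → ℝ, (∀ l, x l ∈ Set.Icc (0 : ℝ) 1) →
      (∀ l, y l ∈ Set.Icc (0 : ℝ) 1) →
      0 ≤ ∑ l : Fin r, g l (x l) * g l (y l) ∧
        ∑ l : Fin r, g l (x l) * g l (y l) ≤ 1) :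
    IsProbabilityMeasure (latentMeasure n r g) := by
  constructor
  have h := lintegral_latent g hg hP01 (∅ : Finset (Fin n × Fin n))
  simp only [Finset.prod_empty, lintegral_one] at h
  rw [h, measure_univ]

section WithG

variable (g : Fin r → ℝ → ℝ) (B : Fin r → ℝ)

/-- shorthand for the integral of a monomial in the `P`'s -/
def mom (n : ℕ) (g : Fin r → ℝ → ℝ) (S : Finset (Fin n × Fin n)) : ℝ :=
  ∫ ξ, ∏ e ∈ S, P g ξ e ∂(latentPi n r)

variable {g B}

lemma P_abs_le (hB : ∀ l, ∀ x ∈ Set.Icc (0:ℝ) 1, |g l x| ≤ B l)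
    {ξ : Fin n → Fin r → ℝ} (hξ : ∀ i l, ξ i l ∈ Set.Icc (0:ℝ) 1)
    (e : Fin n × Fin n) : |P g ξ e| ≤ ∑ l, B l ^ 2 := by
  refine (Finset.abs_sum_le_sum_abs _ _).trans ?_
  apply Finset.sum_le_sum
  intro l _
  rw [abs_mul, sq]
  have h1 := hB l _ (hξ e.1 l)
  have h2 := hB l _ (hξ e.2 l)
  exact mul_le_mul h1 h2 (abs_nonneg _) ((abs_nonneg _).trans h1)

section hyps

variable (hg : ∀ l, Measurable (g l))
  (hB : ∀ l, ∀ x ∈ Set.Icc (0:ℝ) 1, |g l x| ≤ B l)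
  (hP01 : ∀ x y : Fin r → ℝ, (∀ l, x l ∈ Set.Icc (0 : ℝ) 1) →
      (∀ l, y l ∈ Set.Icc (0 : ℝ) 1) →
      0 ≤ ∑ l : Fin r, g l (x l) * g l (y l) ∧
        ∑ l : Fin r, g l (x l) * g l (y l) ≤ 1)

include hP01 in
lemma P_mem {ξ : Fin n → Fin r → ℝ} (hξ : ∀ i l, ξ i l ∈ Set.Icc (0:ℝ) 1)
    (e : Fin n × Fin n) : 0 ≤ P g ξ e ∧ P g ξ e ≤ 1 :=
  hP01 (ξ e.1) (ξ e.2) (fun l => hξ e.1 l) (fun l => hξ e.2 l)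

include hg hB hP01 in
lemma integrable_prodP (S : Finset (Fin n × Fin n)) :
    Integrable (fun ξ => ∏ e ∈ S, P g ξ e) (latentPi n r) := by
  have hmeas : Measurable fun ξ : Fin n → Fin r → ℝ => ∏ e ∈ S, P g ξ e :=
    Finset.measurable_prod _ fun e _ => measurable_P g hg e
  refine (integrable_const ((∑ l, B l ^ 2) ^ S.card)).mono' hmeas.aestronglyMeasurable ?_
  filter_upwards [ae_box] with ξ hξ
  rw [Real.norm_eq_abs, Finset.abs_prod]
  calc ∏ e ∈ S, |P g ξ e| ≤ ∏ e ∈ S, (∑ l, B l ^ 2) :=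
        Finset.prod_le_prod (fun e _ => abs_nonneg _) (fun e _ => P_abs_le hB hξ e)
    _ = (∑ l, B l ^ 2) ^ S.card := Finset.prod_const _

include hP01 in
lemma mom_nonneg (S : Finset (Fin n × Fin n)) : 0 ≤ mom n g S := by
  apply integral_nonneg_of_ae
  filter_upwards [ae_box] with ξ hξ
  exact Finset.prod_nonneg fun e _ => (P_mem hP01 hξ e).1

include hg hB hP01 in
lemma mom_le (S : Finset (Fin n × Fin n)) : mom n g S ≤ (∑ l, B l ^ 2) ^ S.card := by
  rw [mom]
  have : ((∑ l, B l ^ 2) ^ S.card : ℝ)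
      = ∫ _ξ, ((∑ l, B l ^ 2) ^ S.card : ℝ) ∂(latentPi n r) := by
    rw [integral_const]; simp
  rw [this]
  apply integral_mono_ae (integrable_prodP hg hB hP01 S) (integrable_const _)
  filter_upwards [ae_box] with ξ hξ
  calc ∏ e ∈ S, P g ξ e ≤ ∏ e ∈ S, (∑ l, B l ^ 2) :=
        Finset.prod_le_prod (fun e _ => (P_mem hP01 hξ e).1)
          (fun e _ => (abs_le.mp (P_abs_le hB hξ e)).2)
    _ = (∑ l, B l ^ 2) ^ S.card := Finset.prod_const _

include hg hB hP01 in
lemma moment_eq (S : Finset (Fin n × Fin n)) :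
    ∫ A, ∏ e ∈ S, ev A e ∂(latentMeasure n r g) = mom n g S := by
  have hnn : ∀ A : Adj n, 0 ≤ ∏ e ∈ S, ev A e := fun A =>
    Finset.prod_nonneg fun e _ => by rcases ev_01 A e with h | h <;> rw [h] <;> norm_num
  have h1 : ∫ A, ∏ e ∈ S, ev A e ∂(latentMeasure n r g)
      = (∫⁻ A, ENNReal.ofReal (∏ e ∈ S, ev A e) ∂(latentMeasure n r g)).toReal := by
    apply integral_eq_lintegral_of_nonneg_ae
    · exact Filter.Eventually.of_forall hnn
    · exact (measurable_of_countable _).aestronglyMeasurable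
  have h2 : ∀ A : Adj n, ENNReal.ofReal (∏ e ∈ S, ev A e)
      = ∏ e ∈ S, (if A e then 1 else 0 : ℝ≥0∞) := by
    intro A
    rw [ENNReal.ofReal_prod_of_nonneg fun e _ => by
      rcases ev_01 A e with h | h <;> rw [h] <;> norm_num]
    refine Finset.prod_congr rfl fun e _ => ?_
    unfold ev
    split_ifs <;> simp
  have h3 : ∫ ξ, ∏ e ∈ S, P g ξ e ∂(latentPi n r)
      = (∫⁻ ξ, ∏ e ∈ S, ENNReal.ofReal (P g ξ e) ∂(latentPi n r)).toReal := by
    rw [integral_eq_lintegral_of_nonneg_ae]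
    · congr 1
      apply lintegral_congr_ae
      filter_upwards [ae_box] with ξ hξ
      exact ENNReal.ofReal_prod_of_nonneg fun e _ => (P_mem hP01 hξ e).1
    · filter_upwards [ae_box] with ξ hξ
      exact Finset.prod_nonneg fun e _ => (P_mem hP01 hξ e).1
    · exact (Finset.measurable_prod _ fun e _ => measurable_P g hg e).aestronglyMeasurable
  rw [h1, mom, h3]
  congr 1
  simp only [h2]
  exact lintegral_latent g hg hP01 S

end hyps
end WithG

section Indep

lemma integral_indep (q : Fin n → Prop) [DecidablePred q]
    (f h : (Fin n → Fin r → ℝ) → ℝ) (hf : Measurable f) (hh : Measurable h)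
    (hfq : ∀ ξ η, (∀ i, q i → ξ i = η i) → f ξ = f η)
    (hhq : ∀ ξ η, (∀ i, ¬ q i → ξ i = η i) → h ξ = h η) :
    ∫ ξ, f ξ * h ξ ∂(latentPi n r)
      = (∫ ξ, f ξ ∂(latentPi n r)) * ∫ ξ, h ξ ∂(latentPi n r) := by
  classical
  set E := MeasurableEquiv.piEquivPiSubtypeProd (fun _ : Fin n => Fin r → ℝ) q with hE
  have mp := measurePreserving_piEquivPiSubtypeProd (fun _ : Fin n => cube r) q
  set ν := ((Measure.pi fun _ : Subtype q => cube r).prod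
      (Measure.pi fun _ : {i // ¬ q i} => cube r)) with hν
  have h0 : ∀ F : (Fin n → Fin r → ℝ) → ℝ,
      ∫ ξ, F ξ ∂(latentPi n r) = ∫ z, F (E.symm z) ∂ν := by
    intro F
    rw [latentPi]
    exact ((MeasurePreserving.symm E mp).integral_comp E.symm.measurableEmbedding F).symm
  set f1 : (∀ _ : Subtype q, Fin r → ℝ) → ℝ :=
    fun x => f (E.symm (x, fun _ => 0)) with hf1
  set h1 : (∀ _ : {i // ¬ q i}, Fin r → ℝ) → ℝ :=
    fun y => h (E.symm (fun _ => 0, y)) with hh1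
  have key1 : ∀ z, f (E.symm z) = f1 z.1 := by
    intro z
    apply hfq
    intro i hi
    simp [hE, MeasurableEquiv.piEquivPiSubtypeProd_symm_apply, dif_pos hi]
  have key2 : ∀ z, h (E.symm z) = h1 z.2 := by
    intro z
    apply hhq
    intro i hi
    simp [hE, MeasurableEquiv.piEquivPiSubtypeProd_symm_apply, dif_neg hi]
  rw [h0 (fun ξ => f ξ * h ξ), h0 f, h0 h]
  calc ∫ z, f (E.symm z) * h (E.symm z) ∂ν
      = ∫ z : _ × _, f1 z.1 * h1 z.2 ∂ν := by
        refine integral_congr_ae (Filter.Eventually.of_forall fun z => ?_)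
        dsimp only
        rw [key1 z, key2 z]
    _ = (∫ x, f1 x ∂_) * ∫ y, h1 y ∂_ := integral_prod_mul f1 h1
    _ = (∫ z, f (E.symm z) ∂ν) * ∫ z, h (E.symm z) ∂ν := by
        congr 1
        · rw [show (fun z : _ × _ => f (E.symm z)) = fun z : _ × _ => f1 z.1 * (1:ℝ) from
            funext fun z => by rw [key1 z, mul_one], integral_prod_mul f1 (fun _ => (1:ℝ))]
          simp
        · rw [show (fun z : _ × _ => h (E.symm z)) = fun z : _ × _ => (1:ℝ) * h1 z.2 from
            funext fun z => by rw [key2 z, one_mul], integral_prod_mul (fun _ => (1:ℝ)) h1]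
          simp

/-- The vertex set of a set of edges. -/
def VS (S : Finset (Fin n × Fin n)) : Finset (Fin n) :=
  S.image Prod.fst ∪ S.image Prod.snd

lemma fst_mem_VS {S : Finset (Fin n × Fin n)} {e : Fin n × Fin n} (he : e ∈ S) :
    e.1 ∈ VS S := Finset.mem_union_left _ (Finset.mem_image.mpr ⟨e, he, rfl⟩)

lemma snd_mem_VS {S : Finset (Fin n × Fin n)} {e : Fin n × Fin n} (he : e ∈ S) :
    e.2 ∈ VS S := Finset.mem_union_right _ (Finset.mem_image.mpr ⟨e, he, rfl⟩)

lemma prodP_depends (g : Fin r → ℝ → ℝ) (S : Finset (Fin n × Fin n))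
    (ξ η : Fin n → Fin r → ℝ) (hagree : ∀ i ∈ VS S, ξ i = η i) :
    ∏ e ∈ S, P g ξ e = ∏ e ∈ S, P g η e := by
  refine Finset.prod_congr rfl fun e he => ?_
  unfold P
  rw [hagree e.1 (fst_mem_VS he), hagree e.2 (snd_mem_VS he)]

lemma mom_union_eq_mul (g : Fin r → ℝ → ℝ) (hg : ∀ l, Measurable (g l))
    (S T : Finset (Fin n × Fin n)) (hdisj : Disjoint (VS S) (VS T)) :
    mom n g (S ∪ T) = mom n g S * mom n g T := by
  classical
  have hST : Disjoint S T := by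
    rw [Finset.disjoint_left]
    intro e heS heT
    exact (Finset.disjoint_left.mp hdisj) (fst_mem_VS heS) (fst_mem_VS heT)
  have hsplit : ∀ ξ, ∏ e ∈ S ∪ T, P g ξ e = (∏ e ∈ S, P g ξ e) * ∏ e ∈ T, P g ξ e :=
    fun ξ => Finset.prod_union hST
  rw [mom, mom, mom]
  rw [integral_congr_ae (Filter.Eventually.of_forall hsplit)]
  apply integral_indep (fun i => i ∈ VS S)
  · exact Finset.measurable_prod _ fun e _ => measurable_P g hg e
  · exact Finset.measurable_prod _ fun e _ => measurable_P g hg e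
  · intro ξ η hagree
    exact prodP_depends g S ξ η fun i hi => hagree i hi
  · intro ξ η hagree
    exact prodP_depends g T ξ η fun i hi =>
      hagree i (Finset.disjoint_right.mp hdisj hi)

end Indep

section SecondMoment

lemma ev_prod_mul (A : Adj n) (S T : Finset (Fin n × Fin n)) :
    (∏ e ∈ S, ev A e) * (∏ e ∈ T, ev A e) = ∏ e ∈ S ∪ T, ev A e := by
  classical
  by_cases hz : ∀ e ∈ S ∩ T, ev A e = 1
  · rw [← Finset.prod_union_inter, Finset.prod_eq_one hz, mul_one]
  · push_neg at hz
    obtain ⟨e, he, hne⟩ := hz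
    have h0 : ev A e = 0 := (ev_01 A e).resolve_right hne
    rw [Finset.prod_eq_zero (Finset.mem_inter.mp he).1 h0, zero_mul,
      Finset.prod_eq_zero (Finset.mem_union_left _ (Finset.mem_inter.mp he).1) h0]

variable {ι : Type*} [DecidableEq ι]

lemma second_moment (g : Fin r → ℝ → ℝ) (B : Fin r → ℝ) (hg : ∀ l, Measurable (g l))
    (hP01 : ∀ x y : Fin r → ℝ, (∀ l, x l ∈ Set.Icc (0 : ℝ) 1) →
      (∀ l, y l ∈ Set.Icc (0 : ℝ) 1) →
      0 ≤ ∑ l : Fin r, g l (x l) * g l (y l) ∧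
        ∑ l : Fin r, g l (x l) * g l (y l) ≤ 1)
    (hB : ∀ l, ∀ x ∈ Set.Icc (0:ℝ) 1, |g l x| ≤ B l)
    (T : Finset ι) (Ed : ι → Finset (Fin n × Fin n)) (c : ℝ) :
    ∫ A, (c * ∑ t ∈ T, ((∏ e ∈ Ed t, ev A e) - mom n g (Ed t))) ^ 2
        ∂(latentMeasure n r g)
      = c ^ 2 * ∑ t ∈ T, ∑ u ∈ T,
          (mom n g (Ed t ∪ Ed u) - mom n g (Ed t) * mom n g (Ed u)) := by
  classical
  haveI := latent_isProb (n := n) g hg hP01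
  have expand : ∀ A : Adj n,
      (c * ∑ t ∈ T, ((∏ e ∈ Ed t, ev A e) - mom n g (Ed t))) ^ 2
      = c ^ 2 * ∑ t ∈ T, ∑ u ∈ T,
          ((∏ e ∈ Ed t ∪ Ed u, ev A e)
            - mom n g (Ed t) * (∏ e ∈ Ed u, ev A e)
            - mom n g (Ed u) * (∏ e ∈ Ed t, ev A e)
            + mom n g (Ed t) * mom n g (Ed u)) := by
    intro A
    rw [mul_pow]
    congr 1
    rw [sq, Finset.sum_mul_sum]
    refine Finset.sum_congr rfl fun t _ => Finset.sum_congr rfl fun u _ => ?_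
    rw [← ev_prod_mul]
    ring
  rw [integral_congr_ae (Filter.Eventually.of_forall expand), integral_const_mul]
  congr 1
  rw [integral_finset_sum _ (fun t _ => Integrable.of_finite)]
  refine Finset.sum_congr rfl fun t _ => ?_
  rw [integral_finset_sum _ (fun u _ => Integrable.of_finite)]
  refine Finset.sum_congr rfl fun u _ => ?_
  rw [integral_add (by exact Integrable.of_finite) (by exact Integrable.of_finite),
    integral_sub (by exact Integrable.of_finite) (by exact Integrable.of_finite),
    integral_sub (by exact Integrable.of_finite) (by exact Integrable.of_finite),
    integral_const_mul, integral_const_mul, integral_const,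
    moment_eq hg hB hP01, moment_eq hg hB hP01, moment_eq hg hB hP01,
    probReal_univ]
  simp only [ENNReal.toReal_one, one_smul]
  ring

end SecondMoment

section Stats

def pairsF (n : ℕ) : Finset (Fin n × Fin n) := Finset.univ.filter fun e => e.1 < e.2

def triplesF (n : ℕ) : Finset (Fin n × Fin n × Fin n) :=
  Finset.univ.filter fun t => t.1 < t.2.1 ∧ t.2.1 < t.2.2

def Et (t : Fin n × Fin n × Fin n) : Finset (Fin n × Fin n) :=
  {(t.1, t.2.1), (t.2.1, t.2.2), (t.1, t.2.2)}

def Vt (t : Fin n × Fin n × Fin n) : Finset (Fin n) := {t.1, t.2.1, t.2.2}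

def Ve (e : Fin n × Fin n) : Finset (Fin n) := {e.1, e.2}

lemma mem_pairsF {e : Fin n × Fin n} : e ∈ pairsF n ↔ e.1 < e.2 := by
  simp [pairsF]

lemma mem_triplesF {t : Fin n × Fin n × Fin n} :
    t ∈ triplesF n ↔ t.1 < t.2.1 ∧ t.2.1 < t.2.2 := by
  simp [triplesF]

lemma Et_prod_ev (A : Adj n) {i j k : Fin n} (h1 : i < j) (h2 : j < k) :
    ∏ e ∈ Et (i, j, k), ev A e = eV A i j * eV A j k * eV A i k := by
  have d1 : ((i, j) : Fin n × Fin n) ≠ (j, k) := fun h => absurd (congrArg Prod.fst h) h1.ne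
  have d2 : ((i, j) : Fin n × Fin n) ≠ (i, k) := fun h => absurd (congrArg Prod.snd h) h2.ne
  have d3 : ((j, k) : Fin n × Fin n) ≠ (i, k) := fun h => absurd (congrArg Prod.fst h) h1.ne'
  rw [Et]
  rw [Finset.prod_insert (by simp [d1, d2]), Finset.prod_pair d3, ← mul_assoc]
  rfl

lemma Et_prod_P (g : Fin r → ℝ → ℝ) (ξ : Fin n → Fin r → ℝ) {i j k : Fin n}
    (h1 : i < j) (h2 : j < k) :
    ∏ e ∈ Et (i, j, k), P g ξ e
      = (∑ l, g l (ξ i l) * g l (ξ j l)) * (∑ l, g l (ξ i l) * g l (ξ k l))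
        * (∑ l, g l (ξ j l) * g l (ξ k l)) := by
  have d1 : ((i, j) : Fin n × Fin n) ≠ (j, k) := fun h => absurd (congrArg Prod.fst h) h1.ne
  have d2 : ((i, j) : Fin n × Fin n) ≠ (i, k) := fun h => absurd (congrArg Prod.snd h) h2.ne
  have d3 : ((j, k) : Fin n × Fin n) ≠ (i, k) := fun h => absurd (congrArg Prod.fst h) h1.ne'
  rw [Et, Finset.prod_insert (by simp [d1, d2]), Finset.prod_pair d3]
  show P g ξ (i, j) * (P g ξ (j, k) * P g ξ (i, k)) = _
  unfold P
  ring

lemma pHat_sum (A : Adj n) :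
    pHat A = ((n.choose 2 : ℝ))⁻¹ * ∑ e ∈ pairsF n, ∏ e' ∈ ({e} : Finset (Fin n × Fin n)), ev A e' := by
  rw [pHat]
  congr 1
  rw [pairsF, Finset.sum_filter, Fintype.sum_prod_type]
  refine Finset.sum_congr rfl fun i _ => Finset.sum_congr rfl fun j _ => ?_
  rw [Finset.prod_singleton]
  rfl

lemma pTilde_sum (g : Fin r → ℝ → ℝ) :
    pTilde n r g = ((n.choose 2 : ℝ))⁻¹ * ∑ e ∈ pairsF n, mom n g {e} := by
  rw [pTilde]
  congr 1
  rw [pairsF, Finset.sum_filter, Fintype.sum_prod_type]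
  refine Finset.sum_congr rfl fun i _ => Finset.sum_congr rfl fun j _ => ?_
  rw [mom]
  congr 1
  · refine integral_congr_ae (Filter.Eventually.of_forall fun ξ => ?_)
    dsimp only
    rw [Finset.prod_singleton]
    rfl

lemma F3hat_sum (A : Adj n) :
    F3hat A = ((n.choose 3 : ℝ))⁻¹ * ∑ t ∈ triplesF n, ∏ e ∈ Et t, ev A e := by
  rw [F3hat]
  congr 1
  rw [triplesF, Finset.sum_filter, Fintype.sum_prod_type]
  refine Finset.sum_congr rfl fun i _ => ?_
  rw [Fintype.sum_prod_type]
  refine Finset.sum_congr rfl fun j _ => Finset.sum_congr rfl fun k _ => ?_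
  by_cases h : i < j ∧ j < k
  · rw [if_pos h, if_pos h, Et_prod_ev A h.1 h.2]
  · rw [if_neg h, if_neg h]

lemma qTilde_sum (g : Fin r → ℝ → ℝ) :
    qTilde n r g = ((n.choose 3 : ℝ))⁻¹ * ∑ t ∈ triplesF n, mom n g (Et t) := by
  rw [qTilde]
  congr 1
  rw [triplesF, Finset.sum_filter, Fintype.sum_prod_type]
  refine Finset.sum_congr rfl fun i _ => ?_
  rw [Fintype.sum_prod_type]
  refine Finset.sum_congr rfl fun j _ => Finset.sum_congr rfl fun k _ => ?_
  by_cases h : i < j ∧ j < k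
  · rw [if_pos h, if_pos h, mom]
    refine integral_congr_ae (Filter.Eventually.of_forall fun ξ => ?_)
    dsimp only
    rw [Et_prod_P g ξ h.1 h.2]
  · rw [if_neg h, if_neg h]

variable {g : Fin r → ℝ → ℝ} {B : Fin r → ℝ}

lemma var_p_eq (hg : ∀ l, Measurable (g l))
    (hB : ∀ l, ∀ x ∈ Set.Icc (0:ℝ) 1, |g l x| ≤ B l)
    (hP01 : ∀ x y : Fin r → ℝ, (∀ l, x l ∈ Set.Icc (0 : ℝ) 1) →
      (∀ l, y l ∈ Set.Icc (0 : ℝ) 1) →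
      0 ≤ ∑ l : Fin r, g l (x l) * g l (y l) ∧
        ∑ l : Fin r, g l (x l) * g l (y l) ≤ 1) :
    ∫ A, (pHat A - pTilde n r g) ^ 2 ∂(latentMeasure n r g)
      = (((n.choose 2 : ℝ))⁻¹) ^ 2 * ∑ e ∈ pairsF n, ∑ f ∈ pairsF n,
          (mom n g ({e} ∪ {f}) - mom n g {e} * mom n g {f}) := by
  have hpt : ∀ A : Adj n, pHat A - pTilde n r g
      = ((n.choose 2 : ℝ))⁻¹ * ∑ e ∈ pairsF n,
          ((∏ e' ∈ ({e} : Finset (Fin n × Fin n)), ev A e') - mom n g {e}) := by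
    intro A
    rw [pHat_sum A, pTilde_sum g, ← mul_sub, ← Finset.sum_sub_distrib]
  calc ∫ A, (pHat A - pTilde n r g) ^ 2 ∂(latentMeasure n r g)
      = ∫ A, (((n.choose 2 : ℝ))⁻¹ * ∑ e ∈ pairsF n,
          ((∏ e' ∈ ({e} : Finset (Fin n × Fin n)), ev A e') - mom n g {e})) ^ 2
          ∂(latentMeasure n r g) := by
        refine integral_congr_ae (Filter.Eventually.of_forall fun A => ?_)
        dsimp only
        rw [hpt A]
    _ = _ := second_moment g B hg hP01 hB (pairsF n) (fun e => {e}) _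

lemma var_q_eq (hg : ∀ l, Measurable (g l))
    (hB : ∀ l, ∀ x ∈ Set.Icc (0:ℝ) 1, |g l x| ≤ B l)
    (hP01 : ∀ x y : Fin r → ℝ, (∀ l, x l ∈ Set.Icc (0 : ℝ) 1) →
      (∀ l, y l ∈ Set.Icc (0 : ℝ) 1) →
      0 ≤ ∑ l : Fin r, g l (x l) * g l (y l) ∧
        ∑ l : Fin r, g l (x l) * g l (y l) ≤ 1) :
    ∫ A, (F3hat A - qTilde n r g) ^ 2 ∂(latentMeasure n r g)
      = (((n.choose 3 : ℝ))⁻¹) ^ 2 * ∑ t ∈ triplesF n, ∑ u ∈ triplesF n,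
          (mom n g (Et t ∪ Et u) - mom n g (Et t) * mom n g (Et u)) := by
  have hpt : ∀ A : Adj n, F3hat A - qTilde n r g
      = ((n.choose 3 : ℝ))⁻¹ * ∑ t ∈ triplesF n,
          ((∏ e ∈ Et t, ev A e) - mom n g (Et t)) := by
    intro A
    rw [F3hat_sum A, qTilde_sum g, ← mul_sub, ← Finset.sum_sub_distrib]
  calc ∫ A, (F3hat A - qTilde n r g) ^ 2 ∂(latentMeasure n r g)
      = ∫ A, (((n.choose 3 : ℝ))⁻¹ * ∑ t ∈ triplesF n,
          ((∏ e ∈ Et t, ev A e) - mom n g (Et t))) ^ 2 ∂(latentMeasure n r g) := by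
        refine integral_congr_ae (Filter.Eventually.of_forall fun A => ?_)
        dsimp only
        rw [hpt A]
    _ = _ := second_moment g B hg hP01 hB (triplesF n) Et _

end Stats

section Combi

lemma mem_Vt {t : Fin n × Fin n × Fin n} {x : Fin n} :
    x ∈ Vt t ↔ x = t.1 ∨ x = t.2.1 ∨ x = t.2.2 := by
  simp [Vt]

lemma mem_Ve {e : Fin n × Fin n} {x : Fin n} : x ∈ Ve e ↔ x = e.1 ∨ x = e.2 := by
  simp [Ve]

lemma mem_Et {t : Fin n × Fin n × Fin n} {e : Fin n × Fin n} :
    e ∈ Et t ↔ e = (t.1, t.2.1) ∨ e = (t.2.1, t.2.2) ∨ e = (t.1, t.2.2) := by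
  simp [Et]

lemma VS_single (e : Fin n × Fin n) : VS ({e} : Finset (Fin n × Fin n)) = Ve e := by
  simp [VS, Ve]

lemma VS_Et_subset (t : Fin n × Fin n × Fin n) : VS (Et t) ⊆ Vt t := by
  intro x hx
  rcases Finset.mem_union.mp hx with hx | hx <;>
  · obtain ⟨e, he, rfl⟩ := Finset.mem_image.mp hx
    rcases mem_Et.mp he with rfl | rfl | rfl <;> simp [mem_Vt]

lemma Et_mem_Vt {t : Fin n × Fin n × Fin n} {e : Fin n × Fin n} (he : e ∈ Et t) :
    e.1 ∈ Vt t ∧ e.2 ∈ Vt t := by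
  rcases mem_Et.mp he with rfl | rfl | rfl <;> simp [mem_Vt]

lemma Ve_subset_Vt {t : Fin n × Fin n × Fin n} {e : Fin n × Fin n} (he : e ∈ Et t) :
    Ve e ⊆ Vt t := by
  intro x hx
  rcases mem_Ve.mp hx with rfl | rfl
  exacts [(Et_mem_Vt he).1, (Et_mem_Vt he).2]

lemma Et_lt {t : Fin n × Fin n × Fin n} (ht : t ∈ triplesF n) {e : Fin n × Fin n}
    (he : e ∈ Et t) : e.1 < e.2 := by
  obtain ⟨h1, h2⟩ := mem_triplesF.mp ht
  rcases mem_Et.mp he with rfl | rfl | rfl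
  exacts [h1, h2, h1.trans h2]

lemma card_Vt {t : Fin n × Fin n × Fin n} (ht : t ∈ triplesF n) : (Vt t).card = 3 := by
  obtain ⟨h1, h2⟩ := mem_triplesF.mp ht
  rw [Vt, Finset.card_insert_of_notMem (by simp [h1.ne, (h1.trans h2).ne]),
    Finset.card_insert_of_notMem (by simp [h2.ne])]
  rfl

lemma card_Et {t : Fin n × Fin n × Fin n} (ht : t ∈ triplesF n) : (Et t).card = 3 := by
  obtain ⟨h1, h2⟩ := mem_triplesF.mp ht
  have d1 : (t.1, t.2.1) ≠ (t.2.1, t.2.2) := fun h => absurd (congrArg Prod.fst h) h1.ne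
  have d2 : (t.1, t.2.1) ≠ (t.1, t.2.2) := fun h => absurd (congrArg Prod.snd h) h2.ne
  have d3 : (t.2.1, t.2.2) ≠ (t.1, t.2.2) := fun h => absurd (congrArg Prod.fst h) h1.ne'
  rw [Et, Finset.card_insert_of_notMem (by simp [d1, d2]),
    Finset.card_insert_of_notMem (by simp [d3])]
  rfl

/-- a sorted triple is determined by its vertex set -/
lemma Vt_inj {t u : Fin n × Fin n × Fin n} (ht : t ∈ triplesF n) (hu : u ∈ triplesF n)
    (h : Vt t = Vt u) : t = u := by
  obtain ⟨h1, h2⟩ := mem_triplesF.mp ht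
  obtain ⟨h1', h2'⟩ := mem_triplesF.mp hu
  have hmin : ∀ x ∈ Vt t, t.1 ≤ x := by
    intro x hx
    rcases mem_Vt.mp hx with rfl | rfl | rfl
    exacts [le_refl _, h1.le, (h1.trans h2).le]
  have hmin' : ∀ x ∈ Vt u, u.1 ≤ x := by
    intro x hx
    rcases mem_Vt.mp hx with rfl | rfl | rfl
    exacts [le_refl _, h1'.le, (h1'.trans h2').le]
  have hmax : ∀ x ∈ Vt t, x ≤ t.2.2 := by
    intro x hx
    rcases mem_Vt.mp hx with rfl | rfl | rfl
    exacts [(h1.trans h2).le, h2.le, le_refl _]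
  have hmax' : ∀ x ∈ Vt u, x ≤ u.2.2 := by
    intro x hx
    rcases mem_Vt.mp hx with rfl | rfl | rfl
    exacts [(h1'.trans h2').le, h2'.le, le_refl _]
  have ht1 : t.1 ∈ Vt t := by simp [mem_Vt]
  have hu1 : u.1 ∈ Vt u := by simp [mem_Vt]
  have ht3 : t.2.2 ∈ Vt t := by simp [mem_Vt]
  have hu3 : u.2.2 ∈ Vt u := by simp [mem_Vt]
  have e1 : t.1 = u.1 :=
    le_antisymm (hmin _ (h ▸ hu1)) (hmin' _ (h.symm ▸ ht1))
  have e3 : t.2.2 = u.2.2 :=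
    le_antisymm (hmax' _ (h ▸ ht3)) (hmax _ (h.symm ▸ hu3))
  have ht2 : t.2.1 ∈ Vt u := h ▸ (by simp [mem_Vt] : t.2.1 ∈ Vt t)
  have e2 : t.2.1 = u.2.1 := by
    rcases mem_Vt.mp ht2 with h' | h' | h'
    · exact absurd (e1 ▸ h') h1.ne'
    · exact h'
    · exact absurd (e3 ▸ h') h2.ne
  exact Prod.ext e1 (Prod.ext e2 e3)

/-- two vertices of a sorted triple give an edge -/
lemma edge_mem_Et {t : Fin n × Fin n × Fin n} (ht : t ∈ triplesF n) {a b : Fin n}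
    (ha : a ∈ Vt t) (hb : b ∈ Vt t) (hab : a < b) : (a, b) ∈ Et t := by
  obtain ⟨h1, h2⟩ := mem_triplesF.mp ht
  rcases mem_Vt.mp ha with rfl | rfl | rfl <;> rcases mem_Vt.mp hb with rfl | rfl | rfl <;>
    first
      | exact absurd hab (lt_irrefl _)
      | exact absurd hab (not_lt.mpr h1.le)
      | exact absurd hab (not_lt.mpr h2.le)
      | exact absurd hab (not_lt.mpr (h1.trans h2).le)
      | simp [mem_Et]

/-- two distinct edges of a triangle cover all its vertices -/
lemma two_edges_cover {t : Fin n × Fin n × Fin n} {e e' : Fin n × Fin n}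
    (he : e ∈ Et t) (he' : e' ∈ Et t) (hne : e ≠ e') : Vt t ⊆ Ve e ∪ Ve e' := by
  intro x hx
  rcases mem_Et.mp he with rfl | rfl | rfl <;> rcases mem_Et.mp he' with rfl | rfl | rfl <;>
    first
      | exact absurd rfl hne
      | (rcases mem_Vt.mp hx with rfl | rfl | rfl <;> simp [mem_Ve, Finset.mem_union])

lemma Et_inter_card_le_one {t u : Fin n × Fin n × Fin n} (ht : t ∈ triplesF n)
    (hu : u ∈ triplesF n) (hne : t ≠ u) : (Et t ∩ Et u).card ≤ 1 := by
  refine Finset.card_le_one.mpr fun e he e' he' => ?_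
  by_contra hee
  have he1 := Finset.mem_inter.mp he
  have he2 := Finset.mem_inter.mp he'
  have hsub : Ve e ∪ Ve e' ⊆ Vt u :=
    Finset.union_subset (Ve_subset_Vt he1.2) (Ve_subset_Vt he2.2)
  have hsub' : Ve e ∪ Ve e' ⊆ Vt t :=
    Finset.union_subset (Ve_subset_Vt he1.1) (Ve_subset_Vt he2.1)
  have h1 : Vt t ⊆ Vt u := (two_edges_cover he1.1 he2.1 hee).trans hsub
  have h2 : Vt u ⊆ Vt t := (two_edges_cover he1.2 he2.2 hee).trans hsub'
  exact hne (Vt_inj ht hu (le_antisymm h1 h2))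

lemma Et_inter_empty {t u : Fin n × Fin n × Fin n} (ht : t ∈ triplesF n)
    (hvt : ((Vt t ∩ Vt u)).card ≤ 1) : Et t ∩ Et u = ∅ := by
  rw [Finset.eq_empty_iff_forall_notMem]
  intro e he
  have he' := Finset.mem_inter.mp he
  have h1 : e.1 ∈ Vt t ∩ Vt u :=
    Finset.mem_inter.mpr ⟨(Et_mem_Vt he'.1).1, (Et_mem_Vt he'.2).1⟩
  have h2 : e.2 ∈ Vt t ∩ Vt u :=
    Finset.mem_inter.mpr ⟨(Et_mem_Vt he'.1).2, (Et_mem_Vt he'.2).2⟩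
  have hlt : e.1 ≠ e.2 := (Et_lt ht he'.1).ne
  exact absurd hvt (not_le.mpr (Finset.one_lt_card.mpr ⟨e.1, h1, e.2, h2, hlt⟩))

lemma Et_inter_nonempty {t u : Fin n × Fin n × Fin n} (ht : t ∈ triplesF n)
    (hu : u ∈ triplesF n) (hvt : 2 ≤ ((Vt t ∩ Vt u)).card) : (Et t ∩ Et u).Nonempty := by
  obtain ⟨a, ha, b, hb, hab⟩ := Finset.one_lt_card.mp hvt
  have ha' := Finset.mem_inter.mp ha
  have hb' := Finset.mem_inter.mp hb
  rcases hab.lt_or_gt with h | h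
  · exact ⟨(a, b), Finset.mem_inter.mpr
      ⟨edge_mem_Et ht ha'.1 hb'.1 h, edge_mem_Et hu ha'.2 hb'.2 h⟩⟩
  · exact ⟨(b, a), Finset.mem_inter.mpr
      ⟨edge_mem_Et ht hb'.1 ha'.1 h, edge_mem_Et hu hb'.2 ha'.2 h⟩⟩

lemma card_Et_union_of_two_shared {t u : Fin n × Fin n × Fin n} (ht : t ∈ triplesF n)
    (hu : u ∈ triplesF n) (hne : t ≠ u) (hvt : 2 ≤ ((Vt t ∩ Vt u)).card) :
    (Et t ∪ Et u).card = 5 := by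
  have h1 := Et_inter_card_le_one ht hu hne
  have h2 := Finset.card_pos.mpr (Et_inter_nonempty ht hu hvt)
  have h3 : (Et t ∩ Et u).card = 1 := le_antisymm h1 h2
  have h4 := Finset.card_union_add_card_inter (Et t) (Et u)
  rw [h3, card_Et ht, card_Et hu] at h4
  omega

lemma card_Et_union_of_disjointE {t u : Fin n × Fin n × Fin n} (ht : t ∈ triplesF n)
    (hu : u ∈ triplesF n) (hvt : ((Vt t ∩ Vt u)).card ≤ 1) :
    (Et t ∪ Et u).card = 6 := by
  have h4 := Finset.card_union_add_card_inter (Et t) (Et u)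
  rw [Et_inter_empty ht hvt, card_Et ht, card_Et hu] at h4
  simpa using h4

end Combi

section Counting

lemma Ve_inj {e f : Fin n × Fin n} (he : e ∈ pairsF n) (hf : f ∈ pairsF n)
    (h : Ve e = Ve f) : e = f := by
  have h1 := mem_pairsF.mp he
  have h2 := mem_pairsF.mp hf
  have hmin : ∀ x ∈ Ve e, e.1 ≤ x := fun x hx => by
    rcases mem_Ve.mp hx with rfl | rfl
    exacts [le_refl _, h1.le]
  have hmin' : ∀ x ∈ Ve f, f.1 ≤ x := fun x hx => by
    rcases mem_Ve.mp hx with rfl | rfl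
    exacts [le_refl _, h2.le]
  have hmax : ∀ x ∈ Ve e, x ≤ e.2 := fun x hx => by
    rcases mem_Ve.mp hx with rfl | rfl
    exacts [h1.le, le_refl _]
  have hmax' : ∀ x ∈ Ve f, x ≤ f.2 := fun x hx => by
    rcases mem_Ve.mp hx with rfl | rfl
    exacts [h2.le, le_refl _]
  have e1 : e.1 ∈ Ve e := mem_Ve.mpr (Or.inl rfl)
  have e2 : e.2 ∈ Ve e := mem_Ve.mpr (Or.inr rfl)
  have f1 : f.1 ∈ Ve f := mem_Ve.mpr (Or.inl rfl)
  have f2 : f.2 ∈ Ve f := mem_Ve.mpr (Or.inr rfl)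
  refine Prod.ext ?_ ?_
  · exact le_antisymm (hmin _ (h ▸ f1)) (hmin' _ (h.symm ▸ e1))
  · exact le_antisymm (hmax' _ (h ▸ e2)) (hmax _ (h.symm ▸ f2))

lemma card_pairsF_le : (pairsF n).card ≤ n.choose 2 := by
  classical
  have hmaps : ∀ e ∈ pairsF n, Ve e ∈ (Finset.univ : Finset (Fin n)).powersetCard 2 := by
    intro e he
    refine Finset.mem_powersetCard.mpr ⟨Finset.subset_univ _, ?_⟩
    have h1 := mem_pairsF.mp he
    rw [Ve, Finset.card_insert_of_notMem (by simp [h1.ne]), Finset.card_singleton]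
  have := Finset.card_le_card_of_injOn (fun e => Ve e) hmaps
    (fun e he f hf h => Ve_inj he hf h)
  simpa [Finset.card_powersetCard] using this

def edgesAt (n : ℕ) (v : Fin n) : Finset (Fin n × Fin n) :=
  Finset.univ.filter fun e => v ∈ Ve e

lemma card_edgesAt (v : Fin n) : (edgesAt n v).card ≤ 2 * n := by
  classical
  have hsub : edgesAt n v ⊆ (({v} : Finset (Fin n)) ×ˢ Finset.univ)
      ∪ (Finset.univ ×ˢ ({v} : Finset (Fin n))) := by
    intro e he
    rcases mem_Ve.mp (Finset.mem_filter.mp he).2 with h | h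
    · exact Finset.mem_union_left _ (Finset.mem_product.mpr ⟨by simp [h], Finset.mem_univ _⟩)
    · exact Finset.mem_union_right _ (Finset.mem_product.mpr ⟨Finset.mem_univ _, by simp [h]⟩)
  calc (edgesAt n v).card ≤ _ := Finset.card_le_card hsub
    _ ≤ (({v} : Finset (Fin n)) ×ˢ (Finset.univ : Finset (Fin n))).card
        + ((Finset.univ : Finset (Fin n)) ×ˢ ({v} : Finset (Fin n))).card :=
      Finset.card_union_le _ _
    _ ≤ 2 * n := by
      rw [Finset.card_product, Finset.card_product]
      simp
      omega

def triAt (n : ℕ) (v : Fin n) : Finset (Fin n × Fin n × Fin n) :=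
  Finset.univ.filter fun t => v ∈ Vt t

lemma card_triAt (v : Fin n) : (triAt n v).card ≤ 3 * (n * n) := by
  classical
  have hsub : triAt n v ⊆ (({v} : Finset (Fin n)) ×ˢ (Finset.univ : Finset (Fin n × Fin n)))
      ∪ ((Finset.univ : Finset (Fin n)) ×ˢ (({v} : Finset (Fin n)) ×ˢ (Finset.univ : Finset (Fin n))))
      ∪ ((Finset.univ : Finset (Fin n)) ×ˢ ((Finset.univ : Finset (Fin n)) ×ˢ ({v} : Finset (Fin n)))) := by
    intro t ht
    rcases mem_Vt.mp (Finset.mem_filter.mp ht).2 with h | h | h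
    · exact Finset.mem_union_left _ (Finset.mem_union_left _
        (Finset.mem_product.mpr ⟨by simp [h], Finset.mem_univ _⟩))
    · exact Finset.mem_union_left _ (Finset.mem_union_right _
        (Finset.mem_product.mpr ⟨Finset.mem_univ _,
          Finset.mem_product.mpr ⟨by simp [h], Finset.mem_univ _⟩⟩))
    · exact Finset.mem_union_right _
        (Finset.mem_product.mpr ⟨Finset.mem_univ _,
          Finset.mem_product.mpr ⟨Finset.mem_univ _, by simp [h]⟩⟩)
  calc (triAt n v).card ≤ _ := Finset.card_le_card hsub
    _ ≤ _ + _ := Finset.card_union_le _ _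
    _ ≤ (_ + _) + _ := add_le_add_left (Finset.card_union_le _ _) _
    _ ≤ 3 * (n * n) := by
      rw [Finset.card_product, Finset.card_product, Finset.card_product,
        Finset.card_product, Finset.card_product]
      simp
      omega

def tri2At (n : ℕ) (v w : Fin n) : Finset (Fin n × Fin n × Fin n) :=
  (triplesF n).filter fun t => v ∈ Vt t ∧ w ∈ Vt t

lemma card_tri2At {v w : Fin n} (hvw : v ≠ w) : (tri2At n v w).card ≤ n := by
  classical
  set F : Fin n × Fin n × Fin n → Fin n := fun t =>
    if t.1 ≠ v ∧ t.1 ≠ w then t.1 else if t.2.1 ≠ v ∧ t.2.1 ≠ w then t.2.1 else t.2.2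
    with hF
  have hfree : ∀ t ∈ tri2At n v w, F t ∈ Vt t ∧ F t ≠ v ∧ F t ≠ w := by
    intro t ht
    obtain ⟨htF, hvt, hwt⟩ := Finset.mem_filter.mp ht
    obtain ⟨o1, o2⟩ := mem_triplesF.mp htF
    rw [hF]
    dsimp only
    split_ifs with hc1 hc2
    · exact ⟨mem_Vt.mpr (Or.inl rfl), hc1.1, hc1.2⟩
    · exact ⟨mem_Vt.mpr (Or.inr (Or.inl rfl)), hc2.1, hc2.2⟩
    · push_neg at hc1 hc2
      have hc1' : t.1 = v ∨ t.1 = w := by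
        by_cases h : t.1 = v
        exacts [Or.inl h, Or.inr (hc1 h)]
      have hc2' : t.2.1 = v ∨ t.2.1 = w := by
        by_cases h : t.2.1 = v
        exacts [Or.inl h, Or.inr (hc2 h)]
      refine ⟨mem_Vt.mpr (Or.inr (Or.inr rfl)), ?_, ?_⟩
      · intro h3
        rcases hc1' with h1 | h1
        · exact (o1.trans o2).ne (h1.trans h3.symm)
        · rcases hc2' with h2 | h2
          · exact o2.ne (h2.trans h3.symm)
          · exact o1.ne (h1.trans h2.symm)
      · intro h3
        rcases hc1' with h1 | h1
        · rcases hc2' with h2 | h2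
          · exact o1.ne (h1.trans h2.symm)
          · exact o2.ne (h2.trans h3.symm)
        · exact (o1.trans o2).ne (h1.trans h3.symm)
  have hVt : ∀ t ∈ tri2At n v w, Vt t = {v, w, F t} := by
    intro t ht
    obtain ⟨hFt, hFv, hFw⟩ := hfree t ht
    obtain ⟨htF, hvt, hwt⟩ := Finset.mem_filter.mp ht
    have hsub : ({v, w, F t} : Finset (Fin n)) ⊆ Vt t := by
      intro x hx
      rcases Finset.mem_insert.mp hx with rfl | hx
      · exact hvt
      rcases Finset.mem_insert.mp hx with rfl | hx
      · exact hwt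
      · rw [Finset.mem_singleton.mp hx]; exact hFt
    have hcard : (Vt t).card ≤ ({v, w, F t} : Finset (Fin n)).card := by
      rw [card_Vt htF, Finset.card_insert_of_notMem (by simp [hvw, Ne.symm hFv]),
        Finset.card_insert_of_notMem (by simp [Ne.symm hFw]), Finset.card_singleton]
    exact (Finset.eq_of_subset_of_card_le hsub hcard).symm
  have hinj : Set.InjOn F (tri2At n v w) := by
    intro t ht t' ht' hFt
    have h1 : Vt t = Vt t' := by rw [hVt t ht, hVt t' ht', hFt]
    exact Vt_inj (Finset.mem_filter.mp ht).1 (Finset.mem_filter.mp ht').1 h1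
  have := Finset.card_le_card_of_injOn F (fun t _ => Finset.mem_univ (F t)) hinj
  simpa using this

/-- count of ordered pairs of edges sharing a vertex -/
lemma card_pairs_overlap :
    (((pairsF n ×ˢ pairsF n).filter fun z => ¬ Disjoint (Ve z.1) (Ve z.2)).card : ℕ)
      ≤ n * (2 * n * (2 * n)) := by
  classical
  have hsub : ((pairsF n ×ˢ pairsF n).filter fun z => ¬ Disjoint (Ve z.1) (Ve z.2))
      ⊆ Finset.univ.biUnion fun v : Fin n => edgesAt n v ×ˢ edgesAt n v := by
    intro z hz
    obtain ⟨hzm, hznd⟩ := Finset.mem_filter.mp hz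
    obtain ⟨v, hv1, hv2⟩ := Finset.not_disjoint_iff.mp hznd
    exact Finset.mem_biUnion.mpr ⟨v, Finset.mem_univ _, Finset.mem_product.mpr
      ⟨Finset.mem_filter.mpr ⟨Finset.mem_univ _, hv1⟩,
       Finset.mem_filter.mpr ⟨Finset.mem_univ _, hv2⟩⟩⟩
  calc _ ≤ _ := Finset.card_le_card hsub
    _ ≤ ∑ v : Fin n, (edgesAt n v ×ˢ edgesAt n v).card := Finset.card_biUnion_le
    _ ≤ ∑ _v : Fin n, 2 * n * (2 * n) := by
      refine Finset.sum_le_sum fun v _ => ?_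
      rw [Finset.card_product]
      exact Nat.mul_le_mul (card_edgesAt v) (card_edgesAt v)
    _ = n * (2 * n * (2 * n)) := by
      rw [Finset.sum_const, smul_eq_mul]
      simp

/-- count of ordered pairs of identical indices -/
lemma card_diag_le {α : Type*} [DecidableEq α] (s : Finset α) (p : α × α → Prop)
    [DecidablePred p] :
    ((s ×ˢ s).filter fun z => p z ∧ z.1 = z.2).card ≤ s.card := by
  classical
  refine Finset.card_le_card_of_injOn Prod.fst (fun z hz => ?_) ?_
  · exact (Finset.mem_product.mp (Finset.mem_filter.mp hz).1).1
  · intro z hz z' hz' h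
    have h1 := (Finset.mem_filter.mp hz).2.2
    have h2 := (Finset.mem_filter.mp hz').2.2
    exact Prod.ext h (by rw [← h1, ← h2, h])

/-- count of ordered pairs of triples sharing a vertex -/
lemma card_tri_overlap :
    (((triplesF n ×ˢ triplesF n).filter fun z => ¬ Disjoint (Vt z.1) (Vt z.2)).card : ℕ)
      ≤ n * (3 * (n * n) * (3 * (n * n))) := by
  classical
  have hsub : ((triplesF n ×ˢ triplesF n).filter fun z => ¬ Disjoint (Vt z.1) (Vt z.2))
      ⊆ Finset.univ.biUnion fun v : Fin n => triAt n v ×ˢ triAt n v := by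
    intro z hz
    obtain ⟨hzm, hznd⟩ := Finset.mem_filter.mp hz
    obtain ⟨v, hv1, hv2⟩ := Finset.not_disjoint_iff.mp hznd
    exact Finset.mem_biUnion.mpr ⟨v, Finset.mem_univ _, Finset.mem_product.mpr
      ⟨Finset.mem_filter.mpr ⟨Finset.mem_univ _, hv1⟩,
       Finset.mem_filter.mpr ⟨Finset.mem_univ _, hv2⟩⟩⟩
  calc _ ≤ _ := Finset.card_le_card hsub
    _ ≤ ∑ v : Fin n, (triAt n v ×ˢ triAt n v).card := Finset.card_biUnion_le
    _ ≤ ∑ _v : Fin n, 3 * (n * n) * (3 * (n * n)) := by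
      refine Finset.sum_le_sum fun v _ => ?_
      rw [Finset.card_product]
      exact Nat.mul_le_mul (card_triAt v) (card_triAt v)
    _ = n * (3 * (n * n) * (3 * (n * n))) := by
      rw [Finset.sum_const, smul_eq_mul]
      simp

/-- count of ordered pairs of distinct triples sharing at least two vertices -/
lemma card_tri_share2 :
    (((triplesF n ×ˢ triplesF n).filter
        fun z => ¬ z.1 = z.2 ∧ 2 ≤ (Vt z.1 ∩ Vt z.2).card).card : ℕ)
      ≤ (n * n) * (n * n) := by
  classical
  have hsub : ((triplesF n ×ˢ triplesF n).filter
        fun z => ¬ z.1 = z.2 ∧ 2 ≤ (Vt z.1 ∩ Vt z.2).card)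
      ⊆ (Finset.univ : Finset (Fin n)).offDiag.biUnion fun p : Fin n × Fin n =>
          tri2At n p.1 p.2 ×ˢ tri2At n p.1 p.2 := by
    intro z hz
    obtain ⟨hzm, _, hzc⟩ := Finset.mem_filter.mp hz
    obtain ⟨hz1, hz2⟩ := Finset.mem_product.mp hzm
    obtain ⟨a, ha, b, hb, hab⟩ := Finset.one_lt_card.mp hzc
    have ha' := Finset.mem_inter.mp ha
    have hb' := Finset.mem_inter.mp hb
    refine Finset.mem_biUnion.mpr ⟨(a, b), Finset.mem_offDiag.mpr
      ⟨Finset.mem_univ _, Finset.mem_univ _, hab⟩, Finset.mem_product.mpr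
      ⟨Finset.mem_filter.mpr ⟨hz1, ha'.1, hb'.1⟩,
       Finset.mem_filter.mpr ⟨hz2, ha'.2, hb'.2⟩⟩⟩
  calc _ ≤ _ := Finset.card_le_card hsub
    _ ≤ ∑ p ∈ (Finset.univ : Finset (Fin n)).offDiag, (tri2At n p.1 p.2 ×ˢ tri2At n p.1 p.2).card :=
      Finset.card_biUnion_le
    _ ≤ ∑ _p ∈ (Finset.univ : Finset (Fin n)).offDiag, n * n := by
      refine Finset.sum_le_sum fun p hp => ?_
      rw [Finset.card_product]
      have hne : p.1 ≠ p.2 := (Finset.mem_offDiag.mp hp).2.2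
      exact Nat.mul_le_mul (card_tri2At hne) (card_tri2At hne)
    _ ≤ (n * n) * (n * n) := by
      rw [Finset.sum_const, smul_eq_mul]
      have hod : (Finset.univ : Finset (Fin n)).offDiag.card ≤ n * n := by
        rw [Finset.offDiag_card]
        simp
      exact Nat.mul_le_mul hod (le_refl _)

end Counting

section VarBounds

lemma choose2_bound {n : ℕ} (hn : 2 ≤ n) :
    (n : ℝ) ^ 2 ≤ 4 * (n.choose 2 : ℝ) ∧ (0 : ℝ) < (n.choose 2 : ℝ) := by
  have h2 : (n.choose 2) * 2 = n * (n - 1) := by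
    rw [Nat.choose_two_right]
    exact Nat.div_mul_cancel (Nat.even_mul_pred_self n).two_dvd
  have h2' : ((n.choose 2 : ℕ) : ℝ) * 2 = (n : ℝ) * ((n : ℝ) - 1) := by
    have h1n : 1 ≤ n := by omega
    have hc := congrArg (fun m : ℕ => (m : ℝ)) h2
    simp only [Nat.cast_mul, Nat.cast_sub h1n, Nat.cast_ofNat, Nat.cast_one] at hc
    push_cast at hc ⊢
    linarith
  have hN : (2 : ℝ) ≤ (n : ℝ) := by exact_mod_cast hn
  constructor
  · nlinarith [h2', hN]
  · nlinarith [h2', hN]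

lemma choose3_bound {n : ℕ} (hn : 3 ≤ n) :
    (n : ℝ) ^ 3 ≤ 36 * (n.choose 3 : ℝ) ∧ (0 : ℝ) < (n.choose 3 : ℝ) := by
  have hdvd : 6 ∣ n.descFactorial 3 := by
    have h := Nat.factorial_dvd_descFactorial n 3
    have h6 : Nat.factorial 3 = 6 := rfl
    rwa [h6] at h
  have h2 : (n.choose 3) * 6 = n.descFactorial 3 := by
    rw [Nat.choose_eq_descFactorial_div_factorial]
    have h6 : Nat.factorial 3 = 6 := rfl
    rw [h6]
    exact Nat.div_mul_cancel hdvd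
  have hdesc : n.descFactorial 3 = (n - 2) * ((n - 1) * n) := by
    simp [Nat.descFactorial]
  have h2' : ((n.choose 3 : ℕ) : ℝ) * 6 = ((n : ℝ) - 2) * (((n : ℝ) - 1) * (n : ℝ)) := by
    have h1n : 1 ≤ n := by omega
    have h2n : 2 ≤ n := by omega
    have hc := congrArg (fun m : ℕ => (m : ℝ)) (h2.trans hdesc)
    simp only [Nat.cast_mul, Nat.cast_sub h1n, Nat.cast_sub h2n, Nat.cast_ofNat,
      Nat.cast_one] at hc
    push_cast at hc ⊢
    linarith
  have hN : (3 : ℝ) ≤ (n : ℝ) := by exact_mod_cast hn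
  constructor
  · nlinarith [h2', hN, sq_nonneg ((n : ℝ) - 3)]
  · nlinarith [h2', hN, mul_pos (show (0:ℝ) < (n:ℝ) - 2 by linarith)
      (mul_pos (show (0:ℝ) < (n:ℝ) - 1 by linarith) (show (0:ℝ) < (n:ℝ) by linarith))]

variable {g : Fin r → ℝ → ℝ} {B : Fin r → ℝ}

lemma var_p_le (hg : ∀ l, Measurable (g l))
    (hB : ∀ l, ∀ x ∈ Set.Icc (0:ℝ) 1, |g l x| ≤ B l)
    (hP01 : ∀ x y : Fin r → ℝ, (∀ l, x l ∈ Set.Icc (0 : ℝ) 1) →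
      (∀ l, y l ∈ Set.Icc (0 : ℝ) 1) →
      0 ≤ ∑ l : Fin r, g l (x l) * g l (y l) ∧
        ∑ l : Fin r, g l (x l) * g l (y l) ≤ 1)
    (hn : 2 ≤ n) :
    ∫ A, (pHat A - pTilde n r g) ^ 2 ∂(latentMeasure n r g)
      ≤ 160 * ((∑ l, B l ^ 2) ^ 2 / n + (∑ l, B l ^ 2) / (n : ℝ) ^ 2) := by
  classical
  set s : ℝ := ∑ l, B l ^ 2 with hsdef
  have hs0 : 0 ≤ s := Finset.sum_nonneg fun l _ => sq_nonneg _
  set T : (Fin n × Fin n) × (Fin n × Fin n) → ℝ :=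
    fun z => mom n g ({z.1} ∪ {z.2}) - mom n g {z.1} * mom n g {z.2} with hT
  have hmom1 : ∀ e : Fin n × Fin n, mom n g {e} ≤ s := fun e => by
    simpa using mom_le hg hB hP01 {e}
  have hmomnn : ∀ S, 0 ≤ mom n g S := fun S => mom_nonneg hP01 S
  -- the key sum bound
  have hkey : ∑ e ∈ pairsF n, ∑ f ∈ pairsF n,
      (mom n g ({e} ∪ {f}) - mom n g {e} * mom n g {f})
      ≤ ((n * n : ℕ) : ℝ) * (s + s * s) + ((n * (2 * n * (2 * n)) : ℕ) : ℝ) * (s * s + s * s) := by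
    rw [← Finset.sum_product' (f := fun e f => mom n g ({e} ∪ {f}) - mom n g {e} * mom n g {f})]
    have hzero : ∑ z ∈ (pairsF n ×ˢ pairsF n).filter
        (fun z => Disjoint (Ve z.1) (Ve z.2)), T z = 0 := by
      refine Finset.sum_eq_zero fun z hz => ?_
      obtain ⟨hzm, hdis⟩ := Finset.mem_filter.mp hz
      have hdis' : Disjoint (VS ({z.1} : Finset (Fin n × Fin n))) (VS {z.2}) := by
        rw [VS_single, VS_single]; exact hdis
      rw [hT]
      dsimp only
      rw [mom_union_eq_mul g hg _ _ hdis', sub_self]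
    have hsplit := Finset.sum_filter_add_sum_filter_not (pairsF n ×ˢ pairsF n)
      (fun z => Disjoint (Ve z.1) (Ve z.2)) T
    have hO := Finset.sum_filter_add_sum_filter_not
      ((pairsF n ×ˢ pairsF n).filter fun z => ¬ Disjoint (Ve z.1) (Ve z.2))
      (fun z => z.1 = z.2) T
    have heq : ∑ z ∈ pairsF n ×ˢ pairsF n, T z
        = (∑ z ∈ (((pairsF n ×ˢ pairsF n).filter fun z => ¬ Disjoint (Ve z.1) (Ve z.2)).filter
            fun z => z.1 = z.2), T z)
          + ∑ z ∈ (((pairsF n ×ˢ pairsF n).filter fun z => ¬ Disjoint (Ve z.1) (Ve z.2)).filter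
            fun z => ¬ z.1 = z.2), T z := by
      rw [← hsplit, hzero, zero_add, ← hO]
    rw [heq]
    apply add_le_add
    · -- diagonal part
      have hbd : ∀ z ∈ (((pairsF n ×ˢ pairsF n).filter fun z => ¬ Disjoint (Ve z.1) (Ve z.2)).filter
          fun z => z.1 = z.2), T z ≤ s + s * s := by
        intro z hz
        have hd := (Finset.mem_filter.mp hz).2
        rw [hT]
        dsimp only
        rw [← hd, Finset.union_idempotent]
        have h1 : mom n g {z.1} ≤ s := hmom1 _
        have h2 : 0 ≤ mom n g {z.1} := hmomnn _
        nlinarith [hmomnn ({z.1} : Finset (Fin n × Fin n))]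
      calc _ ≤ _ := Finset.sum_le_card_nsmul _ _ _ hbd
        _ ≤ ((n * n : ℕ) : ℝ) * (s + s * s) := by
          rw [nsmul_eq_mul]
          have hc : (((pairsF n ×ˢ pairsF n).filter fun z => ¬ Disjoint (Ve z.1) (Ve z.2)).filter
              fun z => z.1 = z.2).card ≤ n * n := by
            rw [Finset.filter_filter]
            refine le_trans (card_diag_le (pairsF n) _) ?_
            refine le_trans (Finset.card_le_card (Finset.subset_univ _)) ?_
            simp [Finset.card_univ]
          have hpos : (0:ℝ) ≤ s + s * s := by nlinarith
          exact mul_le_mul_of_nonneg_right (by exact_mod_cast hc) hpos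
    · -- off-diagonal overlapping part
      have hbd : ∀ z ∈ (((pairsF n ×ˢ pairsF n).filter fun z => ¬ Disjoint (Ve z.1) (Ve z.2)).filter
          fun z => ¬ z.1 = z.2), T z ≤ s * s + s * s := by
        intro z hz
        have hd := (Finset.mem_filter.mp hz).2
        rw [hT]
        dsimp only
        have hcard : (({z.1} : Finset (Fin n × Fin n)) ∪ {z.2}).card = 2 := by
          rw [← Finset.insert_eq]
          exact Finset.card_pair hd
        have h1 : mom n g ({z.1} ∪ {z.2}) ≤ s * s := by
          have := mom_le hg hB hP01 (({z.1} : Finset (Fin n × Fin n)) ∪ {z.2})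
          rw [hcard] at this
          nlinarith [this]
        have h2 : 0 ≤ mom n g {z.1} * mom n g {z.2} :=
          mul_nonneg (hmomnn _) (hmomnn _)
        nlinarith
      calc _ ≤ _ := Finset.sum_le_card_nsmul _ _ _ hbd
        _ ≤ ((n * (2 * n * (2 * n)) : ℕ) : ℝ) * (s * s + s * s) := by
          rw [nsmul_eq_mul]
          have hc : (((pairsF n ×ˢ pairsF n).filter fun z => ¬ Disjoint (Ve z.1) (Ve z.2)).filter
              fun z => ¬ z.1 = z.2).card ≤ n * (2 * n * (2 * n)) :=
            le_trans (Finset.card_le_card (Finset.filter_subset _ _)) card_pairs_overlap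
          have hpos : (0:ℝ) ≤ s * s + s * s := by nlinarith
          exact mul_le_mul_of_nonneg_right (by exact_mod_cast hc) hpos
  -- assemble
  rw [var_p_eq hg hB hP01]
  obtain ⟨hch, hchpos⟩ := choose2_bound hn
  have hNe : (2:ℝ) ≤ (n:ℝ) := by exact_mod_cast hn
  have hN0 : (0:ℝ) < (n:ℝ) := by linarith
  have hcinv : ((n.choose 2 : ℕ) : ℝ)⁻¹ ≤ 4 / (n:ℝ)^2 := by
    have h1 : (n:ℝ)^2/4 ≤ ((n.choose 2 : ℕ) : ℝ) := by linarith
    have h2 : ((n.choose 2 : ℕ) : ℝ)⁻¹ ≤ ((n:ℝ)^2/4)⁻¹ := by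
      apply inv_anti₀ (by positivity) h1
    rw [inv_div] at h2
    exact h2
  have hK0 : (0:ℝ) ≤ ((n * n : ℕ) : ℝ) * (s + s * s)
      + ((n * (2 * n * (2 * n)) : ℕ) : ℝ) * (s * s + s * s) := by positivity
  have hc2 : (((n.choose 2 : ℕ) : ℝ)⁻¹)^2 ≤ (4/(n:ℝ)^2)^2 := by
    apply pow_le_pow_left₀ (by positivity) hcinv
  calc (((n.choose 2 : ℕ) : ℝ)⁻¹)^2 * ∑ e ∈ pairsF n, ∑ f ∈ pairsF n,
        (mom n g ({e} ∪ {f}) - mom n g {e} * mom n g {f})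
      ≤ (((n.choose 2 : ℕ) : ℝ)⁻¹)^2 * (((n * n : ℕ) : ℝ) * (s + s * s)
          + ((n * (2 * n * (2 * n)) : ℕ) : ℝ) * (s * s + s * s)) :=
        mul_le_mul_of_nonneg_left hkey (by positivity)
    _ ≤ (4/(n:ℝ)^2)^2 * (((n * n : ℕ) : ℝ) * (s + s * s)
          + ((n * (2 * n * (2 * n)) : ℕ) : ℝ) * (s * s + s * s)) :=
        mul_le_mul_of_nonneg_right hc2 hK0
    _ ≤ 160 * (s ^ 2 / n + s / (n : ℝ) ^ 2) := by
        have h4 : (4/(n:ℝ)^2)^2 = 16/(n:ℝ)^4 := by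
          rw [div_pow, ← pow_mul]
          norm_num
        rw [h4, div_mul_eq_mul_div, div_le_iff₀ (by positivity)]
        have hexp : 160 * (s^2/(n:ℝ) + s/(n:ℝ)^2) * (n:ℝ)^4
            = 160*s^2*(n:ℝ)^3 + 160*s*(n:ℝ)^2 := by
          field_simp
        rw [hexp]
        push_cast
        nlinarith [hs0, hNe, hN0, mul_nonneg (mul_nonneg hs0 hs0)
          (mul_nonneg (mul_nonneg hN0.le hN0.le) (by linarith : (0:ℝ) ≤ (n:ℝ) - 1)),
          mul_nonneg hs0 (mul_nonneg hN0.le hN0.le)]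

end VarBounds

section VarQ

variable {g : Fin r → ℝ → ℝ} {B : Fin r → ℝ}

set_option maxHeartbeats 2000000 in
lemma var_q_le (hg : ∀ l, Measurable (g l))
    (hB : ∀ l, ∀ x ∈ Set.Icc (0:ℝ) 1, |g l x| ≤ B l)
    (hP01 : ∀ x y : Fin r → ℝ, (∀ l, x l ∈ Set.Icc (0 : ℝ) 1) →
      (∀ l, y l ∈ Set.Icc (0 : ℝ) 1) →
      0 ≤ ∑ l : Fin r, g l (x l) * g l (y l) ∧
        ∑ l : Fin r, g l (x l) * g l (y l) ≤ 1)
    (hn : 3 ≤ n) :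
    ∫ A, (F3hat A - qTilde n r g) ^ 2 ∂(latentMeasure n r g)
      ≤ 25920 * ((∑ l, B l ^ 2) ^ 6 / n + (∑ l, B l ^ 2) ^ 5 / (n : ℝ) ^ 2
          + (∑ l, B l ^ 2) ^ 3 / (n : ℝ) ^ 3) := by
  classical
  set s : ℝ := ∑ l, B l ^ 2 with hsdef
  have hs0 : 0 ≤ s := Finset.sum_nonneg fun l _ => sq_nonneg _
  have hs3 : (0:ℝ) ≤ s ^ 3 := by positivity
  set T : (Fin n × Fin n × Fin n) × (Fin n × Fin n × Fin n) → ℝ :=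
    fun z => mom n g (Et z.1 ∪ Et z.2) - mom n g (Et z.1) * mom n g (Et z.2) with hT
  have hmomnn : ∀ S, 0 ≤ mom n g S := fun S => mom_nonneg hP01 S
  have hmom3 : ∀ t ∈ triplesF n, mom n g (Et t) ≤ s ^ 3 := fun t ht => by
    have := mom_le hg hB hP01 (Et t)
    rwa [card_Et ht] at this
  set PP := triplesF n ×ˢ triplesF n with hPP
  have hkey : ∑ t ∈ triplesF n, ∑ u ∈ triplesF n,
      (mom n g (Et t ∪ Et u) - mom n g (Et t) * mom n g (Et u))
      ≤ ((n * (n * n) : ℕ) : ℝ) * (s ^ 3 + s ^ 3 * s ^ 3)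
        + (((n * n) * (n * n) : ℕ) : ℝ) * (s ^ 5 + s ^ 3 * s ^ 3)
        + ((n * (3 * (n * n) * (3 * (n * n))) : ℕ) : ℝ) * (s ^ 3 * s ^ 3 + s ^ 3 * s ^ 3) := by
    rw [← Finset.sum_product'
      (f := fun t u => mom n g (Et t ∪ Et u) - mom n g (Et t) * mom n g (Et u))]
    have hzero : ∑ z ∈ PP.filter (fun z => Disjoint (Vt z.1) (Vt z.2)), T z = 0 := by
      refine Finset.sum_eq_zero fun z hz => ?_
      obtain ⟨hzm, hdis⟩ := Finset.mem_filter.mp hz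
      have hdis' : Disjoint (VS (Et z.1)) (VS (Et z.2)) :=
        hdis.mono (VS_Et_subset z.1) (VS_Et_subset z.2)
      rw [hT]
      dsimp only
      rw [mom_union_eq_mul g hg _ _ hdis', sub_self]
    have hsplit := Finset.sum_filter_add_sum_filter_not PP
      (fun z => Disjoint (Vt z.1) (Vt z.2)) T
    set O := PP.filter fun z => ¬ Disjoint (Vt z.1) (Vt z.2) with hO
    have hOsplit := Finset.sum_filter_add_sum_filter_not O (fun z => z.1 = z.2) T
    set O' := O.filter fun z => ¬ z.1 = z.2 with hO'
    have hO'split := Finset.sum_filter_add_sum_filter_not O'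
      (fun z => 2 ≤ (Vt z.1 ∩ Vt z.2).card) T
    have heq : ∑ z ∈ PP, T z
        = (∑ z ∈ O.filter (fun z => z.1 = z.2), T z)
          + ((∑ z ∈ O'.filter (fun z => 2 ≤ (Vt z.1 ∩ Vt z.2).card), T z)
            + ∑ z ∈ O'.filter (fun z => ¬ 2 ≤ (Vt z.1 ∩ Vt z.2).card), T z) := by
      linarith [hsplit, hOsplit, hO'split, hzero]
    rw [heq]
    have hDb : (∑ z ∈ O.filter (fun z => z.1 = z.2), T z)
        ≤ ((n * (n * n) : ℕ) : ℝ) * (s ^ 3 + s ^ 3 * s ^ 3) := by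
      have hbd : ∀ z ∈ O.filter (fun z => z.1 = z.2), T z ≤ s ^ 3 + s ^ 3 * s ^ 3 := by
        intro z hz
        have hzO := (Finset.mem_filter.mp hz).1
        have hd := (Finset.mem_filter.mp hz).2
        have hz1 : z.1 ∈ triplesF n :=
          (Finset.mem_product.mp (Finset.mem_filter.mp hzO).1).1
        rw [hT]
        dsimp only
        rw [← hd, Finset.union_idempotent]
        have h1 := hmom3 z.1 hz1
        have h2 := hmomnn (Et z.1)
        nlinarith
      calc _ ≤ _ := Finset.sum_le_card_nsmul _ _ _ hbd
        _ ≤ ((n * (n * n) : ℕ) : ℝ) * (s ^ 3 + s ^ 3 * s ^ 3) := by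
          rw [nsmul_eq_mul]
          have hc : (O.filter (fun z => z.1 = z.2)).card ≤ n * (n * n) := by
            rw [hO, Finset.filter_filter]
            refine le_trans (card_diag_le (triplesF n) _) ?_
            refine le_trans (Finset.card_le_card (Finset.subset_univ _)) ?_
            simp [Finset.card_univ]
          exact mul_le_mul_of_nonneg_right (by exact_mod_cast hc) (by positivity)
    have hCb : (∑ z ∈ O'.filter (fun z => 2 ≤ (Vt z.1 ∩ Vt z.2).card), T z)
        ≤ (((n * n) * (n * n) : ℕ) : ℝ) * (s ^ 5 + s ^ 3 * s ^ 3) := by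
      have hbd : ∀ z ∈ O'.filter (fun z => 2 ≤ (Vt z.1 ∩ Vt z.2).card),
          T z ≤ s ^ 5 + s ^ 3 * s ^ 3 := by
        intro z hz
        have hzO' := (Finset.mem_filter.mp hz).1
        have hc2 := (Finset.mem_filter.mp hz).2
        have hzO := (Finset.mem_filter.mp hzO').1
        have hne := (Finset.mem_filter.mp hzO').2
        have hzPP := (Finset.mem_filter.mp hzO).1
        have hz1 : z.1 ∈ triplesF n := (Finset.mem_product.mp hzPP).1
        have hz2 : z.2 ∈ triplesF n := (Finset.mem_product.mp hzPP).2
        rw [hT]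
        dsimp only
        have hcard : (Et z.1 ∪ Et z.2).card = 5 :=
          card_Et_union_of_two_shared hz1 hz2 hne hc2
        have h1 : mom n g (Et z.1 ∪ Et z.2) ≤ s ^ 5 := by
          have := mom_le hg hB hP01 (Et z.1 ∪ Et z.2)
          rwa [hcard] at this
        have h2 : 0 ≤ mom n g (Et z.1) * mom n g (Et z.2) :=
          mul_nonneg (hmomnn _) (hmomnn _)
        nlinarith
      calc _ ≤ _ := Finset.sum_le_card_nsmul _ _ _ hbd
        _ ≤ (((n * n) * (n * n) : ℕ) : ℝ) * (s ^ 5 + s ^ 3 * s ^ 3) := by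
          rw [nsmul_eq_mul]
          have hsub : O'.filter (fun z => 2 ≤ (Vt z.1 ∩ Vt z.2).card)
              ⊆ PP.filter (fun z => ¬ z.1 = z.2 ∧ 2 ≤ (Vt z.1 ∩ Vt z.2).card) := by
            intro z hz
            have hzO' := (Finset.mem_filter.mp hz).1
            have hc2 := (Finset.mem_filter.mp hz).2
            have hzO := (Finset.mem_filter.mp hzO').1
            have hne := (Finset.mem_filter.mp hzO').2
            exact Finset.mem_filter.mpr ⟨(Finset.mem_filter.mp hzO).1, hne, hc2⟩
          have hc : (O'.filter (fun z => 2 ≤ (Vt z.1 ∩ Vt z.2).card)).card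
              ≤ (n * n) * (n * n) :=
            le_trans (Finset.card_le_card hsub) card_tri_share2
          exact mul_le_mul_of_nonneg_right (by exact_mod_cast hc) (by positivity)
    have hBb : (∑ z ∈ O'.filter (fun z => ¬ 2 ≤ (Vt z.1 ∩ Vt z.2).card), T z)
        ≤ ((n * (3 * (n * n) * (3 * (n * n))) : ℕ) : ℝ)
            * (s ^ 3 * s ^ 3 + s ^ 3 * s ^ 3) := by
      have hbd : ∀ z ∈ O'.filter (fun z => ¬ 2 ≤ (Vt z.1 ∩ Vt z.2).card),
          T z ≤ s ^ 3 * s ^ 3 + s ^ 3 * s ^ 3 := by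
        intro z hz
        have hzO' := (Finset.mem_filter.mp hz).1
        have hc2 := (Finset.mem_filter.mp hz).2
        have hzO := (Finset.mem_filter.mp hzO').1
        have hzPP := (Finset.mem_filter.mp hzO).1
        have hz1 : z.1 ∈ triplesF n := (Finset.mem_product.mp hzPP).1
        have hz2 : z.2 ∈ triplesF n := (Finset.mem_product.mp hzPP).2
        rw [hT]
        dsimp only
        have hcard : (Et z.1 ∪ Et z.2).card = 6 :=
          card_Et_union_of_disjointE hz1 hz2 (by omega)
        have h1 : mom n g (Et z.1 ∪ Et z.2) ≤ s ^ 6 := by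
          have := mom_le hg hB hP01 (Et z.1 ∪ Et z.2)
          rwa [hcard] at this
        have h2 : 0 ≤ mom n g (Et z.1) * mom n g (Et z.2) :=
          mul_nonneg (hmomnn _) (hmomnn _)
        nlinarith
      calc _ ≤ _ := Finset.sum_le_card_nsmul _ _ _ hbd
        _ ≤ ((n * (3 * (n * n) * (3 * (n * n))) : ℕ) : ℝ)
            * (s ^ 3 * s ^ 3 + s ^ 3 * s ^ 3) := by
          rw [nsmul_eq_mul]
          have hc : (O'.filter (fun z => ¬ 2 ≤ (Vt z.1 ∩ Vt z.2).card)).card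
              ≤ n * (3 * (n * n) * (3 * (n * n))) := by
            refine le_trans (Finset.card_le_card ?_) card_tri_overlap
            exact (Finset.filter_subset _ _).trans (Finset.filter_subset _ _)
          exact mul_le_mul_of_nonneg_right (by exact_mod_cast hc) (by positivity)
    linarith
  -- assemble
  rw [var_q_eq hg hB hP01]
  obtain ⟨hch, hchpos⟩ := choose3_bound hn
  have hNe : (3:ℝ) ≤ (n:ℝ) := by exact_mod_cast hn
  have hN0 : (0:ℝ) < (n:ℝ) := by linarith
  have hcinv : ((n.choose 3 : ℕ) : ℝ)⁻¹ ≤ 36 / (n:ℝ)^3 := by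
    have h1 : (n:ℝ)^3/36 ≤ ((n.choose 3 : ℕ) : ℝ) := by linarith
    have h2 : ((n.choose 3 : ℕ) : ℝ)⁻¹ ≤ ((n:ℝ)^3/36)⁻¹ :=
      inv_anti₀ (by positivity) h1
    rwa [inv_div] at h2
  have hK0 : (0:ℝ) ≤ ((n * (n * n) : ℕ) : ℝ) * (s ^ 3 + s ^ 3 * s ^ 3)
      + (((n * n) * (n * n) : ℕ) : ℝ) * (s ^ 5 + s ^ 3 * s ^ 3)
      + ((n * (3 * (n * n) * (3 * (n * n))) : ℕ) : ℝ)
          * (s ^ 3 * s ^ 3 + s ^ 3 * s ^ 3) := by positivity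
  have hc2 : (((n.choose 3 : ℕ) : ℝ)⁻¹)^2 ≤ (36/(n:ℝ)^3)^2 :=
    pow_le_pow_left₀ (by positivity) hcinv 2
  calc (((n.choose 3 : ℕ) : ℝ)⁻¹)^2 * ∑ t ∈ triplesF n, ∑ u ∈ triplesF n,
        (mom n g (Et t ∪ Et u) - mom n g (Et t) * mom n g (Et u))
      ≤ (((n.choose 3 : ℕ) : ℝ)⁻¹)^2 * _ := mul_le_mul_of_nonneg_left hkey (by positivity)
    _ ≤ (36/(n:ℝ)^3)^2 * _ := mul_le_mul_of_nonneg_right hc2 hK0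
    _ ≤ 25920 * (s ^ 6 / n + s ^ 5 / (n : ℝ) ^ 2 + s ^ 3 / (n : ℝ) ^ 3) := by
        have h4 : (36/(n:ℝ)^3)^2 = 1296/(n:ℝ)^6 := by
          rw [div_pow, ← pow_mul]
          norm_num
        rw [h4, div_mul_eq_mul_div, div_le_iff₀ (by positivity)]
        have hexp : 25920 * (s^6/(n:ℝ) + s^5/(n:ℝ)^2 + s^3/(n:ℝ)^3) * (n:ℝ)^6
            = 25920*s^6*(n:ℝ)^5 + 25920*s^5*(n:ℝ)^4 + 25920*s^3*(n:ℝ)^3 := by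
          field_simp
        rw [hexp]
        push_cast
        have hN1 : (1:ℝ) ≤ (n:ℝ) := by linarith
        have h45 : (n:ℝ)^4 ≤ (n:ℝ)^5 := pow_le_pow_right₀ hN1 (by norm_num)
        have h35 : (n:ℝ)^3 ≤ (n:ℝ)^5 := pow_le_pow_right₀ hN1 (by norm_num)
        nlinarith [mul_nonneg (mul_nonneg hs3 hs3) (sub_nonneg.mpr h45),
          mul_nonneg (mul_nonneg hs3 hs3) (sub_nonneg.mpr h35),
          mul_nonneg hs3 (pow_nonneg hN0.le 3),
          mul_nonneg (mul_nonneg hs3 (mul_nonneg hs0 hs0)) (pow_nonneg hN0.le 4),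
          mul_nonneg (mul_nonneg hs3 hs3) (pow_nonneg hN0.le 5)]

end VarQ

section Cheb

lemma cheb {n : ℕ} (μ : Measure (Adj n)) [IsProbabilityMeasure μ]
    (Z : Adj n → ℝ) (t ε : ℝ) (hε : 0 ≤ ε) (ht : 0 ≤ t)
    (h2 : ∫ A, Z A ^ 2 ∂μ ≤ ε * t ^ 2)
    (E : Set (Adj n)) (hE : ∀ A ∈ E, t < |Z A|) : (μ E).toReal ≤ ε := by
  have hEm : MeasurableSet E := (Set.toFinite E).measurableSet
  rcases eq_or_lt_of_le ht with h0 | htpos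
  · have hz2 : ∫ A, Z A ^ 2 ∂μ = 0 := le_antisymm (by
        have h2' := h2
        rw [← h0] at h2'
        simpa using h2')
      (integral_nonneg fun A => sq_nonneg _)
    have hz : (fun A => Z A ^ 2) =ᵐ[μ] 0 :=
      (integral_eq_zero_iff_of_nonneg (fun A => sq_nonneg _) Integrable.of_finite).mp hz2
    have hz' : ∀ᵐ A ∂μ, Z A ^ 2 = 0 := by
      filter_upwards [hz] with A hA
      simpa using hA
    rw [ae_iff] at hz'
    have hzero : μ E = 0 := by
      refine measure_mono_null ?_ hz'
      intro A hA
      have h1 := hE A hA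
      rw [← h0] at h1
      have : Z A ≠ 0 := fun h => by simp [h] at h1
      simp only [Set.mem_setOf_eq]
      exact pow_ne_zero 2 this
    rw [hzero]
    simpa using hε
  · have h1 : ∫ _A in E, (t ^ 2 : ℝ) ∂μ ≤ ∫ A in E, Z A ^ 2 ∂μ :=
      setIntegral_mono_on (integrable_const _).integrableOn
        Integrable.of_finite.integrableOn hEm
        (fun A hA => by
          calc t ^ 2 ≤ |Z A| ^ 2 := pow_le_pow_left₀ ht (hE A hA).le 2
            _ = Z A ^ 2 := sq_abs _)
    have h2' : ∫ A in E, Z A ^ 2 ∂μ ≤ ∫ A, Z A ^ 2 ∂μ :=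
      setIntegral_le_integral Integrable.of_finite
        (Filter.Eventually.of_forall fun A => sq_nonneg _)
    rw [setIntegral_const, smul_eq_mul, measureReal_def] at h1
    have hfin : (μ E).toReal * t ^ 2 ≤ ε * t ^ 2 := by linarith
    exact le_of_mul_le_mul_right hfin (pow_pos htpos 2)

lemma cube_dev {p q t s : ℝ} (hq0 : 0 ≤ q) (hqs : q ≤ s) (h : |p - q| ≤ t) :
    |p ^ 3 - q ^ 3| ≤ 3 * s ^ 2 * t + 3 * s * t ^ 2 + t ^ 3 := by
  have ht : 0 ≤ t := le_trans (abs_nonneg _) h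
  have hid : p ^ 3 - q ^ 3 = (p - q) ^ 3 + 3 * q * (p - q) ^ 2 + 3 * q ^ 2 * (p - q) := by
    ring
  have habs : |p ^ 3 - q ^ 3|
      ≤ |(p - q) ^ 3| + |3 * q * (p - q) ^ 2| + |3 * q ^ 2 * (p - q)| := by
    rw [hid]
    exact (abs_add_le _ _).trans (add_le_add_left (abs_add_le _ _) _)
  have h1 : |(p - q) ^ 3| ≤ t ^ 3 := by
    rw [abs_pow]
    exact pow_le_pow_left₀ (abs_nonneg _) h 3
  have h2 : |3 * q * (p - q) ^ 2| ≤ 3 * s * t ^ 2 := by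
    rw [abs_mul, abs_pow]
    have ha : |3 * q| = 3 * q := abs_of_nonneg (by linarith)
    rw [ha]
    have hb : |p - q| ^ 2 ≤ t ^ 2 := pow_le_pow_left₀ (abs_nonneg _) h 2
    have hc : (0:ℝ) ≤ |p - q| ^ 2 := by positivity
    nlinarith
  have h3 : |3 * q ^ 2 * (p - q)| ≤ 3 * s ^ 2 * t := by
    rw [abs_mul]
    have ha : |3 * q ^ 2| = 3 * q ^ 2 := abs_of_nonneg (by positivity)
    rw [ha]
    have hq2 : 3 * q ^ 2 ≤ 3 * s ^ 2 := by nlinarith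
    exact mul_le_mul hq2 h (abs_nonneg _) (by positivity)
  linarith

/-- rate algebra for the p̂ part, in terms of `b = √s` and `u = 1/√n` -/
lemma rate_p_algebra {M1 b u : ℝ} (hb : 0 ≤ b) (hu0 : 0 < u) (hu1 : u ≤ 1) (hM : 0 ≤ M1) :
    3 * (b ^ 2) ^ 2 * (M1 * (b ^ 2 * u + b * u ^ 2))
      + 3 * b ^ 2 * (M1 * (b ^ 2 * u + b * u ^ 2)) ^ 2
      + (M1 * (b ^ 2 * u + b * u ^ 2)) ^ 3
    ≤ (3 * M1 + 6 * M1 ^ 2 + 4 * M1 ^ 3)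
        * (b ^ 6 * u + b ^ 5 * u ^ 2 + b ^ 4 * u ^ 4 + b ^ 3 * u ^ 6) := by
  have hup : ∀ a c : ℕ, a ≤ c → u ^ c ≤ u ^ a := fun a c h =>
    pow_le_pow_of_le_one hu0.le hu1 h
  have hMn : ∀ k : ℕ, 0 ≤ M1 ^ k := fun k => pow_nonneg hM k
  have hbn : ∀ k : ℕ, 0 ≤ b ^ k := fun k => pow_nonneg hb k
  have h12 : u ^ 2 ≤ u := by simpa using hup 1 2 (by norm_num)
  have h13 : u ^ 3 ≤ u := by simpa using hup 1 3 (by norm_num)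
  have h23 : u ^ 3 ≤ u ^ 2 := hup 2 3 (by norm_num)
  have h24 : u ^ 4 ≤ u ^ 2 := hup 2 4 (by norm_num)
  have h45 : u ^ 5 ≤ u ^ 4 := hup 4 5 (by norm_num)
  have k1 : 0 ≤ M1 ^ 2 * b ^ 6 * (u - u ^ 2) :=
    mul_nonneg (mul_nonneg (hMn 2) (hbn 6)) (sub_nonneg.mpr h12)
  have k2 : 0 ≤ M1 ^ 3 * b ^ 6 * (u - u ^ 3) :=
    mul_nonneg (mul_nonneg (hMn 3) (hbn 6)) (sub_nonneg.mpr h13)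
  have k3 : 0 ≤ M1 ^ 2 * b ^ 5 * (u ^ 2 - u ^ 3) :=
    mul_nonneg (mul_nonneg (hMn 2) (hbn 5)) (sub_nonneg.mpr h23)
  have k4 : 0 ≤ M1 ^ 3 * b ^ 5 * (u ^ 2 - u ^ 4) :=
    mul_nonneg (mul_nonneg (hMn 3) (hbn 5)) (sub_nonneg.mpr h24)
  have k5 : 0 ≤ M1 ^ 3 * b ^ 4 * (u ^ 4 - u ^ 5) :=
    mul_nonneg (mul_nonneg (hMn 3) (hbn 4)) (sub_nonneg.mpr h45)
  have k6 : 0 ≤ M1 * (b ^ 4 * u ^ 4 + b ^ 3 * u ^ 6) := by positivity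
  have k7 : 0 ≤ M1 ^ 2 * (b ^ 3 * u ^ 6) := by positivity
  have k8 : 0 ≤ M1 ^ 2 * (b ^ 4 * u ^ 4) := by positivity
  have k9 : 0 ≤ M1 ^ 3 * (b ^ 3 * u ^ 6) := by positivity
  have k10 : 0 ≤ M1 ^ 2 * (b ^ 6 * u) := by positivity
  have k11 : 0 ≤ M1 ^ 3 * (b ^ 6 * u) := by positivity
  have k12 : 0 ≤ M1 ^ 3 * (b ^ 5 * u ^ 2) := by positivity
  have k13 : 0 ≤ M1 ^ 3 * (b ^ 4 * u ^ 4) := by positivity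
  nlinarith [k1, k2, k3, k4, k5, k6, k7, k8, k9, k10, k11, k12, k13]

end Cheb

section Helpers

lemma pHat_zero {n : ℕ} (h : n.choose 2 = 0) (A : Adj n) : pHat A = 0 := by
  rw [pHat, h]
  simp

lemma pTilde_zero {n r : ℕ} {g : Fin r → ℝ → ℝ} (h : n.choose 2 = 0) :
    pTilde n r g = 0 := by
  rw [pTilde, h]
  simp

lemma F3hat_zero {n : ℕ} (h : n.choose 3 = 0) (A : Adj n) : F3hat A = 0 := by
  rw [F3hat, h]
  simp

lemma qTilde_zero {n r : ℕ} {g : Fin r → ℝ → ℝ} (h : n.choose 3 = 0) :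
    qTilde n r g = 0 := by
  rw [qTilde, h]
  simp

lemma pTilde_bounds {n r : ℕ} {g : Fin r → ℝ → ℝ} {B : Fin r → ℝ}
    (hg : ∀ l, Measurable (g l))
    (hB : ∀ l, ∀ x ∈ Set.Icc (0:ℝ) 1, |g l x| ≤ B l)
    (hP01 : ∀ x y : Fin r → ℝ, (∀ l, x l ∈ Set.Icc (0 : ℝ) 1) →
      (∀ l, y l ∈ Set.Icc (0 : ℝ) 1) →
      0 ≤ ∑ l : Fin r, g l (x l) * g l (y l) ∧
        ∑ l : Fin r, g l (x l) * g l (y l) ≤ 1) :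
    0 ≤ pTilde n r g ∧ pTilde n r g ≤ ∑ l, B l ^ 2 := by
  have hs0 : (0:ℝ) ≤ ∑ l, B l ^ 2 := Finset.sum_nonneg fun l _ => sq_nonneg _
  rw [pTilde_sum g]
  constructor
  · exact mul_nonneg (by positivity)
      (Finset.sum_nonneg fun e _ => mom_nonneg hP01 {e})
  · rcases Nat.eq_zero_or_pos (n.choose 2) with h0 | hpos
    · rw [h0]
      simpa using hs0
    · have hsum : ∑ e ∈ pairsF n, mom n g {e}
          ≤ ((n.choose 2 : ℕ) : ℝ) * (∑ l, B l ^ 2) := by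
        calc ∑ e ∈ pairsF n, mom n g {e}
            ≤ (pairsF n).card • (∑ l, B l ^ 2) :=
              Finset.sum_le_card_nsmul _ _ _ fun e _ => by
                simpa using mom_le hg hB hP01 {e}
          _ = ((pairsF n).card : ℝ) * (∑ l, B l ^ 2) := nsmul_eq_mul _ _
          _ ≤ _ := mul_le_mul_of_nonneg_right
              (by exact_mod_cast card_pairsF_le) hs0
      have hchpos : (0:ℝ) < ((n.choose 2 : ℕ) : ℝ) := by exact_mod_cast hpos
      calc ((n.choose 2 : ℕ) : ℝ)⁻¹ * ∑ e ∈ pairsF n, mom n g {e}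
          ≤ ((n.choose 2 : ℕ) : ℝ)⁻¹ * (((n.choose 2 : ℕ) : ℝ) * (∑ l, B l ^ 2)) :=
            mul_le_mul_of_nonneg_left hsum (by positivity)
        _ = ∑ l, B l ^ 2 := by
            rw [← mul_assoc, inv_mul_cancel₀ hchpos.ne', one_mul]

end Helpers

end GLaux
end Aux

set_option maxHeartbeats 1000000

/-- **Lemma 2 (Gao–Lafferty).** In the low-rank latent variable model, with
`‖g‖∞² = Σ_l ‖g_l‖∞² ≤ s`, uniformly over `n` and admissible `g`:
`|p̂³ − p̃³| = O_P(‖g‖∞⁶/√n + ‖g‖∞⁵/n + ‖g‖∞⁴/n² + ‖g‖∞³/n³)` and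
`|q̂ − q̃| = O_P(‖g‖∞⁶/√n + ‖g‖∞⁵/n + ‖g‖∞³/n^{3/2})`.  Here `s = Σ_l B_l²`
for pointwise bounds `B_l` of `g_l` on `[0,1]`, so that `‖g‖∞⁶ = s³`,
`‖g‖∞⁵ = s²√s`, `‖g‖∞⁴ = s²` and `‖g‖∞³ = s√s`. -/
theorem OP_pq_bounds_latent :
    ∀ ε : ℝ, 0 < ε → ∃ M : ℝ,
      ∀ (n r : ℕ) (g : Fin r → ℝ → ℝ) (B : Fin r → ℝ),
        (∀ l, Measurable (g l)) →
        (∀ l, ∀ x ∈ Set.Icc (0 : ℝ) 1, |g l x| ≤ B l) →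
        (∀ x y : Fin r → ℝ, (∀ l, x l ∈ Set.Icc (0 : ℝ) 1) →
          (∀ l, y l ∈ Set.Icc (0 : ℝ) 1) →
          0 ≤ ∑ l : Fin r, g l (x l) * g l (y l) ∧
            ∑ l : Fin r, g l (x l) * g l (y l) ≤ 1) →
        ((latentMeasure n r g)
            {A | M * ((∑ l, B l ^ 2) ^ 3 / Real.sqrt n
                + (∑ l, B l ^ 2) ^ 2 * Real.sqrt (∑ l, B l ^ 2) / n
                + (∑ l, B l ^ 2) ^ 2 / (n : ℝ) ^ 2
                + (∑ l, B l ^ 2) * Real.sqrt (∑ l, B l ^ 2) / (n : ℝ) ^ 3) <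
              |pHat A ^ 3 - pTilde n r g ^ 3|}).toReal ≤ ε ∧
        ((latentMeasure n r g)
            {A | M * ((∑ l, B l ^ 2) ^ 3 / Real.sqrt n
                + (∑ l, B l ^ 2) ^ 2 * Real.sqrt (∑ l, B l ^ 2) / n
                + (∑ l, B l ^ 2) * Real.sqrt (∑ l, B l ^ 2)
                    / ((n : ℝ) * Real.sqrt n)) <
              |F3hat A - qTilde n r g|}).toReal ≤ ε := by
  intro ε hε
  classical
  set M1 : ℝ := Real.sqrt (160 / ε) with hM1def
  set M2 : ℝ := Real.sqrt (25920 / ε) with hM2def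
  set Mp : ℝ := 3 * M1 + 6 * M1 ^ 2 + 4 * M1 ^ 3 with hMpdef
  have hM1 : 0 ≤ M1 := Real.sqrt_nonneg _
  have hM2 : 0 ≤ M2 := Real.sqrt_nonneg _
  have hMp : 0 ≤ Mp := by positivity
  have hM1sq : ε * M1 ^ 2 = 160 := by
    rw [hM1def, Real.sq_sqrt (by positivity)]
    field_simp
  have hM2sq : ε * M2 ^ 2 = 25920 := by
    rw [hM2def, Real.sq_sqrt (by positivity)]
    field_simp
  refine ⟨max (max Mp M2) 1, ?_⟩
  intro n r g B hg hB hP01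
  set M : ℝ := max (max Mp M2) 1 with hMdef
  have hM0 : (0:ℝ) ≤ M := le_trans zero_le_one (le_max_right _ _)
  have hMMp : Mp ≤ M := le_trans (le_max_left _ _) (le_max_left _ _)
  have hMM2 : M2 ≤ M := le_trans (le_max_right _ _) (le_max_left _ _)
  haveI := GLaux.latent_isProb (n := n) g hg hP01
  set s : ℝ := ∑ l, B l ^ 2 with hsdef
  have hs0 : 0 ≤ s := Finset.sum_nonneg fun l _ => sq_nonneg _
  have hsq : Real.sqrt s ^ 2 = s := Real.sq_sqrt hs0
  constructor
  · -- p̂ part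
    set Rp : ℝ := s ^ 3 / Real.sqrt n + s ^ 2 * Real.sqrt s / n + s ^ 2 / (n:ℝ) ^ 2
        + s * Real.sqrt s / (n:ℝ) ^ 3 with hRpdef
    have hRp0 : 0 ≤ Rp := by positivity
    rcases lt_or_ge n 2 with hn | hn
    · have hch : n.choose 2 = 0 := Nat.choose_eq_zero_of_lt hn
      have hempty : {A : Adj n | M * Rp < |pHat A ^ 3 - pTilde n r g ^ 3|} = ∅ := by
        ext A
        simp only [Set.mem_setOf_eq, Set.mem_empty_iff_false, iff_false, not_lt]
        rw [GLaux.pHat_zero hch A, GLaux.pTilde_zero hch]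
        simpa using mul_nonneg hM0 hRp0
      rw [hempty]
      simpa using hε.le
    · have hN2 : (2:ℝ) ≤ (n:ℝ) := by exact_mod_cast hn
      have hN0 : (0:ℝ) < (n:ℝ) := by linarith
      have hsqN1 : 1 ≤ Real.sqrt (n:ℝ) := by
        rw [show (1:ℝ) = Real.sqrt 1 from (Real.sqrt_one).symm]
        exact Real.sqrt_le_sqrt (by linarith)
      have hsqN0 : 0 < Real.sqrt (n:ℝ) := lt_of_lt_of_le one_pos hsqN1
      have hNsq : Real.sqrt (n:ℝ) ^ 2 = (n:ℝ) := Real.sq_sqrt hN0.le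
      set t1 : ℝ := M1 * (s / Real.sqrt n + Real.sqrt s / n) with ht1def
      have ht10 : 0 ≤ t1 := by positivity
      have halg : 3 * s ^ 2 * t1 + 3 * s * t1 ^ 2 + t1 ^ 3 ≤ Mp * Rp := by
        have hu2 : ((Real.sqrt (n:ℝ))⁻¹) ^ 2 = ((n:ℝ))⁻¹ := by
          rw [inv_pow, hNsq]
        have key := GLaux.rate_p_algebra (M1 := M1) (b := Real.sqrt s)
          (u := (Real.sqrt (n:ℝ))⁻¹) (Real.sqrt_nonneg s) (by positivity)
          (inv_le_one_of_one_le₀ hsqN1) hM1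
        have eL : M1 * (Real.sqrt s ^ 2 * (Real.sqrt (n:ℝ))⁻¹
            + Real.sqrt s * ((Real.sqrt (n:ℝ))⁻¹) ^ 2) = t1 := by
          rw [hu2, hsq, ht1def, div_eq_mul_inv, div_eq_mul_inv]
        have h4 : ((Real.sqrt (n:ℝ))⁻¹) ^ 4 = ((n:ℝ)^2)⁻¹ := by
          rw [show ((Real.sqrt (n:ℝ))⁻¹)^4 = (((Real.sqrt (n:ℝ))⁻¹)^2)^2 by ring, hu2,
            inv_pow]
        have h6 : ((Real.sqrt (n:ℝ))⁻¹) ^ 6 = ((n:ℝ)^3)⁻¹ := by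
          rw [show ((Real.sqrt (n:ℝ))⁻¹)^6 = (((Real.sqrt (n:ℝ))⁻¹)^2)^3 by ring, hu2,
            inv_pow]
        have hb6 : Real.sqrt s ^ 6 = s ^ 3 := by
          rw [show Real.sqrt s ^ 6 = (Real.sqrt s ^ 2) ^ 3 by ring, hsq]
        have hb5 : Real.sqrt s ^ 5 = s ^ 2 * Real.sqrt s := by
          rw [show Real.sqrt s ^ 5 = (Real.sqrt s ^ 2) ^ 2 * Real.sqrt s by ring, hsq]
        have hb4 : Real.sqrt s ^ 4 = s ^ 2 := by
          rw [show Real.sqrt s ^ 4 = (Real.sqrt s ^ 2) ^ 2 by ring, hsq]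
        have hb3 : Real.sqrt s ^ 3 = s * Real.sqrt s := by
          rw [show Real.sqrt s ^ 3 = Real.sqrt s ^ 2 * Real.sqrt s by ring, hsq]
        have eR : Real.sqrt s ^ 6 * (Real.sqrt (n:ℝ))⁻¹
            + Real.sqrt s ^ 5 * ((Real.sqrt (n:ℝ))⁻¹) ^ 2
            + Real.sqrt s ^ 4 * ((Real.sqrt (n:ℝ))⁻¹) ^ 4
            + Real.sqrt s ^ 3 * ((Real.sqrt (n:ℝ))⁻¹) ^ 6 = Rp := by
          rw [hu2, h4, h6, hb6, hb5, hb4, hb3, hRpdef, div_eq_mul_inv, div_eq_mul_inv,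
            div_eq_mul_inv, div_eq_mul_inv]
        rw [eL, eR, ← hMpdef] at key
        rw [show (3:ℝ) * s ^ 2 * t1 = 3 * (Real.sqrt s ^ 2) ^ 2 * t1 by rw [hsq],
          show (3:ℝ) * s * t1 ^ 2 = 3 * Real.sqrt s ^ 2 * t1 ^ 2 by rw [hsq]]
        exact key
      have hsub : {A : Adj n | M * Rp < |pHat A ^ 3 - pTilde n r g ^ 3|}
          ⊆ {A : Adj n | t1 < |pHat A - pTilde n r g|} := by
        intro A hA
        simp only [Set.mem_setOf_eq] at hA ⊢
        by_contra hcon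
        push_neg at hcon
        obtain ⟨hq0, hqs⟩ := GLaux.pTilde_bounds (n := n) hg hB hP01
        have hdev := GLaux.cube_dev hq0 hqs hcon
        have hfin : |pHat A ^ 3 - pTilde n r g ^ 3| ≤ M * Rp :=
          le_trans hdev (le_trans halg (mul_le_mul_of_nonneg_right hMMp hRp0))
        exact absurd hA (not_lt.mpr hfin)
      refine le_trans (ENNReal.toReal_mono (measure_ne_top _ _) (measure_mono hsub)) ?_
      refine GLaux.cheb (latentMeasure n r g) (fun A => pHat A - pTilde n r g) t1 ε
        hε.le ht10 ?_ _ (fun A hA => hA)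
      refine le_trans (GLaux.var_p_le hg hB hP01 hn) ?_
      have hx : (s / Real.sqrt (n:ℝ)) ^ 2 = s ^ 2 / (n:ℝ) := by rw [div_pow, hNsq]
      have hy : (Real.sqrt s / (n:ℝ)) ^ 2 = s / (n:ℝ) ^ 2 := by rw [div_pow, hsq]
      have hxy : s ^ 2 / (n:ℝ) + s / (n:ℝ) ^ 2
          ≤ (s / Real.sqrt n + Real.sqrt s / n) ^ 2 := by
        rw [← hx, ← hy]
        nlinarith [mul_nonneg (div_nonneg hs0 hsqN0.le)
          (div_nonneg (Real.sqrt_nonneg s) hN0.le)]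
      calc 160 * (s ^ 2 / (n:ℝ) + s / (n:ℝ) ^ 2)
          ≤ 160 * (s / Real.sqrt n + Real.sqrt s / n) ^ 2 :=
            mul_le_mul_of_nonneg_left hxy (by norm_num)
        _ = ε * M1 ^ 2 * (s / Real.sqrt n + Real.sqrt s / n) ^ 2 := by rw [hM1sq]
        _ = ε * t1 ^ 2 := by rw [ht1def]; ring
  · -- q̂ part
    set Rq : ℝ := s ^ 3 / Real.sqrt n + s ^ 2 * Real.sqrt s / n
        + s * Real.sqrt s / ((n:ℝ) * Real.sqrt n) with hRqdef
    have hRq0 : 0 ≤ Rq := by positivity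
    rcases lt_or_ge n 3 with hn | hn
    · have hch : n.choose 3 = 0 := Nat.choose_eq_zero_of_lt hn
      have hempty : {A : Adj n | M * Rq < |F3hat A - qTilde n r g|} = ∅ := by
        ext A
        simp only [Set.mem_setOf_eq, Set.mem_empty_iff_false, iff_false, not_lt]
        rw [GLaux.F3hat_zero hch A, GLaux.qTilde_zero hch]
        simpa using mul_nonneg hM0 hRq0
      rw [hempty]
      simpa using hε.le
    · have hN3 : (3:ℝ) ≤ (n:ℝ) := by exact_mod_cast hn
      have hN0 : (0:ℝ) < (n:ℝ) := by linarith
      have hsqN1 : 1 ≤ Real.sqrt (n:ℝ) := by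
        rw [show (1:ℝ) = Real.sqrt 1 from (Real.sqrt_one).symm]
        exact Real.sqrt_le_sqrt (by linarith)
      have hsqN0 : 0 < Real.sqrt (n:ℝ) := lt_of_lt_of_le one_pos hsqN1
      have hNsq : Real.sqrt (n:ℝ) ^ 2 = (n:ℝ) := Real.sq_sqrt hN0.le
      set t2 : ℝ := M2 * Rq with ht2def
      have ht20 : 0 ≤ t2 := mul_nonneg hM2 hRq0
      have hsub : {A : Adj n | M * Rq < |F3hat A - qTilde n r g|}
          ⊆ {A : Adj n | t2 < |F3hat A - qTilde n r g|} := by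
        intro A hA
        simp only [Set.mem_setOf_eq] at hA ⊢
        exact lt_of_le_of_lt (mul_le_mul_of_nonneg_right hMM2 hRq0) hA
      refine le_trans (ENNReal.toReal_mono (measure_ne_top _ _) (measure_mono hsub)) ?_
      refine GLaux.cheb (latentMeasure n r g) (fun A => F3hat A - qTilde n r g) t2 ε
        hε.le ht20 ?_ _ (fun A hA => hA)
      refine le_trans (GLaux.var_q_le hg hB hP01 hn) ?_
      have hx : (s ^ 3 / Real.sqrt (n:ℝ)) ^ 2 = s ^ 6 / (n:ℝ) := by
        rw [div_pow, hNsq]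
        ring_nf
      have hy : (s ^ 2 * Real.sqrt s / (n:ℝ)) ^ 2 = s ^ 5 / (n:ℝ) ^ 2 := by
        rw [div_pow, mul_pow, hsq]
        ring_nf
      have hz : (s * Real.sqrt s / ((n:ℝ) * Real.sqrt n)) ^ 2 = s ^ 3 / (n:ℝ) ^ 3 := by
        rw [div_pow, mul_pow, mul_pow, hsq, hNsq]
        ring_nf
      have hxyz : s ^ 6 / (n:ℝ) + s ^ 5 / (n:ℝ) ^ 2 + s ^ 3 / (n:ℝ) ^ 3 ≤ Rq ^ 2 := by
        rw [← hx, ← hy, ← hz, hRqdef]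
        have ha : (0:ℝ) ≤ s ^ 3 / Real.sqrt (n:ℝ) := by positivity
        have hb : (0:ℝ) ≤ s ^ 2 * Real.sqrt s / (n:ℝ) := by positivity
        have hc : (0:ℝ) ≤ s * Real.sqrt s / ((n:ℝ) * Real.sqrt (n:ℝ)) := by positivity
        nlinarith [mul_nonneg ha hb, mul_nonneg ha hc, mul_nonneg hb hc]
      calc 25920 * (s ^ 6 / (n:ℝ) + s ^ 5 / (n:ℝ) ^ 2 + s ^ 3 / (n:ℝ) ^ 3)
          ≤ 25920 * Rq ^ 2 := mul_le_mul_of_nonneg_left hxyz (by norm_num)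
        _ = ε * M2 ^ 2 * Rq ^ 2 := by rw [hM2sq]
        _ = ε * t2 ^ 2 := by rw [ht2def]; ring

end
end
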